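/- arXiv:0907.3103 — 15 statements merged into one kernel-verified Lean document; each statement's English description precedes it below -/
import Mathlib

section
/- Let H be a complex Hilbert space, let A be a norm-closed subalgebra of B(H), and let D be a norm-closed subalgebra of A such that d a d' ∈ D for all d, d' ∈ D and a ∈ A, and such that D has a contractive approximate identity. If A is semiprime, then D is semiprime; that is, if every norm-closed two-sided ideal J of A satisfying j j' = 0 for all j, j' ∈ J equals {0}, then every norm-closed two-sided ideal K of D satisfying k k' = 0 for all k, k' ∈ K equals {0}. -/
open Filter

variable {H : Type*} [NormedAddCommGroup H] [InnerProductSpace ℂ H] [CompleteSpace H]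

/-- `A` is a norm-closed (not necessarily unital) subalgebra of `B(H)`, viewed as a set. -/
def IsClosedSubalgebraSet (A : Set (H →L[ℂ] H)) : Prop :=
  IsClosed A ∧ (0 : H →L[ℂ] H) ∈ A ∧
    (∀ x ∈ A, ∀ y ∈ A, x + y ∈ A) ∧
    (∀ (c : ℂ), ∀ x ∈ A, c • x ∈ A) ∧
    (∀ x ∈ A, ∀ y ∈ A, x * y ∈ A)

/-- `J` is a norm-closed two-sided ideal of the algebra (set) `A`. -/
def IsClosedIdealOf (A J : Set (H →L[ℂ] H)) : Prop :=
  J ⊆ A ∧ IsClosed J ∧ (0 : H →L[ℂ] H) ∈ J ∧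
    (∀ x ∈ J, ∀ y ∈ J, x + y ∈ J) ∧
    (∀ (c : ℂ), ∀ x ∈ J, c • x ∈ J) ∧
    (∀ j ∈ J, ∀ a ∈ A, j * a ∈ J ∧ a * j ∈ J)

/-- `D` has a (two-sided) contractive approximate identity, formalized via a filter. -/
def HasCai (D : Set (H →L[ℂ] H)) : Prop :=
  ∃ (ι : Type) (l : Filter ι) (e : ι → H →L[ℂ] H), l.NeBot ∧
    (∀ i, e i ∈ D) ∧ (∀ i, ‖e i‖ ≤ 1) ∧
    ∀ d ∈ D, Tendsto (fun i => e i * d) l (nhds d) ∧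
      Tendsto (fun i => d * e i) l (nhds d)

/-- Semiprimeness passes to hereditary subalgebras of operator algebras. -/
theorem semiprime_passes_to_HSA
    (A D : Set (H →L[ℂ] H))
    (hA : IsClosedSubalgebraSet A) (hD : IsClosedSubalgebraSet D)
    (hDA : D ⊆ A)
    (hHer : ∀ d ∈ D, ∀ a ∈ A, ∀ d' ∈ D, d * a * d' ∈ D)
    (hcai : HasCai D)
    (hsemiprime : ∀ J : Set (H →L[ℂ] H), IsClosedIdealOf A J →
      (∀ j ∈ J, ∀ j' ∈ J, j * j' = 0) → J = {0}) :
    ∀ K : Set (H →L[ℂ] H), IsClosedIdealOf D K →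
      (∀ k ∈ K, ∀ k' ∈ K, k * k' = 0) → K = {0} := by
  intro K hK hK2
  obtain ⟨hKD, hKcl, hK0, hKadd, hKsmul, hKideal⟩ := hK
  obtain ⟨hAcl, hA0, hAadd, hAsmul, hAmul⟩ := hA
  obtain ⟨ι, l, e, hne, heD, _, hlim⟩ := hcai
  -- Key lemma: k * w * k' = 0 for k, k' ∈ K and w ∈ insert 1 A
  have key : ∀ k ∈ K, ∀ k' ∈ K, ∀ w ∈ insert (1 : H →L[ℂ] H) A, k * w * k' = 0 := by
    intro k hk k' hk' w hw
    rcases hw with rfl | hw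
    · simpa using hK2 k hk k' hk'
    · have h1 : ∀ i j, k * (e i * w * e j) * k' = 0 := by
        intro i j
        have hd : e i * w * e j ∈ D := hHer _ (heD i) _ hw _ (heD j)
        exact hK2 _ (hKideal k hk _ hd).1 k' hk'
      have h2 : ∀ i, k * (e i * w) * k' = 0 := by
        intro i
        have ht : Tendsto (fun j => (k * (e i * w)) * (e j * k')) l
            (nhds ((k * (e i * w)) * k')) :=
          ((hlim k' (hKD hk')).1).const_mul _
        have heq : (fun j => (k * (e i * w)) * (e j * k')) = fun _ => 0 := by
          funext j
          have := h1 i j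
          calc (k * (e i * w)) * (e j * k') = k * (e i * w * e j) * k' := by
                simp only [mul_assoc]
            _ = 0 := h1 i j
        rw [heq] at ht
        exact (tendsto_nhds_unique tendsto_const_nhds ht).symm
      have ht : Tendsto (fun i => (k * e i) * (w * k')) l (nhds (k * (w * k'))) :=
        ((hlim k (hKD hk)).2).mul_const _
      have heq : (fun i => (k * e i) * (w * k')) = fun _ => 0 := by
        funext i
        calc (k * e i) * (w * k') = k * (e i * w) * k' := by simp only [mul_assoc]
          _ = 0 := h2 i
      rw [heq] at ht
      have := (tendsto_nhds_unique tendsto_const_nhds ht)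
      rw [mul_assoc]
      exact this.symm
  set A' : Set (H →L[ℂ] H) := insert (1 : H →L[ℂ] H) A with hA'def
  have hA'mul : ∀ v ∈ A', ∀ u ∈ A', v * u ∈ A' := by
    rintro v (rfl | hv) u (rfl | hu)
    · rw [one_mul]; exact Set.mem_insert _ _
    · simpa [hA'def] using Or.inr hu
    · simpa [hA'def] using Or.inr hv
    · exact Or.inr (hAmul v hv u hu)
  set G : Set (H →L[ℂ] H) := {x | ∃ u ∈ A', ∃ k ∈ K, ∃ v ∈ A', x = u * k * v} with hGdef
  have hGA : G ⊆ A := by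
    rintro x ⟨u, hu, k, hk, v, hv, rfl⟩
    have hkA : k ∈ A := hDA (hKD hk)
    rcases hu with rfl | hu <;> rcases hv with rfl | hv
    · simpa using hkA
    · simpa using hAmul k hkA v hv
    · simpa using hAmul u hu k hkA
    · exact hAmul _ (hAmul u hu k hkA) v hv
  set S := Submodule.span ℂ G with hSdef
  -- the span is contained in A
  have hSA : (S : Set (H →L[ℂ] H)) ⊆ A := by
    intro x hx
    induction hx using Submodule.span_induction with
    | mem x h => exact hGA h
    | zero => exact hA0
    | add x y _ _ hx hy => exact hAadd x hx y hy
    | smul c x _ hx => exact hAsmul c x hx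
  set J : Set (H →L[ℂ] H) := closure (S : Set (H →L[ℂ] H)) with hJdef
  have hJA : J ⊆ A := by
    rw [hJdef, ← hAcl.closure_eq]
    exact closure_mono hSA
  -- span is stable under multiplication by A on both sides
  have hSmul : ∀ x ∈ S, ∀ a ∈ A, x * a ∈ S ∧ a * x ∈ S := by
    intro x hx a ha
    induction hx using Submodule.span_induction with
    | mem x h =>
      obtain ⟨u, hu, k, hk, v, hv, rfl⟩ := h
      constructor
      · exact Submodule.subset_span ⟨u, hu, k, hk, v * a, hA'mul v hv a (Or.inr ha), by
          simp only [mul_assoc]⟩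
      · exact Submodule.subset_span ⟨a * u, hA'mul a (Or.inr ha) u hu, k, hk, v, hv, by
          simp only [mul_assoc]⟩
    | zero => simp only [zero_mul, mul_zero]; exact ⟨S.zero_mem, S.zero_mem⟩
    | add x y _ _ hx hy =>
      rw [add_mul, mul_add]
      exact ⟨S.add_mem hx.1 hy.1, S.add_mem hx.2 hy.2⟩
    | smul c x _ hx =>
      rw [smul_mul_assoc, mul_smul_comm]
      exact ⟨S.smul_mem c hx.1, S.smul_mem c hx.2⟩
  -- span products vanish
  have hSzero : ∀ x ∈ S, ∀ y ∈ S, x * y = 0 := by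
    intro x hx y hy
    induction hx, hy using Submodule.span_induction₂ with
    | mem_mem x y hx hy =>
      obtain ⟨u, hu, k, hk, v, hv, rfl⟩ := hx
      obtain ⟨u', hu', k', hk', v', hv', rfl⟩ := hy
      have hmid : k * (v * u') * k' = 0 := key k hk k' hk' _ (hA'mul v hv u' hu')
      calc (u * k * v) * (u' * k' * v') = u * ((k * (v * u') * k') * v') := by
            simp only [mul_assoc]
        _ = 0 := by rw [hmid]; simp
    | zero_left y hy => simp
    | zero_right x hx => simp
    | add_left x y z _ _ _ h1 h2 => rw [add_mul, h1, h2, add_zero]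
    | add_right x y z _ _ _ h1 h2 => rw [mul_add, h1, h2, add_zero]
    | smul_left c x y _ _ h => rw [smul_mul_assoc, h, smul_zero]
    | smul_right c x y _ _ h => rw [mul_smul_comm, h, smul_zero]
  -- products in J vanish
  have hJzero : ∀ j ∈ J, ∀ j' ∈ J, j * j' = 0 := by
    have step1 : ∀ y ∈ S, ∀ j ∈ J, j * y = 0 := by
      intro y hy j hj
      have : Set.EqOn (fun x => x * y) (fun _ => (0 : H →L[ℂ] H)) (S : Set (H →L[ℂ] H)) :=
        fun x hx => hSzero x hx y hy
      exact this.closure (continuous_mul_right y) continuous_const hj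
    intro j hj j' hj'
    have : Set.EqOn (fun y => j * y) (fun _ => (0 : H →L[ℂ] H)) (S : Set (H →L[ℂ] H)) :=
      fun y hy => step1 y hy j hj
    exact this.closure (continuous_mul_left j) continuous_const hj'
  -- J is a closed ideal of A
  have hJideal : IsClosedIdealOf A J := by
    refine ⟨hJA, isClosed_closure, subset_closure S.zero_mem, ?_, ?_, ?_⟩
    · intro x hx y hy
      have : Continuous (fun p : (H →L[ℂ] H) × (H →L[ℂ] H) => p.1 + p.2) := continuous_add
      exact map_mem_closure₂ continuous_add hx hy (fun a ha b hb => S.add_mem ha hb)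
    · intro c x hx
      exact map_mem_closure (continuous_const_smul c) hx (fun a ha => S.smul_mem c ha)
    · intro j hj a ha
      constructor
      · exact map_mem_closure (f := fun x => x * a) (continuous_mul_right a) hj
          (fun x hx => (hSmul x hx a ha).1)
      · exact map_mem_closure (f := fun x => a * x) (continuous_mul_left a) hj
          (fun x hx => (hSmul x hx a ha).2)
  have hJ0 : J = {0} := hsemiprime J hJideal hJzero
  -- K ⊆ J
  have hKJ : K ⊆ J := by
    intro k hk
    refine subset_closure (Submodule.subset_span ⟨1, Or.inl rfl, k, hk, 1, Or.inl rfl, by simp⟩)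
  apply Set.Subset.antisymm
  · rw [← hJ0]; exact hKJ
  · intro x hx
    rw [Set.mem_singleton_iff] at hx
    rw [hx]
    exact hK0
end

section
/- Let H be a complex Hilbert space, let A be a norm-closed subalgebra of B(H), and let D be a nonzero norm-closed subalgebra of A such that d a d' ∈ D for all d, d' ∈ D and a ∈ A, and such that D has a contractive approximate identity. If A is topologically simple (its only norm-closed two-sided ideals are {0} and A), then D is topologically simple (its only norm-closed two-sided ideals are {0} and D). -/
open Filter

variable {H : Type*} [NormedAddCommGroup H] [InnerProductSpace ℂ H] [CompleteSpace H]

/-- Topological simplicity passes to nonzero hereditary subalgebras of operator algebras. -/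
theorem topologically_simple_passes_to_HSA
    (A D : Set (H →L[ℂ] H))
    (hA : IsClosedSubalgebraSet A) (hD : IsClosedSubalgebraSet D)
    (hDA : D ⊆ A)
    (hDne : ∃ d ∈ D, d ≠ 0)
    (hHer : ∀ d ∈ D, ∀ a ∈ A, ∀ d' ∈ D, d * a * d' ∈ D)
    (hcai : HasCai D)
    (hsimple : ∀ J : Set (H →L[ℂ] H), IsClosedIdealOf A J → J = {0} ∨ J = A) :
    ∀ K : Set (H →L[ℂ] H), IsClosedIdealOf D K → K = {0} ∨ K = D := by
  intro K hK
  by_cases hK0 : K = {0}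
  · exact Or.inl hK0
  right
  obtain ⟨ι, l, e, hne, heD, henorm, hcv⟩ := hcai
  obtain ⟨hKD, hKcl, hK0m, hKadd, hKsmul, hKid⟩ := hK
  obtain ⟨hAcl, hA0, hAadd, hAsmul, hAmul⟩ := hA
  obtain ⟨hDcl, hD0, hDadd, hDsmul, hDmul⟩ := hD
  have hKA : K ⊆ A := hKD.trans hDA
  -- key absorption lemmas
  have L1r : ∀ x ∈ K, ∀ a ∈ A, ∀ d ∈ D, x * (a * d) ∈ K := by
    intro x hx a ha d hd
    have hxt : Tendsto (fun i => x * e i) l (nhds x) := (hcv x (hKD hx)).2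
    have ht : Tendsto (fun i => (x * e i) * (a * d)) l (nhds (x * (a * d))) :=
      (continuous_mul_right (a * d)).continuousAt.tendsto.comp hxt
    refine hKcl.mem_of_tendsto ht (Eventually.of_forall fun i => ?_)
    have hmem : (e i * a) * d ∈ D := hHer (e i) (heD i) a ha d hd
    have : (x * e i) * (a * d) = x * ((e i * a) * d) := by simp only [mul_assoc]
    rw [this]
    exact (hKid x hx _ hmem).1
  have L1l : ∀ d ∈ D, ∀ a ∈ A, ∀ x ∈ K, d * (a * x) ∈ K := by
    intro d hd a ha x hx
    have hxt : Tendsto (fun i => e i * x) l (nhds x) := (hcv x (hKD hx)).1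
    have ht : Tendsto (fun i => (d * a) * (e i * x)) l (nhds ((d * a) * x)) :=
      (continuous_mul_left (d * a)).continuousAt.tendsto.comp hxt
    have heq : (d * a) * x = d * (a * x) := by simp only [mul_assoc]
    rw [heq] at ht
    refine hKcl.mem_of_tendsto ht (Eventually.of_forall fun i => ?_)
    have hmem : (d * a) * e i ∈ D := hHer d hd a ha (e i) (heD i)
    have : (d * a) * (e i * x) = ((d * a) * e i) * x := by simp only [mul_assoc]
    rw [this]
    exact (hKid x hx _ hmem).2
  -- the generating set of the ideal of A generated by K
  set S : Set (H →L[ℂ] H) :=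
    {z | z ∈ K ∨ (∃ k ∈ K, ∃ a ∈ A, z = k * a) ∨ (∃ a ∈ A, ∃ k ∈ K, z = a * k) ∨
      (∃ a ∈ A, ∃ k ∈ K, ∃ b ∈ A, z = a * k * b)} with hS
  set M : Submodule ℂ (H →L[ℂ] H) := Submodule.span ℂ S with hM
  set N : Submodule ℂ (H →L[ℂ] H) := M.topologicalClosure with hN
  set J : Set (H →L[ℂ] H) := (N : Set (H →L[ℂ] H)) with hJ
  have hJclosure : J = closure (M : Set (H →L[ℂ] H)) := M.topologicalClosure_coe
  have hSA : S ⊆ A := by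
    rintro z (hz | ⟨k, hk, a, ha, rfl⟩ | ⟨a, ha, k, hk, rfl⟩ | ⟨a, ha, k, hk, b, hb, rfl⟩)
    · exact hKA hz
    · exact hAmul _ (hKA hk) _ ha
    · exact hAmul _ ha _ (hKA hk)
    · exact hAmul _ (hAmul _ ha _ (hKA hk)) _ hb
  have hMA : (M : Set (H →L[ℂ] H)) ⊆ A := by
    intro x hx
    induction hx using Submodule.span_induction with
    | mem x h => exact hSA h
    | zero => exact hA0
    | add x y _ _ hx hy => exact hAadd _ hx _ hy
    | smul c x _ hx => exact hAsmul c _ hx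
  have hJA : J ⊆ A := by rw [hJclosure]; exact closure_minimal hMA hAcl
  -- S is stable under right and left multiplication by A
  have hSr : ∀ s ∈ S, ∀ a ∈ A, s * a ∈ S := by
    rintro z (hz | ⟨k, hk, b, hb, rfl⟩ | ⟨b, hb, k, hk, rfl⟩ | ⟨b, hb, k, hk, c, hc, rfl⟩) a ha
    · exact Or.inr (Or.inl ⟨z, hz, a, ha, rfl⟩)
    · exact Or.inr (Or.inl ⟨k, hk, b * a, hAmul _ hb _ ha, by simp only [mul_assoc]⟩)
    · exact Or.inr (Or.inr (Or.inr ⟨b, hb, k, hk, a, ha, rfl⟩))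
    · exact Or.inr (Or.inr (Or.inr ⟨b, hb, k, hk, c * a, hAmul _ hc _ ha, by
        simp only [mul_assoc]⟩))
  have hSl : ∀ s ∈ S, ∀ a ∈ A, a * s ∈ S := by
    rintro z (hz | ⟨k, hk, b, hb, rfl⟩ | ⟨b, hb, k, hk, rfl⟩ | ⟨b, hb, k, hk, c, hc, rfl⟩) a ha
    · exact Or.inr (Or.inr (Or.inl ⟨a, ha, z, hz, rfl⟩))
    · exact Or.inr (Or.inr (Or.inr ⟨a, ha, k, hk, b, hb, by simp only [mul_assoc]⟩))
    · exact Or.inr (Or.inr (Or.inl ⟨a * b, hAmul _ ha _ hb, k, hk, by simp only [mul_assoc]⟩))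
    · exact Or.inr (Or.inr (Or.inr ⟨a * b, hAmul _ ha _ hb, k, hk, c, hc, by
        simp only [mul_assoc]⟩))
  have hMr : ∀ x ∈ M, ∀ a ∈ A, x * a ∈ M := by
    intro x hx a ha
    induction hx using Submodule.span_induction with
    | mem x h => exact Submodule.subset_span (hSr x h a ha)
    | zero => simpa using M.zero_mem
    | add x y _ _ hx hy => rw [add_mul]; exact M.add_mem hx hy
    | smul c x _ hx => rw [smul_mul_assoc]; exact M.smul_mem c hx
  have hMl : ∀ x ∈ M, ∀ a ∈ A, a * x ∈ M := by
    intro x hx a ha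
    induction hx using Submodule.span_induction with
    | mem x h => exact Submodule.subset_span (hSl x h a ha)
    | zero => simpa using M.zero_mem
    | add x y _ _ hx hy => rw [mul_add]; exact M.add_mem hx hy
    | smul c x _ hx => rw [mul_smul_comm]; exact M.smul_mem c hx
  -- J is a closed ideal of A
  have hJideal : IsClosedIdealOf A J := by
    refine ⟨hJA, hJclosure ▸ isClosed_closure, N.zero_mem, fun x hx y hy => N.add_mem hx hy,
      fun c x hx => N.smul_mem c hx, ?_⟩
    intro j hj a ha
    rw [hJclosure] at hj
    constructor
    · rw [hJclosure]
      exact map_mem_closure (f := fun x => x * a) (continuous_mul_right a) hj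
        (fun x hx => hMr x hx a ha)
    · rw [hJclosure]
      exact map_mem_closure (f := fun x => a * x) (continuous_mul_left a) hj
        (fun x hx => hMl x hx a ha)
  -- J is nonzero, hence J = A
  have hJA' : J = A := by
    rcases hsimple J hJideal with h | h
    · exfalso
      apply hK0
      apply Set.eq_singleton_iff_unique_mem.2 ⟨hK0m, fun k hk => ?_⟩
      have : k ∈ J := by
        rw [hJclosure]; exact subset_closure (Submodule.subset_span (Or.inl hk))
      rw [h] at this
      exact this
    · exact h
  -- compression by the cai maps J into K
  have hcomp : ∀ i, ∀ x ∈ J, e i * x * e i ∈ K := by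
    intro i x hx
    have hcont : Continuous fun y : H →L[ℂ] H => e i * y * e i :=
      (continuous_mul_right (e i)).comp (continuous_mul_left (e i))
    have hmaps : ∀ y ∈ (M : Set (H →L[ℂ] H)), e i * y * e i ∈ K := by
      intro y hy
      induction hy using Submodule.span_induction with
      | mem y h =>
        rcases h with hz | ⟨k, hk, a, ha, rfl⟩ | ⟨a, ha, k, hk, rfl⟩ | ⟨a, ha, k, hk, b, hb, rfl⟩
        · exact (hKid _ ((hKid y hz _ (heD i)).2) _ (heD i)).1
        · have : e i * (k * a) * e i = (e i * k) * (a * e i) := by simp only [mul_assoc]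
          rw [this]
          exact L1r _ ((hKid k hk _ (heD i)).2) a ha _ (heD i)
        · have hin : e i * (a * k) ∈ K := L1l _ (heD i) a ha k hk
          exact (hKid _ hin _ (heD i)).1
        · have hin : e i * (a * k) ∈ K := L1l _ (heD i) a ha k hk
          have : e i * (a * k * b) * e i = (e i * (a * k)) * (b * e i) := by
            simp only [mul_assoc]
          rw [this]
          exact L1r _ hin b hb _ (heD i)
      | zero => simpa using hK0m
      | add x y _ _ hx hy =>
        have : e i * (x + y) * e i = e i * x * e i + e i * y * e i := by
          rw [mul_add, add_mul]
        rw [this]; exact hKadd _ hx _ hy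
      | smul c x _ hx =>
        have : e i * (c • x) * e i = c • (e i * x * e i) := by
          rw [mul_smul_comm, smul_mul_assoc]
        rw [this]; exact hKsmul c _ hx
    rw [hJclosure] at hx
    have := map_mem_closure (f := fun y => e i * y * e i) hcont hx hmaps
    rwa [hKcl.closure_eq] at this
  -- every element of D lies in K
  have hDK : D ⊆ K := by
    intro d hd
    have hdJ : d ∈ J := hJA' ▸ hDA hd
    have hterm : ∀ i, e i * d * e i ∈ K := fun i => hcomp i d hdJ
    have htend : Tendsto (fun i => e i * d * e i) l (nhds d) := by
      rw [tendsto_iff_norm_sub_tendsto_zero]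
      have h1 : Tendsto (fun i => ‖e i * d - d‖) l (nhds 0) :=
        tendsto_iff_norm_sub_tendsto_zero.1 (hcv d hd).1
      have h2 : Tendsto (fun i => ‖d * e i - d‖) l (nhds 0) :=
        tendsto_iff_norm_sub_tendsto_zero.1 (hcv d hd).2
      have hbound : ∀ i, ‖e i * d * e i - d‖ ≤ ‖d * e i - d‖ + ‖e i * d - d‖ := by
        intro i
        calc ‖e i * d * e i - d‖
            ≤ ‖e i * d * e i - e i * d‖ + ‖e i * d - d‖ := norm_sub_le_norm_sub_add_norm_sub _ _ _
          _ ≤ ‖d * e i - d‖ + ‖e i * d - d‖ := by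
              gcongr
              have : e i * d * e i - e i * d = e i * (d * e i - d) := by
                rw [mul_sub, ← mul_assoc]
              rw [this]
              calc ‖e i * (d * e i - d)‖ ≤ ‖e i‖ * ‖d * e i - d‖ := norm_mul_le _ _
                _ ≤ 1 * ‖d * e i - d‖ := by gcongr; exact henorm i
                _ = ‖d * e i - d‖ := one_mul _
      have hsum : Tendsto (fun i => ‖d * e i - d‖ + ‖e i * d - d‖) l (nhds 0) := by
        simpa using h2.add h1
      exact squeeze_zero (fun i => norm_nonneg _) hbound hsum
    exact hKcl.mem_of_tendsto htend (Eventually.of_forall hterm)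
  exact Set.Subset.antisymm hKD hDK
end

section
/- Let A be a unital complex Banach algebra and let x ∈ A with ‖x‖ ≤ 1. The following are equivalent: (i) 1 − x has a left inverse in A; (ii) 1 − x has a right inverse in A; (iii) {(1−x)a : a ∈ A} = A; (iv) the norm closure of {(1−x)a : a ∈ A} equals A; (v) {a(1−x) : a ∈ A} = A; (vi) the norm closure of {a(1−x) : a ∈ A} equals A; (vii) 1 − x is invertible in A. -/
section Aux
variable {A : Type*} [NormedRing A] [NormedAlgebra ℂ A] [CompleteSpace A]

/-- If `‖x‖ ≤ 1` and `1 - x` has a one-sided inverse `y` (either side), then `1 - x` is a unit. -/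
lemma aux_one_sided (x : A) (hx : ‖x‖ ≤ 1) (y : A)
    (hb : ∀ w : A, ‖w‖ ≤ ‖y‖ * ‖(1 - x) * w‖ ∨ ‖w‖ ≤ ‖y‖ * ‖w * (1 - x)‖) :
    IsUnit (1 - x) := by
  by_contra h
  have hnt : Nontrivial A := by
    rcases subsingleton_or_nontrivial A with hs | hs
    · exact absurd (isUnit_of_subsingleton _) h
    · exact hs
  set N : ℝ := ‖(1 : A)‖ with hNdef
  have hN : 1 ≤ N := one_le_norm_one A
  set C : ℝ := ‖y‖ with hCdef
  have hC : 0 ≤ C := norm_nonneg y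
  set ε : ℝ := (2 * (C + 1) * N ^ 2)⁻¹ with hεdef
  have hden : 0 < 2 * (C + 1) * N ^ 2 := by positivity
  have hε : 0 < ε := by positivity
  have hεval : ε * (2 * (C + 1) * N ^ 2) = 1 := inv_mul_cancel₀ hden.ne'
  set ζ : ℂ := ((1 + ε : ℝ) : ℂ) with hζdef
  have hζnorm : ‖ζ‖ = 1 + ε := by
    rw [hζdef, Complex.norm_real, Real.norm_eq_abs, abs_of_pos (by linarith)]
  have hζ0 : ζ ≠ 0 := by
    intro h0; rw [h0, norm_zero] at hζnorm; linarith
  -- the unit (1+ε) - x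
  have hu : IsUnit (algebraMap ℂ A ζ - x) := by
    have hnorm : ‖ζ⁻¹ • x‖ < 1 := by
      rw [norm_smul, norm_inv, hζnorm]
      have : (1 + ε)⁻¹ * ‖x‖ ≤ (1 + ε)⁻¹ * 1 := by
        apply mul_le_mul_of_nonneg_left hx (by positivity)
      have h2 : (1 + ε)⁻¹ < 1 := by
        rw [inv_lt_one_iff₀]; right; linarith
      linarith
    refine ⟨(Units.map (algebraMap ℂ A).toMonoidHom (Units.mk0 ζ hζ0)) *
      Units.oneSub (ζ⁻¹ • x) hnorm, ?_⟩
    show algebraMap ℂ A ζ * (1 - ζ⁻¹ • x) = algebraMap ℂ A ζ - x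
    rw [mul_sub, mul_one, mul_smul_comm, ← Algebra.smul_def, smul_smul,
      inv_mul_cancel₀ hζ0, one_smul]
  set u : Aˣ := hu.unit with hudef
  have huval : (u : A) = algebraMap ℂ A ζ - x := hu.unit_spec
  have hsub : (1 - x) - (u : A) = -((ε : ℂ) • (1 : A)) := by
    rw [huval, Algebra.algebraMap_eq_smul_one, hζdef]
    push_cast
    rw [add_smul, one_smul]
    module
  have hsubnorm : ‖(1 - x) - (u : A)‖ = ε * N := by
    rw [hsub, norm_neg, norm_smul, Complex.norm_real, Real.norm_eq_abs, abs_of_pos hε]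
  -- 1 - x is not a unit, so it is not close to u; hence the inverse of u is large
  have hfar : ‖((u⁻¹ : Aˣ) : A)‖⁻¹ ≤ ε * N := by
    by_contra hlt
    push_neg at hlt
    rw [← hsubnorm] at hlt
    exact h (u.ofNearby (1 - x) hlt).isUnit
  set w : A := ((u⁻¹ : Aˣ) : A) with hwdef
  have hwpos : 0 < ‖w‖ := Units.norm_pos u⁻¹
  have hw1 : 1 ≤ ‖w‖ * (ε * N) := by
    rw [inv_le_iff_one_le_mul₀' (by positivity)] at hfar
    linarith
  -- 1 - x = u - ε • 1
  have hone : (1 : A) - x = (u : A) - (ε : ℂ) • (1 : A) := by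
    have := hsub
    rw [sub_eq_iff_eq_add] at this
    rw [this]; abel
  have hmulr : (1 - x) * w = 1 - (ε : ℂ) • w := by
    rw [hone, sub_mul, Units.mul_inv, smul_mul_assoc, one_mul]
  have hmull : w * (1 - x) = 1 - (ε : ℂ) • w := by
    rw [hone, mul_sub, Units.inv_mul, mul_smul_comm, mul_one]
  have hnsmall : ‖(1 : A) - (ε : ℂ) • w‖ ≤ N + ε * ‖w‖ := by
    calc ‖(1 : A) - (ε : ℂ) • w‖ ≤ ‖(1 : A)‖ + ‖(ε : ℂ) • w‖ := norm_sub_le _ _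
    _ = N + ε * ‖w‖ := by
        rw [norm_smul, Complex.norm_real, Real.norm_eq_abs, abs_of_pos hε]
  have hw2 : ‖w‖ ≤ C * (N + ε * ‖w‖) := by
    rcases hb w with hb1 | hb1
    · rw [hmulr] at hb1
      exact hb1.trans (by nlinarith)
    · rw [hmull] at hb1
      exact hb1.trans (by nlinarith)
  -- derive the contradiction
  have hεC : ε * C ≤ 1 / 2 := by
    have h1 : ε * (2 * C) ≤ ε * (2 * (C + 1) * N ^ 2) := by
      apply mul_le_mul_of_nonneg_left _ hε.le
      have hN2 : 1 ≤ N ^ 2 := one_le_pow₀ hN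
      nlinarith
    linarith
  have hwle : ‖w‖ ≤ 2 * C * N := by nlinarith
  have hwge : 2 * (C + 1) * N ≤ ‖w‖ * 1 := by
    calc 2 * (C + 1) * N = ‖w‖ * (ε * N) * (2 * (C + 1) * N) - 
        (‖w‖ * (ε * N) - 1) * (2 * (C + 1) * N) := by ring
    _ ≤ ‖w‖ * (ε * N) * (2 * (C + 1) * N) := by nlinarith
    _ = ‖w‖ * (ε * (2 * (C + 1) * N ^ 2)) := by ring
    _ = ‖w‖ * 1 := by rw [hεval]
  nlinarith

/-- If the closure of `(1-x)A` is everything, then `1-x` has a right inverse. -/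
lemma aux_closure_right (x : A)
    (h : closure {y : A | ∃ a : A, y = (1 - x) * a} = Set.univ) :
    ∃ y : A, (1 - x) * y = 1 := by
  have h1 : (1 : A) ∈ closure {y : A | ∃ a : A, y = (1 - x) * a} := by
    rw [h]; trivial
  rw [Metric.mem_closure_iff] at h1
  obtain ⟨b, hb, hd⟩ := h1 1 one_pos
  obtain ⟨a, rfl⟩ := hb
  rw [dist_eq_norm] at hd
  set u : Aˣ := Units.oneSub (1 - (1 - x) * a) hd with hudef
  have huval : (u : A) = (1 - x) * a := by
    show 1 - (1 - (1 - x) * a) = (1 - x) * a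
    rw [sub_sub_cancel]
  refine ⟨a * ((u⁻¹ : Aˣ) : A), ?_⟩
  rw [← mul_assoc, ← huval, Units.mul_inv]

/-- If the closure of `A(1-x)` is everything, then `1-x` has a left inverse. -/
lemma aux_closure_left (x : A)
    (h : closure {y : A | ∃ a : A, y = a * (1 - x)} = Set.univ) :
    ∃ y : A, y * (1 - x) = 1 := by
  have h1 : (1 : A) ∈ closure {y : A | ∃ a : A, y = a * (1 - x)} := by
    rw [h]; trivial
  rw [Metric.mem_closure_iff] at h1
  obtain ⟨b, hb, hd⟩ := h1 1 one_pos
  obtain ⟨a, rfl⟩ := hb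
  rw [dist_eq_norm] at hd
  set u : Aˣ := Units.oneSub (1 - a * (1 - x)) hd with hudef
  have huval : (u : A) = a * (1 - x) := by
    show 1 - (1 - a * (1 - x)) = a * (1 - x)
    rw [sub_sub_cancel]
  refine ⟨((u⁻¹ : Aˣ) : A) * a, ?_⟩
  rw [mul_assoc, ← huval, Units.inv_mul]

end Aux

/-- In a unital complex Banach algebra, for `x` with `‖x‖ ≤ 1`, left invertibility, right
invertibility, and invertibility of `1 - x` are all equivalent, and are equivalent to the
(closure of) either of the one-sided ideals `(1-x)A` and `A(1-x)` being all of `A`. -/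
theorem tfae_one_sub_contractive_invertible
    {A : Type*} [NormedRing A] [NormedAlgebra ℂ A] [CompleteSpace A]
    (x : A) (hx : ‖x‖ ≤ 1) :
    List.TFAE
      [(∃ y : A, y * (1 - x) = 1),
       (∃ y : A, (1 - x) * y = 1),
       {y : A | ∃ a : A, y = (1 - x) * a} = Set.univ,
       closure {y : A | ∃ a : A, y = (1 - x) * a} = Set.univ,
       {y : A | ∃ a : A, y = a * (1 - x)} = Set.univ,
       closure {y : A | ∃ a : A, y = a * (1 - x)} = Set.univ,
       IsUnit (1 - x)] := by
  tfae_have 1 → 7 := by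
    rintro ⟨y, hy⟩
    apply aux_one_sided x hx y
    intro w
    left
    calc ‖w‖ = ‖y * ((1 - x) * w)‖ := by rw [← mul_assoc, hy, one_mul]
    _ ≤ ‖y‖ * ‖(1 - x) * w‖ := norm_mul_le _ _
  tfae_have 2 → 7 := by
    rintro ⟨y, hy⟩
    apply aux_one_sided x hx y
    intro w
    right
    calc ‖w‖ = ‖w * (1 - x) * y‖ := by rw [mul_assoc, hy, mul_one]
    _ ≤ ‖w * (1 - x)‖ * ‖y‖ := norm_mul_le _ _
    _ = ‖y‖ * ‖w * (1 - x)‖ := mul_comm _ _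
  tfae_have 7 → 1 := by
    intro h
    refine ⟨((h.unit⁻¹ : Aˣ) : A), ?_⟩
    have := h.unit.inv_mul
    rwa [h.unit_spec] at this
  tfae_have 7 → 2 := by
    intro h
    refine ⟨((h.unit⁻¹ : Aˣ) : A), ?_⟩
    have := h.unit.mul_inv
    rwa [h.unit_spec] at this
  tfae_have 7 → 3 := by
    intro h
    have h2 : (1 - x) * ((h.unit⁻¹ : Aˣ) : A) = 1 := by
      have := h.unit.mul_inv
      rwa [h.unit_spec] at this
    apply Set.eq_univ_iff_forall.mpr
    intro y
    exact ⟨((h.unit⁻¹ : Aˣ) : A) * y, by rw [← mul_assoc, h2, one_mul]⟩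
  tfae_have 7 → 5 := by
    intro h
    have h2 : ((h.unit⁻¹ : Aˣ) : A) * (1 - x) = 1 := by
      have := h.unit.inv_mul
      rwa [h.unit_spec] at this
    apply Set.eq_univ_iff_forall.mpr
    intro y
    exact ⟨y * ((h.unit⁻¹ : Aˣ) : A), by rw [mul_assoc, h2, mul_one]⟩
  tfae_have 3 → 4 := by
    intro h
    rw [h, closure_univ]
  tfae_have 5 → 6 := by
    intro h
    rw [h, closure_univ]
  tfae_have 4 → 2 := aux_closure_right x
  tfae_have 6 → 1 := aux_closure_left x
  tfae_finish
end

section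
/- Let A be a unital complex Banach algebra, let x ∈ A with ‖x‖ ≤ 1, and let B be the smallest norm-closed subalgebra of A containing 1 and x (equivalently, the topological closure of the unital subalgebra generated by x). Then 1 − x is invertible in A if and only if 1 − x is invertible in B; in particular, if 1 − x is invertible in A then its inverse (1−x)⁻¹ belongs to B. -/
open Filter Topology

lemma inv_mem_closure_adjoin
    {A : Type*} [NormedRing A] [NormedAlgebra ℂ A] [CompleteSpace A]
    (x : A) (hx : ‖x‖ ≤ 1) (u : Aˣ) (hu : (u : A) = 1 - x) :
    (↑u⁻¹ : A) ∈ closure ((Algebra.adjoin ℂ {x} : Subalgebra ℂ A) : Set A) := by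
  set B : Set A := ((Algebra.adjoin ℂ {x} : Subalgebra ℂ A) : Set A)
  -- sequence of scalars tending to 1 from below
  set t : ℕ → ℝ := fun n => 1 - (1 / 2) ^ n with ht
  have ht0 : ∀ n, 0 ≤ t n := by
    intro n
    have : ((1 : ℝ) / 2) ^ n ≤ 1 := pow_le_one₀ (by norm_num) (by norm_num)
    simp only [ht]; linarith
  have ht1 : ∀ n, t n < 1 := by
    intro n
    have : (0 : ℝ) < (1 / 2) ^ n := by positivity
    simp only [ht]; linarith
  have htend : Tendsto t atTop (𝓝 1) := by
    have h0 : Tendsto (fun n : ℕ => ((1 : ℝ) / 2) ^ n) atTop (𝓝 0) :=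
      tendsto_pow_atTop_nhds_zero_of_lt_one (by norm_num) (by norm_num)
    have h1 := (tendsto_const_nhds : Tendsto (fun _ : ℕ => (1:ℝ)) atTop (𝓝 1)).sub h0
    rw [sub_zero] at h1
    exact h1
  have hnorm : ∀ n, ‖((t n : ℂ)) • x‖ < 1 := by
    intro n
    calc ‖((t n : ℂ)) • x‖ = ‖(t n : ℂ)‖ * ‖x‖ := norm_smul _ _
    _ ≤ ‖(t n : ℂ)‖ * 1 := by
        apply mul_le_mul_of_nonneg_left hx (norm_nonneg _)
    _ = t n := by rw [mul_one, Complex.norm_real, Real.norm_eq_abs, abs_of_nonneg (ht0 n)]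
    _ < 1 := ht1 n
  -- each Ring.inverse (1 - t n • x) is in closure B
  have hmem : ∀ n, Ring.inverse (1 - ((t n : ℂ)) • x) ∈ closure B := by
    intro n
    have hsum := hasSum_geom_series_inverse (((t n : ℂ)) • x) (hnorm n)
    refine mem_closure_of_tendsto hsum.tendsto_sum_nat ?_
    filter_upwards with s
    refine Subalgebra.sum_mem _ fun i _ => ?_
    rw [smul_pow]
    exact Subalgebra.smul_mem _ (pow_mem (Algebra.self_mem_adjoin_singleton ℂ x) i) _
  -- the limit
  have hlim : Tendsto (fun n => Ring.inverse (1 - ((t n : ℂ)) • x)) atTop (𝓝 (↑u⁻¹)) := by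
    have h1 : Tendsto (fun n => 1 - ((t n : ℂ)) • x) atTop (𝓝 (1 - x)) := by
      have : Tendsto (fun n => ((t n : ℂ))) atTop (𝓝 1) :=
        (Complex.continuous_ofReal.tendsto 1).comp htend
      have h2 := (tendsto_const_nhds : Tendsto (fun _ : ℕ => (1:A)) atTop (𝓝 1)).sub
        (this.smul (tendsto_const_nhds (x := x)))
      rw [one_smul] at h2
      exact h2
    have hc : ContinuousAt Ring.inverse ((u : A)) := NormedRing.inverse_continuousAt u
    rw [hu] at hc
    have := hc.tendsto.comp h1
    rw [← hu, Ring.inverse_unit] at this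
    exact this
  exact isClosed_closure.mem_of_tendsto hlim (Eventually.of_forall hmem)

/-- For `x` of norm at most one in a unital complex Banach algebra `A`, the element `1 - x`
is invertible in `A` iff it is invertible in the smallest norm-closed subalgebra `B` of `A`
containing `1` and `x`; in particular if `1 - x` is invertible then `(1-x)⁻¹ ∈ B`. -/
theorem one_sub_invertible_in_closed_subalgebra_generated
    {A : Type*} [NormedRing A] [NormedAlgebra ℂ A] [CompleteSpace A]
    (x : A) (hx : ‖x‖ ≤ 1) :
    (IsUnit (1 - x) ↔
      ∃ y ∈ closure ((Algebra.adjoin ℂ {x} : Subalgebra ℂ A) : Set A),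
        y * (1 - x) = 1 ∧ (1 - x) * y = 1) ∧
    (∀ y : A, y * (1 - x) = 1 → (1 - x) * y = 1 →
      y ∈ closure ((Algebra.adjoin ℂ {x} : Subalgebra ℂ A) : Set A)) := by
  have key : ∀ y : A, y * (1 - x) = 1 → (1 - x) * y = 1 →
      y ∈ closure ((Algebra.adjoin ℂ {x} : Subalgebra ℂ A) : Set A) := by
    intro y h1 h2
    exact inv_mem_closure_adjoin x hx ⟨1 - x, y, h2, h1⟩ rfl
  refine ⟨⟨fun h => ?_, fun ⟨y, _, h1, h2⟩ => ⟨⟨1 - x, y, h2, h1⟩, rfl⟩⟩, key⟩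
  obtain ⟨u, hu⟩ := h
  refine ⟨↑u⁻¹, inv_mem_closure_adjoin x hx u hu, ?_, ?_⟩
  · rw [← hu]; exact u.inv_mul
  · rw [← hu]; exact u.mul_inv
end

section
/- Let A be a complex Banach algebra (not necessarily unital) and let x ∈ A with ‖x‖ ≤ 1. The following are equivalent: (i) x is left quasi-invertible, i.e. there exists y ∈ A with y x = x + y; (ii) x is right quasi-invertible, i.e. there exists y ∈ A with x y = x + y; (iii) {a − x a : a ∈ A} = A; (iv) the norm closure of {a − x a : a ∈ A} equals A; (v) {a − a x : a ∈ A} = A; (vi) the norm closure of {a − a x : a ∈ A} equals A. -/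
section Aux

variable {A : Type*} [NonUnitalNormedRing A] [NormedSpace ℂ A]
    [IsScalarTower ℂ A A] [SMulCommClass ℂ A A] [CompleteSpace A]

/-- Geometric series quasi-inverse: for `‖a‖ < 1` there is `s` with
`s = a + a*s` and `s = a + s*a` (i.e. `(1-a)(1+s) = 1 = (1+s)(1-a)`). -/
lemma qi_geom_aux (a : A) (ha : ‖a‖ < 1) :
    ∃ s : A, s = a + a * s ∧ s = a + s * a := by
  set p : ℕ → A := fun n => Nat.rec a (fun _ ih => a * ih) n with hp
  have hp0 : p 0 = a := rfl
  have hps : ∀ n, p (n + 1) = a * p n := fun n => rfl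
  have hnorm : ∀ n, ‖p n‖ ≤ ‖a‖ ^ (n + 1) := by
    intro n
    induction n with
    | zero => simp [hp0]
    | succ n ih =>
      calc ‖p (n+1)‖ = ‖a * p n‖ := by rw [hps]
        _ ≤ ‖a‖ * ‖p n‖ := norm_mul_le _ _
        _ ≤ ‖a‖ * ‖a‖ ^ (n+1) := by
            exact mul_le_mul_of_nonneg_left ih (norm_nonneg a)
        _ = ‖a‖ ^ (n + 2) := by ring
  have hgeo : Summable fun n : ℕ => ‖a‖ ^ (n + 1) := by
    have := (summable_geometric_of_lt_one (norm_nonneg a) ha).mul_left ‖a‖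
    simpa [pow_succ, mul_comm] using this
  have hsum : Summable p := Summable.of_norm_bounded hgeo hnorm
  have hcomm : ∀ n, p n * a = a * p n := by
    intro n
    induction n with
    | zero => rfl
    | succ n ih => rw [hps, mul_assoc, ih, ← mul_assoc]
  refine ⟨∑' n, p n, ?_, ?_⟩
  · have h1 : ∑' n, p n = p 0 + ∑' n, p (n + 1) := Summable.tsum_eq_zero_add hsum
    have h2 : ∑' n, p (n + 1) = a * ∑' n, p n := by
      calc ∑' n, p (n + 1) = ∑' n, a * p n := by simp only [hps]
        _ = a * ∑' n, p n := hsum.tsum_mul_left a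
    rw [h2] at h1
    simpa [hp0] using h1
  · have h1 : ∑' n, p n = p 0 + ∑' n, p (n + 1) := Summable.tsum_eq_zero_add hsum
    have h2 : ∑' n, p (n + 1) = (∑' n, p n) * a := by
      calc ∑' n, p (n + 1) = ∑' n, p n * a := by
            refine tsum_congr fun n => ?_
            rw [hps, hcomm]
        _ = (∑' n, p n) * a := hsum.tsum_mul_right a
    rw [h2] at h1
    simpa [hp0] using h1

/-- From a right inverse of `1 - x` in the unitization, extract a right
quasi-inverse of `x` in `A`. -/
lemma qi_right_ext (x : A) (w : Unitization ℂ A)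
    (hw : (1 - (x : Unitization ℂ A)) * w = 1) : ∃ y : A, x * y = x + y := by
  have hf : w.fst = 1 := by
    have h := congrArg (fun w : Unitization ℂ A => w.fst) hw
    simp only [Unitization.fst_mul, Unitization.fst_one, sub_eq_add_neg,
      Unitization.fst_add, Unitization.fst_neg, Unitization.fst_inr, neg_zero,
      add_zero, one_mul] at h
    exact h
  have hwy : w = 1 + ((w.snd : A) : Unitization ℂ A) := by
    ext <;> simp [hf]
  set y0 := w.snd with hy0
  have h4 : (1 : Unitization ℂ A) + ((y0 - x - x * y0 : A) : Unitization ℂ A)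
      = (1 - (x : Unitization ℂ A)) * (1 + (y0 : Unitization ℂ A)) := by
    simp only [Unitization.inr_sub, Unitization.inr_mul]
    rw [sub_mul, one_mul, mul_one_add]
    abel
  have h5 : y0 - x - x * y0 = 0 := by
    rw [← hwy, hw] at h4
    have h6 : ((y0 - x - x * y0 : A) : Unitization ℂ A) = 0 := by
      have := add_eq_left.mp h4
      simpa using this
    exact Unitization.inr_injective (R := ℂ) (h6.trans (Unitization.inr_zero ℂ).symm)
  refine ⟨-y0, ?_⟩
  have h7 : x * (-y0) - (x + -y0) = y0 - x - x * y0 := by noncomm_ring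
  rw [h5] at h7
  exact sub_eq_zero.mp h7

/-- From a left inverse of `1 - x` in the unitization, extract a left
quasi-inverse of `x` in `A`. -/
lemma qi_left_ext (x : A) (w : Unitization ℂ A)
    (hw : w * (1 - (x : Unitization ℂ A)) = 1) : ∃ y : A, y * x = x + y := by
  have hf : w.fst = 1 := by
    have h := congrArg (fun w : Unitization ℂ A => w.fst) hw
    simp only [Unitization.fst_mul, Unitization.fst_one, sub_eq_add_neg,
      Unitization.fst_add, Unitization.fst_neg, Unitization.fst_inr, neg_zero,
      add_zero, mul_one] at h
    exact h
  have hwy : w = 1 + ((w.snd : A) : Unitization ℂ A) := by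
    ext <;> simp [hf]
  set y0 := w.snd with hy0
  have h4 : (1 : Unitization ℂ A) + ((y0 - x - y0 * x : A) : Unitization ℂ A)
      = (1 + (y0 : Unitization ℂ A)) * (1 - (x : Unitization ℂ A)) := by
    simp only [Unitization.inr_sub, Unitization.inr_mul]
    rw [mul_sub, mul_one, one_add_mul]
    abel
  have h5 : y0 - x - y0 * x = 0 := by
    rw [← hwy, hw] at h4
    have h6 : ((y0 - x - y0 * x : A) : Unitization ℂ A) = 0 := by
      have := add_eq_left.mp h4
      simpa using this
    exact Unitization.inr_injective (R := ℂ) (h6.trans (Unitization.inr_zero ℂ).symm)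
  refine ⟨-y0, ?_⟩
  have h7 : (-y0) * x - (x + -y0) = y0 - x - y0 * x := by noncomm_ring
  rw [h5] at h7
  exact sub_eq_zero.mp h7

/-- Main analytic lemma: if `‖x‖ ≤ 1` and `x` has a left quasi-inverse, then
`1 - x` has a right inverse in the unitization. -/
lemma qi_main_left (x : A) (hx : ‖x‖ ≤ 1) (y : A) (hy : y * x = x + y) :
    ∃ w : Unitization ℂ A, (1 - (x : Unitization ℂ A)) * w = 1 := by
  set C : ℝ := 1 + ‖y‖ with hC
  have hC1 : 1 ≤ C := le_add_of_nonneg_right (norm_nonneg y)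
  have hC0 : 0 < C := lt_of_lt_of_le one_pos hC1
  -- bounded below
  have hbb : ∀ b : A, ‖b‖ ≤ C * ‖b - x * b‖ := by
    intro b
    have h1 : y * (x * b) = (x + y) * b := by rw [← mul_assoc, hy]
    have hb : b = (b - x * b) - y * (b - x * b) := by
      rw [mul_sub, h1]
      noncomm_ring
    calc ‖b‖ = ‖(b - x * b) - y * (b - x * b)‖ := by rw [← hb]
      _ ≤ ‖b - x * b‖ + ‖y * (b - x * b)‖ := norm_sub_le _ _
      _ ≤ ‖b - x * b‖ + ‖y‖ * ‖b - x * b‖ := by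
          exact add_le_add le_rfl (norm_mul_le _ _)
      _ = C * ‖b - x * b‖ := by rw [hC]; ring
  set ε : ℝ := 1 / (3 * C) with hε
  have hε0 : 0 < ε := by positivity
  have hεC : ε * C = 1 / 3 := by
    field_simp [hε]
    rw [hε]; field_simp
  have hε3 : ε ≤ 1 / 3 := by
    rw [hε]
    rw [div_le_div_iff₀ (by positivity) (by norm_num)]
    nlinarith
  set t : ℝ := 1 - ε with htdef
  have ht0 : 0 ≤ t := by simp only [htdef]; linarith
  have ht1 : t < 1 := by simp only [htdef]; linarith
  set a : A := ((t : ℂ)) • x with ha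
  have hanorm : ‖a‖ < 1 := by
    rw [ha, norm_smul]
    have : ‖(t : ℂ)‖ = t := by
      rw [Complex.norm_real, Real.norm_of_nonneg ht0]
    rw [this]
    calc t * ‖x‖ ≤ t * 1 := by
          exact mul_le_mul_of_nonneg_left hx ht0
      _ < 1 := by linarith
  obtain ⟨s₂, hs₂a, hs₂b⟩ := qi_geom_aux a hanorm
  have h0₂ : s₂ - a - a * s₂ = 0 := by
    nth_rewrite 1 [hs₂a]
    noncomm_ring
  set v : A := x + s₂ * x with hv
  have hv1 : v - a * v = x := by
    have e : v - a * v = x + (s₂ - a - a * s₂) * x := by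
      rw [hv]
      noncomm_ring
    rw [h0₂, zero_mul, add_zero] at e
    exact e
  have hav : a * v = (t : ℂ) • (x * v) := by rw [ha, smul_mul_assoc]
  -- norm bound on v
  have hxv : ‖x * v‖ ≤ ‖v‖ := by
    calc ‖x * v‖ ≤ ‖x‖ * ‖v‖ := norm_mul_le _ _
      _ ≤ 1 * ‖v‖ := mul_le_mul_of_nonneg_right hx (norm_nonneg v)
      _ = ‖v‖ := one_mul _
  have hvxv : ‖v - x * v‖ ≤ 1 + ε * ‖v‖ := by
    have e : v - x * v = (v - a * v) + (((t : ℂ) - 1) • (x * v)) := by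
      rw [hav]
      have : ((t : ℂ) - 1) • (x * v) = (t : ℂ) • (x * v) - x * v := by
        rw [sub_smul, one_smul]
      rw [this]
      abel
    rw [e, hv1]
    have h2 : ‖((t : ℂ) - 1) • (x * v)‖ = ε * ‖x * v‖ := by
      rw [norm_smul]
      have : ‖(t : ℂ) - 1‖ = ε := by
        have : ((t : ℝ) : ℂ) - 1 = ((t - 1 : ℝ) : ℂ) := by push_cast; ring
        rw [this, Complex.norm_real, Real.norm_eq_abs, htdef]
        rw [abs_of_nonpos (by linarith)]
        ring
      rw [this]
    calc ‖x + ((t : ℂ) - 1) • (x * v)‖ ≤ ‖x‖ + ‖((t : ℂ) - 1) • (x * v)‖ := norm_add_le _ _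
      _ ≤ 1 + ε * ‖v‖ := by
          rw [h2]
          exact add_le_add hx (mul_le_mul_of_nonneg_left hxv (le_of_lt hε0))
  have hvbound : ‖v‖ ≤ 3 / 2 * C := by
    have h3 : ‖v‖ ≤ C * (1 + ε * ‖v‖) := le_trans (hbb v)
      (mul_le_mul_of_nonneg_left hvxv (le_of_lt hC0))
    have h4 : C * (1 + ε * ‖v‖) = C + (C * ε) * ‖v‖ := by ring
    rw [h4] at h3
    have h5 : C * ε = 1 / 3 := by rw [mul_comm]; exact hεC
    rw [h5] at h3
    linarith
  set b : A := ((ε : ℂ)) • v with hb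
  have hbnorm : ‖b‖ < 1 := by
    rw [hb, norm_smul]
    have h6 : ‖(ε : ℂ)‖ = ε := by
      rw [Complex.norm_real, Real.norm_of_nonneg (le_of_lt hε0)]
    rw [h6]
    calc ε * ‖v‖ ≤ ε * (3 / 2 * C) := mul_le_mul_of_nonneg_left hvbound (le_of_lt hε0)
      _ = 3 / 2 * (ε * C) := by ring
      _ = 1 / 2 := by rw [hεC]; norm_num
      _ < 1 := by norm_num
  obtain ⟨s₁, hs₁a, hs₁b⟩ := qi_geom_aux b hbnorm
  have h0₁ : s₁ - b - b * s₁ = 0 := by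
    nth_rewrite 1 [hs₁a]
    noncomm_ring
  -- key algebraic identity in A : a + b - a * b = x
  have hkey : a + b - a * b = x := by
    have hab : a * b = (ε : ℂ) • (a * v) := by rw [hb, mul_smul_comm]
    rw [hb, hab, hav]
    have e1 : a + (ε : ℂ) • v - (ε : ℂ) • ((t : ℂ) • (x * v))
        = a + (ε : ℂ) • (v - (t : ℂ) • (x * v)) := by
      rw [smul_sub]
      abel
    rw [e1]
    have e2 : v - (t : ℂ) • (x * v) = x := by rw [← hav]; exact hv1
    rw [e2, ha, ← add_smul]
    have e3 : ((t : ℝ) : ℂ) + ((ε : ℝ) : ℂ) = 1 := by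
      push_cast
      rw [htdef]
      push_cast
      ring
    rw [e3, one_smul]
  -- now assemble in the unitization
  set U := Unitization ℂ A
  have hA : (1 - (a : U)) * (1 + (s₂ : U)) = 1 := by
    have e : (1 - (a : U)) * (1 + (s₂ : U)) = 1 + ((s₂ - a - a * s₂ : A) : U) := by
      simp only [Unitization.inr_sub, Unitization.inr_mul]
      rw [sub_mul, one_mul, mul_one_add]
      abel
    rw [h0₂] at e
    simpa using e
  have hB : (1 - (b : U)) * (1 + (s₁ : U)) = 1 := by
    have e : (1 - (b : U)) * (1 + (s₁ : U)) = 1 + ((s₁ - b - b * s₁ : A) : U) := by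
      simp only [Unitization.inr_sub, Unitization.inr_mul]
      rw [sub_mul, one_mul, mul_one_add]
      abel
    rw [h0₁] at e
    simpa using e
  have hfact : (1 - (x : U)) = (1 - (a : U)) * (1 - (b : U)) := by
    have e : (1 - (a : U)) * (1 - (b : U)) = 1 - ((a + b - a * b : A) : U) := by
      simp only [Unitization.inr_sub, Unitization.inr_add, Unitization.inr_mul]
      rw [sub_mul, one_mul, mul_one_sub]
      abel
    rw [e, hkey]
  refine ⟨(1 + (s₁ : U)) * (1 + (s₂ : U)), ?_⟩
  calc (1 - (x : U)) * ((1 + (s₁ : U)) * (1 + (s₂ : U)))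
      = ((1 - (a : U)) * ((1 - (b : U)) * (1 + (s₁ : U)))) * (1 + (s₂ : U)) := by
        rw [hfact]; noncomm_ring
    _ = (1 - (a : U)) * (1 + (s₂ : U)) := by rw [hB, mul_one]
    _ = 1 := hA

lemma qi_left_to_right (x : A) (hx : ‖x‖ ≤ 1) :
    (∃ y : A, y * x = x + y) → (∃ y : A, x * y = x + y) := by
  rintro ⟨y, hy⟩
  obtain ⟨w, hw⟩ := qi_main_left x hx y hy
  exact qi_right_ext x w hw

lemma qi_right_to_left (x : A) (hx : ‖x‖ ≤ 1) :
    (∃ y : A, x * y = x + y) → (∃ y : A, y * x = x + y) := by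
  rintro ⟨y, hy⟩
  have h' : ∃ z : Aᵐᵒᵖ, z * MulOpposite.op x = MulOpposite.op x + z := by
    refine ⟨MulOpposite.op y, ?_⟩
    rw [← MulOpposite.op_mul, hy, MulOpposite.op_add]
  obtain ⟨z, hz⟩ := qi_left_to_right (A := Aᵐᵒᵖ) (MulOpposite.op x)
    (by exact hx) h'
  refine ⟨z.unop, ?_⟩
  have := congrArg MulOpposite.unop hz
  simpa using this

end Aux

/-- In a (not necessarily unital) complex Banach algebra, for `x` with `‖x‖ ≤ 1`, left
quasi-invertibility and right quasi-invertibility of `x` are equivalent, and are equivalent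
to (the closure of) either of `(1-x)A = {a - x a}` and `A(1-x) = {a - a x}` being all of `A`. -/
theorem tfae_quasi_invertible_contractive
    {A : Type*} [NonUnitalNormedRing A] [NormedSpace ℂ A]
    [IsScalarTower ℂ A A] [SMulCommClass ℂ A A] [CompleteSpace A]
    (x : A) (hx : ‖x‖ ≤ 1) :
    List.TFAE
      [(∃ y : A, y * x = x + y),
       (∃ y : A, x * y = x + y),
       {z : A | ∃ a : A, z = a - x * a} = Set.univ,
       closure {z : A | ∃ a : A, z = a - x * a} = Set.univ,
       {z : A | ∃ a : A, z = a - a * x} = Set.univ,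
       closure {z : A | ∃ a : A, z = a - a * x} = Set.univ] := by
  tfae_have 1 → 2 := qi_left_to_right x hx
  tfae_have 2 → 1 := qi_right_to_left x hx
  tfae_have 2 → 3 := by
    rintro ⟨y, hy⟩
    ext b
    simp only [Set.mem_setOf_eq, Set.mem_univ, iff_true]
    refine ⟨b - y * b, ?_⟩
    have h1 : x * (y * b) = (x + y) * b := by rw [← mul_assoc, hy]
    rw [mul_sub, h1]
    noncomm_ring
  tfae_have 3 → 4 := by
    intro h
    rw [h, closure_univ]
  tfae_have 4 → 2 := by
    intro h
    have hxc : x ∈ closure {z : A | ∃ a : A, z = a - x * a} := by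
      rw [h]; trivial
    obtain ⟨z, hz, hdist⟩ := Metric.mem_closure_iff.mp hxc 1 one_pos
    obtain ⟨a, rfl⟩ := hz
    set d : A := x - a + x * a with hdd
    have hd : ‖d‖ < 1 := by
      have e : d = x - (a - x * a) := by rw [hdd]; abel
      rw [e, ← dist_eq_norm]
      exact hdist
    obtain ⟨s, hsa, hsb⟩ := qi_geom_aux d hd
    have h0 : s - d - d * s = 0 := by
      nth_rewrite 1 [hsa]
      noncomm_ring
    have e1 : (1 - (x : Unitization ℂ A)) * (1 + (a : Unitization ℂ A))
        = 1 - (d : Unitization ℂ A) := by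
      simp only [hdd, Unitization.inr_add, Unitization.inr_sub, Unitization.inr_mul]
      rw [sub_mul, one_mul, mul_one_add]
      abel
    have e2 : (1 - (d : Unitization ℂ A)) * (1 + (s : Unitization ℂ A)) = 1 := by
      have e : (1 - (d : Unitization ℂ A)) * (1 + (s : Unitization ℂ A))
          = 1 + ((s - d - d * s : A) : Unitization ℂ A) := by
        simp only [Unitization.inr_sub, Unitization.inr_mul]
        rw [sub_mul, one_mul, mul_one_add]
        abel
      rw [h0] at e
      simpa using e
    refine qi_right_ext x ((1 + (a : Unitization ℂ A)) * (1 + (s : Unitization ℂ A))) ?_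
    rw [← mul_assoc, e1, e2]
  tfae_have 1 → 5 := by
    rintro ⟨y, hy⟩
    ext b
    simp only [Set.mem_setOf_eq, Set.mem_univ, iff_true]
    refine ⟨b - b * y, ?_⟩
    have h1 : (b * y) * x = b * (x + y) := by rw [mul_assoc, hy]
    rw [sub_mul, h1]
    noncomm_ring
  tfae_have 5 → 6 := by
    intro h
    rw [h, closure_univ]
  tfae_have 6 → 1 := by
    intro h
    have hxc : x ∈ closure {z : A | ∃ a : A, z = a - a * x} := by
      rw [h]; trivial
    obtain ⟨z, hz, hdist⟩ := Metric.mem_closure_iff.mp hxc 1 one_pos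
    obtain ⟨a, rfl⟩ := hz
    set d : A := x - a + a * x with hdd
    have hd : ‖d‖ < 1 := by
      have e : d = x - (a - a * x) := by rw [hdd]; abel
      rw [e, ← dist_eq_norm]
      exact hdist
    obtain ⟨s, hsa, hsb⟩ := qi_geom_aux d hd
    have h0 : s - d - s * d = 0 := by
      nth_rewrite 1 [hsb]
      noncomm_ring
    have e1 : (1 + (a : Unitization ℂ A)) * (1 - (x : Unitization ℂ A))
        = 1 - (d : Unitization ℂ A) := by
      simp only [hdd, Unitization.inr_add, Unitization.inr_sub, Unitization.inr_mul]
      rw [mul_sub, mul_one, one_add_mul]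
      abel
    have e2 : (1 + (s : Unitization ℂ A)) * (1 - (d : Unitization ℂ A)) = 1 := by
      have e : (1 + (s : Unitization ℂ A)) * (1 - (d : Unitization ℂ A))
          = 1 + ((s - d - s * d : A) : Unitization ℂ A) := by
        simp only [Unitization.inr_sub, Unitization.inr_mul]
        rw [mul_sub, mul_one, one_add_mul]
        abel
      rw [h0] at e
      simpa using e
    refine qi_left_ext x ((1 + (s : Unitization ℂ A)) * (1 + (a : Unitization ℂ A))) ?_
    rw [mul_assoc, e1, e2]
  tfae_finish
end

section
/- Let A be a unital complex Banach algebra with ‖1‖ = 1. The following are equivalent: (i) every 1-regular right ideal of A is trivial, i.e. equals {0} or A; (ii) for every a ∈ A which is not a scalar multiple of 1, the spectral radius of a is strictly less than ‖a‖; (iii) every x ∈ A with ‖x‖ ≤ 1 and x ≠ 1 is quasi-invertible, i.e. 1 − x is invertible in A. -/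
open scoped ENNReal NNReal

/-- Key lemma: if `‖x‖ ≤ 1`, `1 - x` is not a unit, then `1 - x` has no right inverse. -/
lemma no_right_inverse_of_not_isUnit
    {A : Type*} [NormedRing A] [NormedAlgebra ℂ A] [NormOneClass A]
    {x b : A} (hx : ‖x‖ ≤ 1) (hu : ¬ IsUnit (1 - x)) (hb : (1 - x) * b = 1) : False := by
  set c : A := b * (1 - x) - 1 with hc
  have hc0 : c ≠ 0 := by
    intro h
    have hbl : b * (1 - x) = 1 := by
      have := sub_eq_zero.mp h; simpa using this
    exact hu ⟨⟨1 - x, b, hb, hbl⟩, rfl⟩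
  have hxc : x * c = c := by
    have h1 : (1 - x) * c = 0 := by
      rw [hc, mul_sub, ← mul_assoc, hb, one_mul, mul_one, sub_self]
    have h3 : c - x * c = 0 := by simpa [sub_mul, one_mul] using h1
    have := sub_eq_zero.mp h3
    exact this.symm
  have hpow : ∀ i : ℕ, x ^ i * c = c := by
    intro i
    induction i with
    | zero => simp
    | succ n ih => rw [pow_succ, mul_assoc, hxc, ih]
  obtain ⟨n, hn⟩ := exists_nat_gt (2 * ‖b‖)
  have hsum : (∑ i ∈ Finset.range n, x ^ i) * c = (n : ℂ) • c := by
    rw [Finset.sum_mul]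
    have : ∀ i ∈ Finset.range n, x ^ i * c = c := fun i _ => hpow i
    rw [Finset.sum_congr rfl this, Finset.sum_const, Finset.card_range]
    exact (Nat.cast_smul_eq_nsmul ℂ n c).symm
  have hgeom : (∑ i ∈ Finset.range n, x ^ i) * (1 - x) = 1 - x ^ n := by
    have := geom_sum_mul x n
    calc (∑ i ∈ Finset.range n, x ^ i) * (1 - x)
        = -((∑ i ∈ Finset.range n, x ^ i) * (x - 1)) := by rw [← mul_neg, neg_sub]
      _ = -(x ^ n - 1) := by rw [this]
      _ = 1 - x ^ n := by rw [neg_sub]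
  have hsum2 : (∑ i ∈ Finset.range n, x ^ i) * c = (1 - x ^ n) * (b * c) := by
    calc (∑ i ∈ Finset.range n, x ^ i) * c
        = (∑ i ∈ Finset.range n, x ^ i) * (((1 - x) * b) * c) := by rw [hb, one_mul]
      _ = ((∑ i ∈ Finset.range n, x ^ i) * (1 - x)) * (b * c) := by
          rw [mul_assoc, mul_assoc]
      _ = (1 - x ^ n) * (b * c) := by rw [hgeom]
  have hnorm1 : ‖(n : ℂ) • c‖ = (n : ℝ) * ‖c‖ := by
    rw [norm_smul, Complex.norm_natCast]
  have hn0 : 0 < n := by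
    have : (0:ℝ) < (n:ℝ) := lt_of_le_of_lt (by positivity) hn
    exact_mod_cast this
  have hxn : ‖x ^ n‖ ≤ 1 :=
    le_trans (norm_pow_le' x hn0) (pow_le_one₀ (norm_nonneg x) hx)
  have h1xn : ‖1 - x ^ n‖ ≤ 2 := (norm_sub_le _ _).trans (by rw [norm_one]; linarith)
  have hcpos : 0 < ‖c‖ := norm_pos_iff.mpr hc0
  have hle : (n : ℝ) * ‖c‖ ≤ 2 * (‖b‖ * ‖c‖) := by
    calc (n : ℝ) * ‖c‖ = ‖(1 - x ^ n) * (b * c)‖ := by rw [← hnorm1, ← hsum2, hsum]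
      _ ≤ ‖1 - x ^ n‖ * ‖b * c‖ := norm_mul_le _ _
      _ ≤ ‖1 - x ^ n‖ * (‖b‖ * ‖c‖) := by
          gcongr
          exact norm_mul_le _ _
      _ ≤ 2 * (‖b‖ * ‖c‖) := by
          gcongr
  nlinarith [norm_nonneg b]

/-- In a unital complex Banach algebra with `‖1‖ = 1`: every 1-regular right ideal is trivial
iff the spectral radius of every element which is not a scalar multiple of `1` is strictly
less than its norm, iff every `x` in the closed unit ball other than `1` is quasi-invertible
(i.e. `1 - x` is invertible). -/
theorem tfae_one_regular_right_ideals_trivial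
    {A : Type*} [NormedRing A] [NormedAlgebra ℂ A] [CompleteSpace A] [NormOneClass A] :
    List.TFAE
      [∀ S : Set A,
          ((0 : A) ∈ S ∧ (∀ x ∈ S, ∀ y ∈ S, x + y ∈ S) ∧
            (∀ (c : ℂ), ∀ x ∈ S, c • x ∈ S) ∧ (∀ s ∈ S, ∀ a : A, s * a ∈ S)) →
          (∃ y : A, ‖y‖ ≤ 1 ∧ y ≠ 1 ∧ ∀ a : A, a - y * a ∈ S) →
          (S = {0} ∨ S = Set.univ),
       ∀ a : A, (∀ c : ℂ, a ≠ c • (1 : A)) → spectralRadius ℂ a < (‖a‖₊ : ℝ≥0∞),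
       ∀ x : A, ‖x‖ ≤ 1 → x ≠ 1 → IsUnit (1 - x)] := by
  tfae_have 1 → 3 := by
    intro h1 x hx hxne
    by_contra hu
    set S : Set A := Set.range (fun a => (1 - x) * a) with hS
    have hideal : (0 : A) ∈ S ∧ (∀ u ∈ S, ∀ v ∈ S, u + v ∈ S) ∧
        (∀ (c : ℂ), ∀ u ∈ S, c • u ∈ S) ∧ (∀ s ∈ S, ∀ a : A, s * a ∈ S) := by
      refine ⟨⟨0, by simp⟩, ?_, ?_, ?_⟩
      · rintro u ⟨a, rfl⟩ v ⟨b, rfl⟩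
        exact ⟨a + b, show (1 - x) * (a + b) = _ by rw [mul_add]⟩
      · rintro c u ⟨a, rfl⟩
        exact ⟨c • a, mul_smul_comm c (1 - x) a⟩
      · rintro s ⟨a, rfl⟩ b
        exact ⟨a * b, show (1 - x) * (a * b) = _ by rw [mul_assoc]⟩
    have hreg : ∃ y : A, ‖y‖ ≤ 1 ∧ y ≠ 1 ∧ ∀ a : A, a - y * a ∈ S :=
      ⟨x, hx, hxne, fun a => ⟨a, show (1 - x) * a = a - x * a by rw [sub_mul, one_mul]⟩⟩
    rcases h1 S hideal hreg with h | h
    · have : (1 - x) ∈ S := ⟨1, show (1 - x) * 1 = 1 - x by rw [mul_one]⟩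
      rw [h, Set.mem_singleton_iff] at this
      exact hxne (sub_eq_zero.mp this).symm
    · have : (1 : A) ∈ S := h ▸ Set.mem_univ 1
      obtain ⟨b, hb⟩ := this
      exact no_right_inverse_of_not_isUnit hx hu hb
  tfae_have 3 → 1 := by
    intro h3 S hideal hreg
    obtain ⟨y, hy1, hy2, hyS⟩ := hreg
    obtain ⟨u, hu⟩ := h3 y hy1 hy2
    right
    ext z
    simp only [Set.mem_univ, iff_true]
    have hb : (1 - y) * (↑u⁻¹ * z) = z := by
      rw [← mul_assoc, ← hu, u.mul_inv, one_mul]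
    have := hyS (↑u⁻¹ * z)
    rwa [show (↑u⁻¹ * z) - y * (↑u⁻¹ * z) = (1 - y) * (↑u⁻¹ * z) by rw [sub_mul, one_mul],
      hb] at this
  tfae_have 2 → 3 := by
    intro h2 x hx hxne
    by_cases hc : ∃ c : ℂ, x = c • (1 : A)
    · obtain ⟨c, rfl⟩ := hc
      have hc1 : c ≠ 1 := by rintro rfl; exact hxne (one_smul ℂ (1 : A))
      have hunit : IsUnit ((1 : ℂ) - c) := isUnit_iff_ne_zero.mpr (sub_ne_zero.mpr hc1.symm)
      have : (1 : A) - c • 1 = algebraMap ℂ A (1 - c) := by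
        rw [map_sub, map_one, Algebra.algebraMap_eq_smul_one]
      rw [this]
      exact hunit.map (algebraMap ℂ A)
    · push_neg at hc
      have hlt : spectralRadius ℂ x < (‖x‖₊ : ℝ≥0∞) := h2 x hc
      have hx1 : (‖x‖₊ : ℝ≥0∞) ≤ 1 := by
        rw [show ((1 : ℝ≥0∞)) = ((1 : ℝ≥0) : ℝ≥0∞) by simp]
        exact_mod_cast ENNReal.coe_le_coe.mpr (by exact_mod_cast hx)
      have h1spec : (1 : ℂ) ∉ spectrum ℂ x := by
        intro hmem
        have : (‖(1 : ℂ)‖₊ : ℝ≥0∞) ≤ spectralRadius ℂ x := le_iSup₂ (α := ℝ≥0∞) _ hmem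
        simp only [nnnorm_one, ENNReal.coe_one] at this
        exact absurd (lt_of_le_of_lt this (lt_of_lt_of_le hlt hx1)) (lt_irrefl 1)
      have := spectrum.notMem_iff.mp h1spec
      rwa [map_one] at this
  tfae_have 3 → 2 := by
    intro h3 a ha
    refine lt_of_le_of_ne (spectrum.spectralRadius_le_nnnorm a) ?_
    intro heq
    haveI : Nontrivial A := NormOneClass.nontrivial
    obtain ⟨k, hk, hknorm⟩ := spectrum.exists_nnnorm_eq_spectralRadius (a := a)
    have hkna : ‖k‖ = ‖a‖ := by
      have h' : ‖k‖₊ = ‖a‖₊ := by exact_mod_cast hknorm.trans heq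
      calc ‖k‖ = (‖k‖₊ : ℝ) := (coe_nnnorm k).symm
        _ = (‖a‖₊ : ℝ) := by rw [h']
        _ = ‖a‖ := coe_nnnorm a
    have ha0 : a ≠ 0 := fun h => ha 0 (by simp [h])
    have hk0 : k ≠ 0 := by
      intro h
      rw [h] at hkna
      simp only [norm_zero] at hkna
      exact ha0 (norm_eq_zero.mp hkna.symm)
    set x : A := k⁻¹ • a with hxdef
    have hxnorm : ‖x‖ ≤ 1 := by
      rw [hxdef, norm_smul, norm_inv, ← hkna]
      rw [inv_mul_cancel₀ (by simpa using hk0)]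
    have hxne : x ≠ 1 := by
      intro h
      apply ha k
      rw [← h, hxdef, smul_smul, mul_inv_cancel₀ hk0, one_smul]
    have hunit := h3 x hxnorm hxne
    have : IsUnit (algebraMap ℂ A k - a) := by
      have h1 : algebraMap ℂ A k - a = algebraMap ℂ A k * (1 - x) := by
        rw [mul_sub, mul_one, hxdef, ← Algebra.smul_def, smul_smul, mul_inv_cancel₀ hk0,
          one_smul]
      rw [h1]
      exact ((isUnit_iff_ne_zero.mpr hk0).map (algebraMap ℂ A)).mul hunit
    exact spectrum.notMem_iff.mpr this hk
  tfae_finish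
end

section
/- Let H be a complex Hilbert space, let A be a norm-closed subalgebra of B(H) containing the identity operator 1, and let x ∈ A with ‖x‖ ≤ 1. Then 1 − x is invertible in A (i.e. there exists y ∈ A with y(1−x) = 1 and (1−x)y = 1) if and only if ‖1 + x‖ < 2. -/
variable {H : Type*} [NormedAddCommGroup H] [InnerProductSpace ℂ H] [CompleteSpace H]

/-- For `x` of norm at most one in a unital operator algebra `A ⊆ B(H)`, the element
`1 - x` is invertible in `A` iff `‖1 + x‖ < 2`. -/
theorem one_sub_invertible_iff_norm_one_add_lt_two
    (A : Set (H →L[ℂ] H)) (hA : IsClosedSubalgebraSet A)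
    (h1 : (1 : H →L[ℂ] H) ∈ A)
    (x : H →L[ℂ] H) (hxA : x ∈ A) (hx : ‖x‖ ≤ 1) :
    (∃ y ∈ A, y * (1 - x) = 1 ∧ (1 - x) * y = 1) ↔ ‖1 + x‖ < 2 := by
  obtain ⟨hAclosed, hA0, hAadd, hAsmul, hAmul⟩ := hA
  constructor
  · rintro ⟨y, hyA, hy1, hy2⟩
    rcases subsingleton_or_nontrivial H with hH | hH
    · have h0 : (1 + x : H →L[ℂ] H) = 0 := Subsingleton.elim _ _
      rw [h0, norm_zero]; norm_num
    · have h1n : ‖(1 : H →L[ℂ] H)‖ = 1 := ContinuousLinearMap.norm_id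
      have h1mx : ‖(1 : H →L[ℂ] H) - x‖ ≤ 2 := by
        calc ‖(1 : H →L[ℂ] H) - x‖ ≤ ‖(1 : H →L[ℂ] H)‖ + ‖x‖ := norm_sub_le _ _
          _ ≤ 2 := by rw [h1n]; linarith
      have hy0 : (1:ℝ)/2 ≤ ‖y‖ := by
        have := norm_mul_le y (1 - x)
        rw [hy1, h1n] at this
        nlinarith [norm_nonneg y, norm_nonneg ((1 : H →L[ℂ] H) - x)]
      have ht0 : (0:ℝ) < ‖y‖ := by linarith
      set t := ‖y‖ with htdef
      have key : ∀ ξ : H, ‖ξ‖ ≤ t * ‖((1 : H →L[ℂ] H) - x) ξ‖ := by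
        intro ξ
        have happ : y (((1 : H →L[ℂ] H) - x) ξ) = ξ := by
          have := congrFun (congrArg DFunLike.coe hy1) ξ
          simpa [ContinuousLinearMap.mul_apply] using this
        calc ‖ξ‖ = ‖y (((1 : H →L[ℂ] H) - x) ξ)‖ := by rw [happ]
          _ ≤ t * ‖((1 : H →L[ℂ] H) - x) ξ‖ := y.le_opNorm _
      have hCnn : (0:ℝ) ≤ 4 - 1 / t ^ 2 := by
        rw [sub_nonneg, div_le_iff₀ (by positivity)]
        nlinarith
      set C := Real.sqrt (4 - 1 / t ^ 2) with hCdef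
      have hC2 : C ^ 2 = 4 - 1 / t ^ 2 := Real.sq_sqrt hCnn
      have hle : ‖(1 : H →L[ℂ] H) + x‖ ≤ C := by
        refine ContinuousLinearMap.opNorm_le_bound _ (Real.sqrt_nonneg _) fun ξ => ?_
        have par := parallelogram_law_with_norm ℂ ξ (x ξ)
        have e1 : ((1 : H →L[ℂ] H) + x) ξ = ξ + x ξ := by
          simp [ContinuousLinearMap.add_apply]
        have e2 : ((1 : H →L[ℂ] H) - x) ξ = ξ - x ξ := by
          simp [ContinuousLinearMap.sub_apply]
        have hxξ : ‖x ξ‖ ≤ ‖ξ‖ := by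
          calc ‖x ξ‖ ≤ ‖x‖ * ‖ξ‖ := x.le_opNorm ξ
            _ ≤ ‖ξ‖ := by nlinarith [norm_nonneg ξ]
        have hkey := key ξ
        rw [e2] at hkey
        have hsq : ‖((1 : H →L[ℂ] H) + x) ξ‖ ^ 2 ≤ (C * ‖ξ‖) ^ 2 := by
          rw [e1, mul_pow, hC2]
          have hlow : ‖ξ‖ / t ≤ ‖ξ - x ξ‖ := by
            rw [div_le_iff₀ ht0, mul_comm]; exact hkey
          have h2 : (‖ξ‖ / t) ^ 2 ≤ ‖ξ - x ξ‖ ^ 2 := by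
            have : (0:ℝ) ≤ ‖ξ‖ / t := by positivity
            nlinarith
          have hdiv : (‖ξ‖ / t) ^ 2 = ‖ξ‖ ^ 2 / t ^ 2 := by ring
          rw [hdiv] at h2
          have ht2 : (0:ℝ) < t ^ 2 := by positivity
          have : (4 - 1 / t ^ 2) * ‖ξ‖ ^ 2 = 4 * ‖ξ‖ ^ 2 - ‖ξ‖ ^ 2 / t ^ 2 := by
            field_simp
          rw [this]
          nlinarith [norm_nonneg ξ, norm_nonneg (x ξ), norm_nonneg (ξ + x ξ), norm_nonneg (ξ - x ξ)]
        have hCξ : (0:ℝ) ≤ C * ‖ξ‖ := by positivity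
        exact le_of_pow_le_pow_left₀ two_ne_zero hCξ hsq
      have hClt : C < 2 := by
        rw [hCdef]
        rw [show (2:ℝ) = Real.sqrt 4 by
          rw [show (4:ℝ) = 2 ^ 2 by norm_num, Real.sqrt_sq (by norm_num)]]
        apply Real.sqrt_lt_sqrt hCnn
        have : (0:ℝ) < 1 / t ^ 2 := by positivity
        linarith
      linarith
  · intro h
    set z : H →L[ℂ] H := (2:ℂ)⁻¹ • (1 + x) with hzdef
    have hz : ‖z‖ < 1 := by
      rw [hzdef, norm_smul]
      have : ‖(2:ℂ)⁻¹‖ = 1/2 := by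
        rw [norm_inv]; norm_num
      rw [this]; linarith
    have hsum : Summable (fun n : ℕ => z ^ n) := summable_geometric_of_norm_lt_one hz
    set s := ∑' n : ℕ, z ^ n with hsdef
    have hzA : z ∈ A := hAsmul _ _ (hAadd _ h1 _ hxA)
    have hpow : ∀ n : ℕ, z ^ n ∈ A := by
      intro n
      induction n with
      | zero => simpa using h1
      | succ n ih => rw [pow_succ]; exact hAmul _ ih _ hzA
    have hpart : ∀ n : ℕ, (∑ i ∈ Finset.range n, z ^ i) ∈ A := by
      intro n
      induction n with
      | zero => simpa using hA0
      | succ n ih => rw [Finset.sum_range_succ]; exact hAadd _ ih _ (hpow n)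
    have hsA : s ∈ A :=
      hAclosed.mem_of_tendsto hsum.hasSum.tendsto_sum_nat
        (Filter.Eventually.of_forall hpart)
    have hs1 : s * (1 - z) = 1 := geom_series_mul_neg z hz
    have hs2 : (1 - z) * s = 1 := mul_neg_geom_series z hz
    have keyz : (1 : H →L[ℂ] H) - x = (2:ℂ) • ((1 : H →L[ℂ] H) - z) := by
      rw [hzdef, smul_sub, smul_smul]
      norm_num
      rw [two_smul]
      abel
    refine ⟨(2:ℂ)⁻¹ • s, hAsmul _ _ hsA, ?_, ?_⟩
    · rw [keyz, smul_mul_assoc, mul_smul_comm, smul_smul, hs1]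
      norm_num
    · rw [keyz, smul_mul_assoc, mul_smul_comm, smul_smul, hs2]
      norm_num
end

section
/- Let H be a complex Hilbert space, let A be a norm-closed subalgebra of B(H) (not assumed to contain the identity operator), and let x ∈ A with ‖x‖ ≤ 1. Then x is quasi-invertible in A (i.e. there exists y ∈ A with y x = x + y and x y = x + y) if and only if ‖1 + x‖ < 2, where 1 denotes the identity operator of B(H) and the norm is the operator norm. -/
variable {H : Type*} [NormedAddCommGroup H] [InnerProductSpace ℂ H] [CompleteSpace H]

lemma sum_mem_aux {A : Set (H →L[ℂ] H)} (h0 : (0 : H →L[ℂ] H) ∈ A)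
    (hadd : ∀ x ∈ A, ∀ y ∈ A, x + y ∈ A) (f : ℕ → H →L[ℂ] H) (hf : ∀ n, f n ∈ A) (n : ℕ) :
    ∑ i ∈ Finset.range n, f i ∈ A := by
  induction n with
  | zero => simpa using h0
  | succ n ih => rw [Finset.sum_range_succ]; exact hadd _ ih _ (hf n)

set_option maxHeartbeats 1000000 in
/-- For `x` of norm at most one in an operator algebra `A ⊆ B(H)` (not assumed unital),
`x` is quasi-invertible in `A` iff `‖1 + x‖ < 2`, where `1` is the identity of `B(H)`. -/
theorem quasi_invertible_iff_norm_one_add_lt_two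
    (A : Set (H →L[ℂ] H)) (hA : IsClosedSubalgebraSet A)
    (x : H →L[ℂ] H) (hxA : x ∈ A) (hx : ‖x‖ ≤ 1) :
    (∃ y ∈ A, y * x = x + y ∧ x * y = x + y) ↔ ‖(1 : H →L[ℂ] H) + x‖ < 2 := by
  constructor
  · rintro ⟨y, -, h1, h2⟩
    rcases subsingleton_or_nontrivial H with hH | hH
    · have hb : ‖(1 : H →L[ℂ] H) + x‖ ≤ 0 :=
        ContinuousLinearMap.opNorm_le_bound _ le_rfl (fun ξ => by
          rw [Subsingleton.elim ξ 0]; simp)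
      linarith
    · have hvu : ((1 : H →L[ℂ] H) - y) * (1 - x) = 1 := by
        rw [sub_mul, one_mul, mul_sub, mul_one, h1]; abel
      have hone : ‖(1 : H →L[ℂ] H)‖ = 1 := ContinuousLinearMap.norm_id
      have hne : ((1 : H →L[ℂ] H) - y) ≠ 0 := by
        intro h; rw [h, zero_mul] at hvu
        have := congrArg norm hvu; rw [hone, norm_zero] at this; linarith
      set c : ℝ := ‖(1 : H →L[ℂ] H) - y‖ with hc
      have hcpos : 0 < c := norm_pos_iff.mpr hne
      set d : ℝ := c⁻¹ with hd
      have hdpos : 0 < d := inv_pos.mpr hcpos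
      have hdc : d * c = 1 := inv_mul_cancel₀ hcpos.ne'
      have hd2 : d ≤ 2 := by
        have h1x : ‖(1 : H →L[ℂ] H) - x‖ ≤ 2 := by
          calc ‖(1 : H →L[ℂ] H) - x‖ ≤ ‖(1 : H →L[ℂ] H)‖ + ‖x‖ := norm_sub_le _ _
            _ ≤ 2 := by rw [hone]; linarith
        have : (1:ℝ) ≤ c * 2 := by
          calc (1:ℝ) = ‖((1 : H →L[ℂ] H) - y) * (1 - x)‖ := by rw [hvu, hone]
            _ ≤ c * ‖(1 : H →L[ℂ] H) - x‖ := norm_mul_le _ _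
            _ ≤ c * 2 := by nlinarith
        rw [hd, inv_le_iff_one_le_mul₀' hcpos]
        linarith [this]
      have hKnn : (0:ℝ) ≤ 4 - d ^ 2 := by nlinarith
      set K : ℝ := Real.sqrt (4 - d ^ 2) with hK
      have hKsq : K ^ 2 = 4 - d ^ 2 := Real.sq_sqrt hKnn
      have hbound : ‖(1 : H →L[ℂ] H) + x‖ ≤ K := by
        apply ContinuousLinearMap.opNorm_le_bound _ (Real.sqrt_nonneg _)
        intro ξ
        have hlow : d * ‖ξ‖ ≤ ‖((1 : H →L[ℂ] H) - x) ξ‖ := by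
          have hxi : ‖ξ‖ ≤ c * ‖((1 : H →L[ℂ] H) - x) ξ‖ := by
            calc ‖ξ‖ = ‖((1 : H →L[ℂ] H) - y) (((1 : H →L[ℂ] H) - x) ξ)‖ := by
                  rw [← ContinuousLinearMap.mul_apply, hvu, ContinuousLinearMap.one_apply]
              _ ≤ c * ‖((1 : H →L[ℂ] H) - x) ξ‖ := ContinuousLinearMap.le_opNorm _ _
          calc d * ‖ξ‖ ≤ d * (c * ‖((1 : H →L[ℂ] H) - x) ξ‖) := by nlinarith
            _ = ‖((1 : H →L[ℂ] H) - x) ξ‖ := by rw [← mul_assoc, hdc, one_mul]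
        have hpar : ‖ξ + x ξ‖ * ‖ξ + x ξ‖ + ‖ξ - x ξ‖ * ‖ξ - x ξ‖
            = 2 * (‖ξ‖ * ‖ξ‖ + ‖x ξ‖ * ‖x ξ‖) := by
              have h := parallelogram_law_with_norm ℂ ξ (x ξ); simpa only [sq] using h
        have hxξ : ‖x ξ‖ ≤ ‖ξ‖ := by
          calc ‖x ξ‖ ≤ ‖x‖ * ‖ξ‖ := ContinuousLinearMap.le_opNorm _ _
            _ ≤ ‖ξ‖ := by nlinarith [norm_nonneg ξ]
        have happ1 : ((1 : H →L[ℂ] H) + x) ξ = ξ + x ξ := rfl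
        have happ2 : ((1 : H →L[ℂ] H) - x) ξ = ξ - x ξ := rfl
        rw [happ1]
        rw [happ2] at hlow
        have hsq : ‖ξ + x ξ‖ ^ 2 ≤ (K * ‖ξ‖) ^ 2 := by
          have h3 : (K * ‖ξ‖) ^ 2 = (4 - d ^ 2) * ‖ξ‖ ^ 2 := by
            rw [mul_pow, hKsq]
          rw [h3]
          nlinarith [hpar, norm_nonneg ξ, norm_nonneg (ξ - x ξ), norm_nonneg (ξ + x ξ),
            mul_le_mul hlow hlow (by positivity) (norm_nonneg _),
            mul_le_mul hxξ hxξ (norm_nonneg _) (norm_nonneg _)]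
        calc ‖ξ + x ξ‖ = Real.sqrt (‖ξ + x ξ‖ ^ 2) := (Real.sqrt_sq (norm_nonneg _)).symm
          _ ≤ Real.sqrt ((K * ‖ξ‖) ^ 2) := Real.sqrt_le_sqrt hsq
          _ = K * ‖ξ‖ := Real.sqrt_sq (by positivity)
      have hKlt : K < 2 := by
        rw [hK, show (2:ℝ) = Real.sqrt 4 by
          rw [show (4:ℝ) = 2 ^ 2 by norm_num, Real.sqrt_sq (by norm_num)]]
        exact Real.sqrt_lt_sqrt hKnn (by nlinarith)
      linarith
  · intro h
    obtain ⟨hclosed, h0, hadd, hsmul, hmul⟩ := hA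
    set a : H →L[ℂ] H := (2⁻¹ : ℂ) • (1 + x) with ha
    have hna : ‖a‖ < 1 := by
      rw [ha, norm_smul]
      have : ‖(2⁻¹ : ℂ)‖ = 2⁻¹ := by norm_num
      rw [this]; linarith
    have hmem : ∀ n : ℕ, x * a ^ n ∈ A := by
      intro n; induction n with
      | zero => simpa using hxA
      | succ n ih =>
        have heq : x * a ^ (n + 1) = (2⁻¹ : ℂ) • (x * a ^ n + (x * a ^ n) * x) := by
          rw [pow_succ, ← mul_assoc, ha, mul_smul_comm, mul_add, mul_one]
        rw [heq]
        exact hsmul _ _ (hadd _ ih _ (hmul _ ih _ hxA))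
    have hnb : ∀ n : ℕ, ‖x * a ^ n‖ ≤ ‖x‖ * ‖a‖ ^ n := by
      intro n; induction n with
      | zero => simp
      | succ n ih =>
        calc ‖x * a ^ (n + 1)‖ = ‖(x * a ^ n) * a‖ := by rw [pow_succ, mul_assoc]
          _ ≤ ‖x * a ^ n‖ * ‖a‖ := norm_mul_le _ _
          _ ≤ (‖x‖ * ‖a‖ ^ n) * ‖a‖ := by nlinarith [norm_nonneg a]
          _ = ‖x‖ * ‖a‖ ^ (n + 1) := by ring
    have hsum : Summable (fun n : ℕ => x * a ^ n) := by
      apply Summable.of_norm_bounded ((summable_geometric_of_lt_one (norm_nonneg a) hna).mul_left ‖x‖) hnb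
    have hsum2 : Summable (fun n : ℕ => (-(2⁻¹ : ℂ)) • (x * a ^ n)) := hsum.const_smul _
    set y : H →L[ℂ] H := ∑' n : ℕ, (-(2⁻¹ : ℂ)) • (x * a ^ n) with hy
    have hyA : y ∈ A := by
      apply hclosed.mem_of_tendsto hsum2.hasSum.tendsto_sum_nat
      filter_upwards with n
      exact sum_mem_aux h0 hadd _ (fun i => hsmul _ _ (hmem i)) n
    have hga : Summable (fun n : ℕ => a ^ n) := summable_geometric_of_norm_lt_one hna
    set s : H →L[ℂ] H := ∑' n : ℕ, a ^ n with hs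
    have hys : y = (-(2⁻¹ : ℂ)) • (x * s) := by
      rw [hy, hsum.tsum_const_smul _, hga.tsum_mul_left x]
    have hsa1 : s * (1 - a) = 1 := geom_series_mul_neg a hna
    have hsa2 : (1 - a) * s = 1 := mul_neg_geom_series a hna
    have h1ma : (1 : H →L[ℂ] H) - a = (2⁻¹ : ℂ) • (1 - x) := by
      rw [ha]; module
    have hc2 : (2 : ℂ) * 2⁻¹ = 1 := by norm_num
    have hc2' : (2⁻¹ : ℂ) * 2 = 1 := by norm_num
    have hsx : s * ((1 : H →L[ℂ] H) - x) = (2 : ℂ) • 1 := by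
      have hh := hsa1
      rw [h1ma, mul_smul_comm] at hh
      calc s * ((1 : H →L[ℂ] H) - x)
          = ((2 : ℂ) * 2⁻¹) • (s * (1 - x)) := by rw [hc2, one_smul]
        _ = (2 : ℂ) • ((2⁻¹ : ℂ) • (s * (1 - x))) := by rw [smul_smul]
        _ = (2 : ℂ) • 1 := by rw [hh]
    have hxs : ((1 : H →L[ℂ] H) - x) * s = (2 : ℂ) • 1 := by
      have hh := hsa2
      rw [h1ma, smul_mul_assoc] at hh
      calc ((1 : H →L[ℂ] H) - x) * s
          = ((2 : ℂ) * 2⁻¹) • ((1 - x) * s) := by rw [hc2, one_smul]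
        _ = (2 : ℂ) • ((2⁻¹ : ℂ) • ((1 - x) * s)) := by rw [smul_smul]
        _ = (2 : ℂ) • 1 := by rw [hh]
    have hkey1 : x * (s * ((1 : H →L[ℂ] H) - x)) = (2 : ℂ) • x := by
      rw [hsx, mul_smul_comm, mul_one]
    have hkey2 : x * (((1 : H →L[ℂ] H) - x) * s) = (2 : ℂ) • x := by
      rw [hxs, mul_smul_comm, mul_one]
    refine ⟨y, hyA, ?_, ?_⟩
    · -- y * x = x + y
      have hsub : y * x - y = x := by
        rw [hys, smul_mul_assoc, ← smul_sub]
        rw [show x * s * x - x * s = -(x * (s * (1 - x))) by noncomm_ring]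
        rw [hkey1, smul_neg, smul_smul,
          show (-(2⁻¹ : ℂ)) * 2 = -1 by norm_num, neg_smul, one_smul, neg_neg]
      exact eq_add_of_sub_eq hsub
    · -- x * y = x + y
      have hsub : x * y - y = x := by
        rw [hys, mul_smul_comm, ← smul_sub]
        rw [show x * (x * s) - x * s = -(x * ((1 - x) * s)) by noncomm_ring]
        rw [hkey2, smul_neg, smul_smul,
          show (-(2⁻¹ : ℂ)) * 2 = -1 by norm_num, neg_smul, one_smul, neg_neg]
      exact eq_add_of_sub_eq hsub
end

section
/- Let H be a complex Hilbert space and let A be a norm-closed subalgebra of B(H) containing the identity operator 1. The following are equivalent: (i) for every a ∈ A which is not a scalar multiple of 1, the spectral radius of a is strictly less than ‖a‖; (ii) for every x ∈ A with ‖x‖ ≤ 1 and x ≠ 1, one has ‖1 + x‖ < 2; (iii) for every x ∈ A which is not a scalar multiple of 1, the numerical radius ν(x) := sup{ |⟨x ξ, ξ⟩| : ξ ∈ H, ‖ξ‖ = 1 } is strictly less than ‖x‖. -/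
open scoped ENNReal NNReal

variable {H : Type*} [NormedAddCommGroup H] [InnerProductSpace ℂ H] [CompleteSpace H]

/-- The numerical radius of a bounded operator `x` on a Hilbert space:
the supremum of `|⟨x ξ, ξ⟩|` over unit vectors `ξ`. -/
noncomputable def numericalRadius (x : H →L[ℂ] H) : ℝ :=
  sSup {r : ℝ | ∃ ξ : H, ‖ξ‖ = 1 ∧ r = ‖(inner ℂ (x ξ) ξ : ℂ)‖}

open scoped ComplexConjugate

set_option linter.unusedSectionVars false

lemma nr_bddAbove (x : H →L[ℂ] H) :
    BddAbove {r : ℝ | ∃ ξ : H, ‖ξ‖ = 1 ∧ r = ‖(inner ℂ (x ξ) ξ : ℂ)‖} := by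
  refine ⟨‖x‖, ?_⟩
  rintro r ⟨ξ, hξ, rfl⟩
  calc ‖(inner ℂ (x ξ) ξ : ℂ)‖ ≤ ‖x ξ‖ * ‖ξ‖ := norm_inner_le_norm _ _
    _ ≤ ‖x‖ * ‖ξ‖ * ‖ξ‖ := by gcongr; exact x.le_opNorm ξ
    _ = ‖x‖ := by rw [hξ]; ring

lemma exists_unit_norm_lt (f : H →L[ℂ] H) {t : ℝ} (ht0 : 0 ≤ t) (ht : t < ‖f‖) :
    ∃ ξ : H, ‖ξ‖ = 1 ∧ t < ‖f ξ‖ := by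
  by_contra hc
  push_neg at hc
  refine absurd (f.opNorm_le_bound ht0 ?_) (not_le.2 ht)
  intro ξ
  rcases eq_or_ne ξ 0 with rfl | hne
  · simp
  · have hn : ‖ξ‖ ≠ 0 := norm_ne_zero_iff.2 hne
    have hξ : ‖((‖ξ‖ : ℂ)⁻¹ • ξ : H)‖ = 1 := by
      rw [norm_smul, norm_inv, Complex.norm_real, Real.norm_eq_abs, abs_of_nonneg (norm_nonneg ξ)]
      field_simp
    have h2 := hc _ hξ
    rw [map_smul, norm_smul, norm_inv, Complex.norm_real, Real.norm_eq_abs,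
      abs_of_nonneg (norm_nonneg ξ)] at h2
    have : ‖f ξ‖ ≤ t * ‖ξ‖ := by
      rw [inv_mul_le_iff₀ (lt_of_le_of_ne (norm_nonneg ξ) (Ne.symm hn))] at h2
      linarith [h2]
    exact this

lemma mem_spectrum_of_approx (a : H →L[ℂ] H) (lam : ℂ)
    (h : ∀ ε > (0:ℝ), ∃ ξ : H, ‖ξ‖ = 1 ∧ ‖a ξ - lam • ξ‖ < ε) : lam ∈ spectrum ℂ a := by
  rw [spectrum.mem_iff]
  intro hu
  obtain ⟨u, hu⟩ := hu
  set b := ((↑u⁻¹ : H →L[ℂ] H)) with hb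
  have hbm : b * (algebraMap ℂ (H →L[ℂ] H) lam - a) = 1 := by rw [hb, ← hu]; exact u.inv_mul
  obtain ⟨ξ, hξ, hlt⟩ := h (1/(‖b‖+1)) (by positivity)
  have happ : (algebraMap ℂ (H →L[ℂ] H) lam - a) ξ = lam • ξ - a ξ := by
    simp [Algebra.algebraMap_eq_smul_one, ContinuousLinearMap.sub_apply,
      ContinuousLinearMap.smul_apply, ContinuousLinearMap.one_apply]
  have h2 : ‖(algebraMap ℂ (H →L[ℂ] H) lam - a) ξ‖ < 1/(‖b‖+1) := by
    rw [happ, ← norm_neg, neg_sub]; exact hlt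
  have h3 : b ((algebraMap ℂ (H →L[ℂ] H) lam - a) ξ) = ξ := by
    have := congrArg (fun g : H →L[ℂ] H => g ξ) hbm
    simpa using this
  have h4 : (1:ℝ) ≤ ‖b‖ * ‖(algebraMap ℂ (H →L[ℂ] H) lam - a) ξ‖ := by
    calc (1:ℝ) = ‖ξ‖ := hξ.symm
      _ = ‖b ((algebraMap ℂ (H →L[ℂ] H) lam - a) ξ)‖ := by rw [h3]
      _ ≤ ‖b‖ * ‖(algebraMap ℂ (H →L[ℂ] H) lam - a) ξ‖ := b.le_opNorm _
  have h5 : ‖b‖ * ‖(algebraMap ℂ (H →L[ℂ] H) lam - a) ξ‖ < ‖b‖ * (1/(‖b‖+1)) + 1/(‖b‖+1) := by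
    have := mul_le_mul_of_nonneg_left h2.le (norm_nonneg b)
    nlinarith [norm_nonneg b, norm_nonneg ((algebraMap ℂ (H →L[ℂ] H) lam - a) ξ)]
  have h6 : ‖b‖ * (1/(‖b‖+1)) + 1/(‖b‖+1) = 1 := by field_simp
  linarith

lemma nnnorm_le_spectralRadius_of_mem {a : H →L[ℂ] H} {k : ℂ} (hk : k ∈ spectrum ℂ a) :
    (‖k‖₊ : ℝ≥0∞) ≤ spectralRadius ℂ a :=
  le_iSup₂ (f := fun k (_ : k ∈ spectrum ℂ a) => (‖k‖₊ : ℝ≥0∞)) k hk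

lemma scalar_aux {c : ℂ} (hcnorm : ‖c‖ = 2) (hc1 : ‖c - 1‖ ≤ 1) : c = 2 := by
  have habs : ‖c‖ = 2 := by exact hcnorm
  have habs1 : ‖c - 1‖ ≤ 1 := by exact hc1
  have habs0 : (0:ℝ) ≤ ‖c - 1‖ := norm_nonneg _
  have e1 : c.re^2 + c.im^2 = 4 := by
    have h := Complex.sq_norm c
    rw [Complex.normSq_apply] at h
    nlinarith [habs]
  have e2 : (c.re - 1)^2 + c.im^2 <= 1 := by
    have h := Complex.sq_norm (c - 1)
    rw [Complex.normSq_apply] at h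
    simp only [Complex.sub_re, Complex.sub_im, Complex.one_re, Complex.one_im, sub_zero] at h
    nlinarith [habs1, habs0]
  have him : c.im = 0 := by nlinarith [sq_nonneg c.im, sq_nonneg (c.re - 2)]
  have hre : c.re = 2 := by nlinarith [sq_nonneg c.im, sq_nonneg (c.re - 2)]
  apply Complex.ext <;> simp [hre, him]

lemma nr_le_norm (x : H →L[ℂ] H) : numericalRadius x ≤ ‖x‖ := by
  apply Real.sSup_le _ (norm_nonneg x)
  rintro r ⟨ξ, hξ, rfl⟩
  calc ‖(inner ℂ (x ξ) ξ : ℂ)‖ ≤ ‖x ξ‖ * ‖ξ‖ := norm_inner_le_norm _ _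
    _ ≤ ‖x‖ * ‖ξ‖ * ‖ξ‖ := by gcongr; exact x.le_opNorm ξ
    _ = ‖x‖ := by rw [hξ]; ring

lemma norm_normalize {ξ : H} (hξ : ξ ≠ 0) : ‖((‖ξ‖ : ℂ)⁻¹ • ξ : H)‖ = 1 := by
  have hn : ‖ξ‖ ≠ 0 := norm_ne_zero_iff.2 hξ
  rw [norm_smul, norm_inv, Complex.norm_real, Real.norm_eq_abs, abs_of_nonneg (norm_nonneg ξ)]
  field_simp

lemma step12 (A : Set (H →L[ℂ] H))
    (hadd : ∀ x ∈ A, ∀ y ∈ A, x + y ∈ A)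
    (h1 : (1 : H →L[ℂ] H) ∈ A)
    (hi : ∀ a ∈ A, (∀ c : ℂ, a ≠ c • (1 : H →L[ℂ] H)) → spectralRadius ℂ a < (‖a‖₊ : ℝ≥0∞)) :
    ∀ x ∈ A, ‖x‖ ≤ 1 → x ≠ (1 : H →L[ℂ] H) → ‖1 + x‖ < 2 := by
  intro x hx hx1 hxne
  by_contra hge
  push_neg at hge
  have hnt : Nontrivial H := by
    by_contra hns
    rw [not_nontrivial_iff_subsingleton] at hns
    exact hxne (ContinuousLinearMap.ext fun ξ => Subsingleton.elim _ _)
  have hnorm1 : ‖(1 : H →L[ℂ] H)‖ = 1 := norm_one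
  have hle2 : ‖1 + x‖ ≤ 2 := by
    calc ‖1 + x‖ ≤ ‖(1 : H →L[ℂ] H)‖ + ‖x‖ := norm_add_le _ _
      _ ≤ 1 + 1 := by rw [hnorm1]; linarith
      _ = 2 := by norm_num
  have h2 : ‖1 + x‖ = 2 := le_antisymm hle2 hge
  have happrox : ∀ ε > (0:ℝ), ∃ ξ : H, ‖ξ‖ = 1 ∧ ‖(1 + x) ξ - (2:ℂ) • ξ‖ < ε := by
    intro ε hε
    set δ : ℝ := min 1 (ε^2/8) with hδdef
    have hδ0 : 0 < δ := lt_min one_pos (by positivity)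
    have hδ1 : δ ≤ 1 := min_le_left _ _
    have hδε : 4 * δ ≤ ε^2/2 := by
      have : δ ≤ ε^2/8 := min_le_right _ _
      linarith
    obtain ⟨ξ, hξ, hlt⟩ := exists_unit_norm_lt (1+x) (t := 2 - δ) (by linarith) (by rw [h2]; linarith)
    refine ⟨ξ, hξ, ?_⟩
    have h0 : (1+x) ξ = ξ + x ξ := by
      simp [ContinuousLinearMap.add_apply, ContinuousLinearMap.one_apply]
    have hxξ : ‖x ξ‖ ≤ 1 := le_trans (x.unit_le_opNorm ξ (le_of_eq hξ)) hx1
    have e1 : ‖ξ + x ξ‖^2 = 1 + 2*Complex.re (inner ℂ ξ (x ξ) : ℂ) + ‖x ξ‖^2 := by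
      have h := norm_add_sq (𝕜 := ℂ) ξ (x ξ)
      rw [hξ] at h
      simpa using h
    have e2 : ‖x ξ - ξ‖^2 = ‖x ξ‖^2 - 2*Complex.re (inner ℂ (x ξ) ξ : ℂ) + 1 := by
      have h := norm_sub_sq (𝕜 := ℂ) (x ξ) ξ
      rw [hξ] at h
      simpa using h
    have e3 : Complex.re (inner ℂ ξ (x ξ) : ℂ) = Complex.re (inner ℂ (x ξ) ξ : ℂ) := by
      rw [← inner_conj_symm (x ξ) ξ, Complex.conj_re]
    have h4 : (2 - δ)^2 < ‖ξ + x ξ‖^2 := by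
      rw [h0] at hlt
      nlinarith [norm_nonneg (ξ + x ξ)]
    have hxξ2 : ‖x ξ‖^2 ≤ 1 := by nlinarith [norm_nonneg (x ξ)]
    have key : ‖x ξ - ξ‖^2 < 4*δ := by nlinarith [sq_nonneg δ]
    have hsq : ‖x ξ - ξ‖^2 < ε^2 := by linarith
    have hfin : ‖x ξ - ξ‖ < ε := by nlinarith [norm_nonneg (x ξ - ξ)]
    have heq : (1 + x) ξ - (2:ℂ) • ξ = x ξ - ξ := by
      rw [h0]
      module
    rw [heq]
    exact hfin
  have hmem2 : (2:ℂ) ∈ spectrum ℂ (1 + x) := mem_spectrum_of_approx _ _ happrox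
  have ha : (1 + x) ∈ A := hadd 1 h1 x hx
  have hnonscalar : ∀ c : ℂ, (1 + x) ≠ c • (1 : H →L[ℂ] H) := by
    intro c hc
    have hxc : x = (c - 1) • (1 : H →L[ℂ] H) := by
      rw [sub_smul, one_smul, ← hc]; abel
    have hcnorm : ‖c‖ = 2 := by
      rw [hc, norm_smul, hnorm1, mul_one] at h2; exact h2
    have hc1 : ‖c - 1‖ ≤ 1 := by
      rw [hxc, norm_smul, hnorm1, mul_one] at hx1; exact hx1
    have hc2 : c = 2 := scalar_aux hcnorm hc1
    rw [hc2] at hxc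
    apply hxne
    rw [hxc]
    norm_num
  have hlt := hi (1+x) ha hnonscalar
  have hub : (‖(1+x : H →L[ℂ] H)‖₊ : ℝ≥0∞) ≤ spectralRadius ℂ (1 + x) := by
    have h2' : ‖(1+x : H →L[ℂ] H)‖₊ = ‖(2:ℂ)‖₊ := by
      ext
      rw [coe_nnnorm, coe_nnnorm, h2]
      simp
    rw [h2']
    exact nnnorm_le_spectralRadius_of_mem hmem2
  exact absurd hlt (not_lt.2 hub)

lemma step23 (A : Set (H →L[ℂ] H))
    (hsmul : ∀ (c : ℂ), ∀ x ∈ A, c • x ∈ A)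
    (hii : ∀ x ∈ A, ‖x‖ ≤ 1 → x ≠ (1 : H →L[ℂ] H) → ‖1 + x‖ < 2) :
    ∀ x ∈ A, (∀ c : ℂ, x ≠ c • (1 : H →L[ℂ] H)) → numericalRadius x < ‖x‖ := by
  intro x hx hns
  by_contra hge
  push_neg at hge
  have hx0 : x ≠ 0 := fun h => hns 0 (by rw [h]; simp)
  have hM : 0 < ‖x‖ := norm_pos_iff.2 hx0
  have hnu : numericalRadius x = ‖x‖ := le_antisymm (nr_le_norm x) hge
  set M := ‖x‖ with hMdef
  set S : Set ℂ := {v : ℂ | ∃ ξ : H, ‖ξ‖ = 1 ∧ v = (inner ℂ (x ξ) ξ : ℂ)} with hSdef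
  have hSne : S.Nonempty := by
    obtain ⟨ξ0, hξ0⟩ : ∃ ξ0 : H, x ξ0 ≠ 0 := by
      by_contra hc
      push_neg at hc
      exact hx0 (ContinuousLinearMap.ext fun ξ => by rw [hc ξ]; rfl)
    have hξ0' : ξ0 ≠ 0 := fun h => hξ0 (by rw [h, map_zero])
    exact ⟨_, (‖ξ0‖ : ℂ)⁻¹ • ξ0, norm_normalize hξ0', rfl⟩
  have hSb : S ⊆ Metric.closedBall 0 M := by
    rintro v ⟨ξ, hξ, rfl⟩
    rw [Metric.mem_closedBall, dist_zero_right]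
    calc ‖(inner ℂ (x ξ) ξ : ℂ)‖ ≤ ‖x ξ‖ * ‖ξ‖ := norm_inner_le_norm _ _
      _ ≤ ‖x‖ * ‖ξ‖ * ‖ξ‖ := by gcongr; exact x.le_opNorm ξ
      _ = M := by rw [hξ]; ring
  have hKc : IsCompact (closure S) :=
    IsCompact.of_isClosed_subset (isCompact_closedBall (0:ℂ) M) isClosed_closure
      (closure_minimal hSb Metric.isClosed_closedBall)
  obtain ⟨c, hcK, hcmax⟩ := hKc.exists_isMaxOn hSne.closure continuous_norm.continuousOn
  have hcub : ∀ v ∈ S, ‖v‖ ≤ ‖c‖ := fun v hv => hcmax (subset_closure hv)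
  have hcM : ‖c‖ = M := by
    apply le_antisymm
    · have := closure_minimal hSb Metric.isClosed_closedBall hcK
      rwa [Metric.mem_closedBall, dist_zero_right] at this
    · rw [← hnu]
      refine Real.sSup_le ?_ (norm_nonneg c)
      rintro r ⟨ξ, hξ, rfl⟩
      exact hcub _ ⟨ξ, hξ, rfl⟩
  have hc0 : c ≠ 0 := by
    intro h
    rw [h, norm_zero] at hcM
    exact hM.ne hcM
  set μ : ℂ := c / ((M : ℂ)^2) with hμdef
  have hMC : ((M : ℂ)) ≠ 0 := by
    simp only [ne_eq, Complex.ofReal_eq_zero]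
    exact hM.ne'
  have hμnorm : ‖μ‖ = M⁻¹ := by
    rw [hμdef, norm_div, hcM, norm_pow, Complex.norm_real, Real.norm_eq_abs,
      abs_of_nonneg hM.le]
    field_simp
  have hμ0 : μ ≠ 0 := div_ne_zero hc0 (pow_ne_zero _ hMC)
  set y : H →L[ℂ] H := μ • x with hydef
  have hyA : y ∈ A := hsmul μ x hx
  have hynorm : ‖y‖ = 1 := by
    rw [hydef, norm_smul, hμnorm, ← hMdef]
    field_simp
  have hyne : y ≠ 1 := by
    intro h
    refine hns μ⁻¹ ?_
    have : x = μ⁻¹ • y := by rw [hydef, smul_smul, inv_mul_cancel₀ hμ0, one_smul]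
    rw [this, h]
  have hμc : (starRingEnd ℂ) μ * c = 1 := by
    have h1 : (starRingEnd ℂ) μ = (starRingEnd ℂ) c / ((M : ℂ)^2) := by
      rw [hμdef, map_div₀, map_pow, Complex.conj_ofReal]
    rw [h1, div_mul_eq_mul_div, RCLike.conj_mul, hcM]
    rw [div_eq_one_iff_eq (pow_ne_zero _ hMC)]
    norm_cast
  have hge2 : ∀ ε > (0:ℝ), 2 - ε ≤ ‖1 + y‖ := by
    intro ε hε
    obtain ⟨v, hvS, hdist⟩ := Metric.mem_closure_iff.1 hcK (ε * M) (by positivity)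
    obtain ⟨ξ, hξ, rfl⟩ := hvS
    have hv1 : ((1 + y) : H →L[ℂ] H) ξ = ξ + μ • (x ξ) := by
      simp [hydef, ContinuousLinearMap.add_apply, ContinuousLinearMap.one_apply]
    have hinner : (inner ℂ ((1+y) ξ) ξ : ℂ)
        = 1 + (starRingEnd ℂ) μ * (inner ℂ (x ξ) ξ : ℂ) := by
      rw [hv1, inner_add_left, inner_smul_left, inner_self_eq_norm_sq_to_K, hξ]
      norm_num
    have hkey : 2 - ε ≤ ‖(1 + (starRingEnd ℂ) μ * (inner ℂ (x ξ) ξ : ℂ) : ℂ)‖ := by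
      have hrw : (1 + (starRingEnd ℂ) μ * (inner ℂ (x ξ) ξ : ℂ) : ℂ)
          = 2 + (starRingEnd ℂ) μ * ((inner ℂ (x ξ) ξ : ℂ) - c) := by
        rw [mul_sub, hμc]; ring
      rw [hrw]
      have h1 : ‖(starRingEnd ℂ) μ * ((inner ℂ (x ξ) ξ : ℂ) - c)‖ < ε := by
        rw [norm_mul, RCLike.norm_conj, hμnorm]
        have hd : ‖(inner ℂ (x ξ) ξ : ℂ) - c‖ < ε * M := by
          rw [← dist_eq_norm, dist_comm]
          exact hdist
        calc M⁻¹ * ‖(inner ℂ (x ξ) ξ : ℂ) - c‖ < M⁻¹ * (ε * M) := by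
              exact mul_lt_mul_of_pos_left hd (inv_pos.2 hM)
          _ = ε := by field_simp
      have h2 := norm_sub_norm_le (2 : ℂ) (-((starRingEnd ℂ) μ * ((inner ℂ (x ξ) ξ : ℂ) - c)))
      rw [sub_neg_eq_add, norm_neg] at h2
      have h3 : ‖(2:ℂ)‖ = 2 := by norm_num
      linarith
    calc 2 - ε ≤ ‖(inner ℂ ((1+y) ξ) ξ : ℂ)‖ := by rw [hinner]; exact hkey
      _ ≤ ‖(1+y) ξ‖ * ‖ξ‖ := norm_inner_le_norm _ _
      _ = ‖(1+y) ξ‖ := by rw [hξ, mul_one]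
      _ ≤ ‖1 + y‖ := (1+y).unit_le_opNorm ξ (le_of_eq hξ)
  have h2 : (2:ℝ) ≤ ‖1 + y‖ := by
    by_contra h
    push_neg at h
    have := hge2 ((2 - ‖1 + y‖)/2) (by linarith)
    linarith
  exact absurd (hii y hyA hynorm.le hyne) (not_lt.2 h2)

lemma step31 (A : Set (H →L[ℂ] H))
    (hiii : ∀ x ∈ A, (∀ c : ℂ, x ≠ c • (1 : H →L[ℂ] H)) → numericalRadius x < ‖x‖) :
    ∀ a ∈ A, (∀ c : ℂ, a ≠ c • (1 : H →L[ℂ] H)) → spectralRadius ℂ a < (‖a‖₊ : ℝ≥0∞) := by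
  intro a ha hns
  have hνlt : numericalRadius a < ‖a‖ := hiii a ha hns
  by_contra hge
  have ha0 : a ≠ 0 := fun h => hns 0 (by rw [h]; simp)
  have hM : 0 < ‖a‖ := norm_pos_iff.2 ha0
  have hnt : Nontrivial H := by
    by_contra h
    rw [not_nontrivial_iff_subsingleton] at h
    exact ha0 (ContinuousLinearMap.ext fun ξ => Subsingleton.elim _ _)
  haveI : Nontrivial (H →L[ℂ] H) := ⟨a, 0, ha0⟩
  have hle : spectralRadius ℂ a ≤ (‖a‖₊ : ℝ≥0∞) := spectrum.spectralRadius_le_nnnorm (𝕜 := ℂ) a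
  have heq : spectralRadius ℂ a = (‖a‖₊ : ℝ≥0∞) := le_antisymm hle (not_lt.1 hge)
  obtain ⟨lam, hlam, hlamnorm⟩ := spectrum.exists_nnnorm_eq_spectralRadius a
  have hlamA : ‖lam‖ = ‖a‖ := by
    rw [heq] at hlamnorm
    have h := ENNReal.coe_inj.1 hlamnorm
    calc ‖lam‖ = ((‖lam‖₊ : ℝ≥0) : ℝ) := (coe_nnnorm lam).symm
      _ = ((‖a‖₊ : ℝ≥0) : ℝ) := by rw [h]
      _ = ‖a‖ := coe_nnnorm a
  by_cases hbb : ∃ r > (0:ℝ), ∀ ξ : H, r * ‖ξ‖ ≤ ‖a ξ - lam • ξ‖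
  · obtain ⟨r, hr, hrb⟩ := hbb
    set f : H →L[ℂ] H := a - lam • (1 : H →L[ℂ] H) with hfdef
    have hfx : ∀ ξ : H, f ξ = a ξ - lam • ξ := by
      intro ξ
      simp [hfdef, ContinuousLinearMap.sub_apply, ContinuousLinearMap.smul_apply,
        ContinuousLinearMap.one_apply]
    have hanti : AntilipschitzWith (⟨r, hr.le⟩ : ℝ≥0)⁻¹ f := by
      apply f.antilipschitz_of_bound
      intro ξ
      have h1 := hrb ξ
      rw [hfx]
      change ‖ξ‖ ≤ r⁻¹ * ‖a ξ - lam • ξ‖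
      calc ‖ξ‖ = r⁻¹ * (r * ‖ξ‖) := by field_simp
        _ ≤ r⁻¹ * ‖a ξ - lam • ξ‖ := by gcongr
    have hnotunit : ¬ IsUnit f := by
      intro hu
      refine (spectrum.mem_iff.1 hlam) ?_
      have hf : algebraMap ℂ (H →L[ℂ] H) lam - a = -f := by
        rw [hfdef, neg_sub, Algebra.algebraMap_eq_smul_one]
      rw [hf]
      exact hu.neg
    have hinj : Function.Injective f := hanti.injective
    have hnsurj : ¬ Function.Surjective f := fun hs =>
      hnotunit (ContinuousLinearMap.isUnit_iff_bijective.2 ⟨hinj, hs⟩)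
    have hclosed : IsClosed (Set.range f) := hanti.isClosed_range f.uniformContinuous
    set K : Submodule ℂ H := LinearMap.range (f : H →ₗ[ℂ] H) with hKdef
    have hKclosed : IsClosed (K : Set H) := by
      have heq2 : (K : Set H) = Set.range f := by
        ext v
        simp [hKdef, LinearMap.mem_range]
      rw [heq2]
      exact hclosed
    haveI : CompleteSpace K := hKclosed.completeSpace_coe
    have hKne : K ≠ ⊤ := by
      intro h
      apply hnsurj
      intro v
      have hv : v ∈ K := h ▸ Submodule.mem_top
      obtain ⟨w, hw⟩ := hv
      exact ⟨w, hw⟩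
    have hKo : Kᗮ ≠ ⊥ := fun h => hKne (Submodule.orthogonal_eq_bot_iff.1 h)
    obtain ⟨ξ0, hξ0K, hξ0⟩ := Submodule.exists_mem_ne_zero_of_ne_bot hKo
    set ξ : H := (‖ξ0‖ : ℂ)⁻¹ • ξ0 with hξdef
    have hξ : ‖ξ‖ = 1 := norm_normalize hξ0
    have hξK : ξ ∈ Kᗮ := Submodule.smul_mem _ _ hξ0K
    have hfξ : (inner ℂ (f ξ) ξ : ℂ) = 0 := by
      have hmem : f ξ ∈ K := ⟨ξ, rfl⟩
      exact (Submodule.mem_orthogonal K ξ).1 hξK (f ξ) hmem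
    have hinner : (inner ℂ (a ξ) ξ : ℂ) = conj lam := by
      have h1 : (inner ℂ (a ξ - lam • ξ) ξ : ℂ) = 0 := by rw [← hfx]; exact hfξ
      rw [inner_sub_left, inner_smul_left, inner_self_eq_norm_sq_to_K, hξ] at h1
      norm_num at h1
      linear_combination h1
    have hbig : ‖a‖ ≤ numericalRadius a := by
      have h2 : ‖(inner ℂ (a ξ) ξ : ℂ)‖ = ‖a‖ := by
        rw [hinner, RCLike.norm_conj, hlamA]
      rw [← h2]
      exact le_csSup (nr_bddAbove a) ⟨ξ, hξ, rfl⟩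
    linarith
  · push_neg at hbb
    set ε : ℝ := ‖a‖ - numericalRadius a with hεdef
    have hε : 0 < ε := by rw [hεdef]; linarith
    obtain ⟨ξ, hξlt⟩ := hbb ε hε
    have hξ0 : ξ ≠ 0 := by
      intro h
      rw [h] at hξlt
      simp at hξlt
    set η : H := (‖ξ‖ : ℂ)⁻¹ • ξ with hηdef
    have hη : ‖η‖ = 1 := norm_normalize hξ0
    have hdiff : ‖a η - lam • η‖ < ε := by
      have heq3 : a η - lam • η = (‖ξ‖ : ℂ)⁻¹ • (a ξ - lam • ξ) := by
        rw [hηdef, map_smul, smul_sub, smul_comm]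
      rw [heq3, norm_smul, norm_inv, Complex.norm_real, Real.norm_eq_abs,
        abs_of_nonneg (norm_nonneg ξ)]
      have hn0 : 0 < ‖ξ‖ := norm_pos_iff.2 hξ0
      rw [inv_mul_lt_iff₀ hn0]
      linarith [hξlt]
    have hinner2 : ‖(inner ℂ (a η) η : ℂ) - conj lam‖ < ε := by
      have heq4 : (inner ℂ (a η) η : ℂ) - conj lam = (inner ℂ (a η - lam • η) η : ℂ) := by
        rw [inner_sub_left, inner_smul_left, inner_self_eq_norm_sq_to_K, hη]
        norm_num
      rw [heq4]
      calc ‖(inner ℂ (a η - lam • η) η : ℂ)‖ ≤ ‖a η - lam • η‖ * ‖η‖ := norm_inner_le_norm _ _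
        _ = ‖a η - lam • η‖ := by rw [hη, mul_one]
        _ < ε := hdiff
    have hlow : ‖a‖ - ε < ‖(inner ℂ (a η) η : ℂ)‖ := by
      have h4 := norm_sub_norm_le (conj lam : ℂ) ((conj lam : ℂ) - (inner ℂ (a η) η : ℂ))
      have h5 : (conj lam : ℂ) - ((conj lam : ℂ) - (inner ℂ (a η) η : ℂ)) = (inner ℂ (a η) η : ℂ) := by
        ring
      rw [h5, RCLike.norm_conj, hlamA] at h4
      have h6 : ‖(conj lam : ℂ) - (inner ℂ (a η) η : ℂ)‖ = ‖(inner ℂ (a η) η : ℂ) - conj lam‖ := by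
        rw [← norm_neg, neg_sub]
      rw [h6] at h4
      linarith
    have hub : ‖(inner ℂ (a η) η : ℂ)‖ ≤ numericalRadius a :=
      le_csSup (nr_bddAbove a) ⟨η, hη, rfl⟩
    rw [hεdef] at hlow
    linarith


/-- For a unital operator algebra `A ⊆ B(H)`, the following are equivalent:
every element which is not a scalar multiple of `1` has spectral radius strictly less than
its norm; every `x ∈ Ball(A)` with `x ≠ 1` satisfies `‖1 + x‖ < 2`; every element which is
not a scalar multiple of `1` has numerical radius strictly less than its norm. -/
theorem tfae_spectral_norm_numerical
    (A : Set (H →L[ℂ] H)) (hA : IsClosedSubalgebraSet A)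
    (h1 : (1 : H →L[ℂ] H) ∈ A) :
    List.TFAE
      [∀ a ∈ A, (∀ c : ℂ, a ≠ c • (1 : H →L[ℂ] H)) →
          spectralRadius ℂ a < (‖a‖₊ : ℝ≥0∞),
       ∀ x ∈ A, ‖x‖ ≤ 1 → x ≠ (1 : H →L[ℂ] H) → ‖1 + x‖ < 2,
       ∀ x ∈ A, (∀ c : ℂ, x ≠ c • (1 : H →L[ℂ] H)) → numericalRadius x < ‖x‖] := by
  obtain ⟨hAc, h0, hadd, hsmul, hmul⟩ := hA
  tfae_have 1 → 2
  | hi => step12 A hadd h1 hi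
  tfae_have 2 → 3
  | hii => step23 A hsmul hii
  tfae_have 3 → 1
  | hiii => step31 A hiii
  tfae_finish
end

section
/- Let K be a complex Hilbert space and let (T_k)_{k ∈ ℕ} be a sequence of invertible bounded operators on K with T_0 = id_K. Let H be the ℓ²-direct sum of countably many copies of K, and for j ∈ ℕ let T_{0j} ∈ B(H) be the bounded operator sending (ξ_n)_{n ∈ ℕ} to the vector whose 0-th entry is T_j ξ_j and whose other entries are 0. Then for every n ∈ ℕ and all scalars α_0, …, α_n ∈ ℂ one has ‖Σ_{k=0}^n α_k T_{0k}‖² = ‖Σ_{k=0}^n |α_k|² T_k T_k^*‖, where the first norm is in B(H) and the second in B(K). Consequently, for n ≤ m, ‖Σ_{k=0}^n α_k T_{0k}‖ ≤ ‖Σ_{k=0}^m α_k T_{0k}‖ (so (T_{0k})_k is a monotone basic sequence). -/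
noncomputable section

set_option linter.unusedSectionVars false
set_option maxHeartbeats 1000000

variable {K : Type*} [NormedAddCommGroup K] [InnerProductSpace ℂ K] [CompleteSpace K]

open scoped InnerProductSpace

private lemma mul_conj_norm_sq (z : ℂ) : z * (starRingEnd ℂ) z = ((‖z‖ ^ 2 : ℝ) : ℂ) := by
  rw [Complex.mul_conj]; norm_cast
  exact Complex.normSq_eq_norm_sq z ▸ (Complex.sq_norm z).symm

/-- coordinates of a finite sum of singles -/
private lemma lp_sum_single_apply (N : ℕ) (f : ℕ → K) (ξ' : lp (fun _ : ℕ => K) 2)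
    (hξ' : ξ' = ∑ k ∈ Finset.range N, lp.single 2 k (f k)) (j : ℕ) :
    ξ' j = if j ∈ Finset.range N then f j else 0 := by
  rw [hξ', lp.coeFn_sum, Finset.sum_apply]
  by_cases hj : j ∈ Finset.range N
  · rw [if_pos hj, Finset.sum_eq_single j
      (fun k _ hk => lp.single_apply_ne (E := fun _ : ℕ => K) 2 k (f k) (Ne.symm hk))
      (fun h => absurd hj h)]
    exact lp.single_apply_self (E := fun _ : ℕ => K) 2 j (f j)
  · rw [if_neg hj]
    refine Finset.sum_eq_zero fun k hk => ?_
    exact lp.single_apply_ne (E := fun _ : ℕ => K) 2 k (f k) (fun hjk => hj (by rwa [hjk]))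

/-- norm of a finite sum of singles -/
private lemma lp_sum_single_norm_sq (N : ℕ) (f : ℕ → K) :
    ‖∑ k ∈ Finset.range N, lp.single (E := fun _ : ℕ => K) 2 k (f k)‖ ^ 2
      = ∑ k ∈ Finset.range N, ‖f k‖ ^ 2 := by
  have := lp.norm_sum_single (E := fun _ : ℕ => K) (p := 2) (by norm_num) f (Finset.range N)
  simpa [ENNReal.toReal_ofNat, Real.rpow_natCast] using this

private lemma lp_norm_sq_eq_tsum (ξ : lp (fun _ : ℕ => K) 2) :
    ‖ξ‖ ^ 2 = ∑' i, ‖ξ i‖ ^ 2 := by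
  have := lp.norm_rpow_eq_tsum (E := fun _ : ℕ => K) (p := 2) (by norm_num) ξ
  simpa [ENNReal.toReal_ofNat, Real.rpow_natCast] using this

private lemma lp_sum_norm_sq_le (ξ : lp (fun _ : ℕ => K) 2) (N : ℕ) :
    ∑ k ∈ Finset.range N, ‖ξ k‖ ^ 2 ≤ ‖ξ‖ ^ 2 := by
  rw [lp_norm_sq_eq_tsum]
  refine Summable.sum_le_tsum _ (fun i _ => by positivity) ?_
  have := (lp.hasSum_norm (E := fun _ : ℕ => K) (p := 2) (by norm_num) ξ).summable
  simpa [ENNReal.toReal_ofNat, Real.rpow_natCast] using this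

/-- the action of `S = ∑ α k • T0j k` -/
private lemma S_apply (T : ℕ → K →L[ℂ] K)
    (T0j : ℕ → (lp (fun _ : ℕ => K) 2 →L[ℂ] lp (fun _ : ℕ => K) 2))
    (hT0j : ∀ j (ξ : lp (fun _ : ℕ => K) 2) (n : ℕ),
      (T0j j ξ) n = if n = 0 then T j (ξ j) else 0)
    (α : ℕ → ℂ) (N : ℕ) (ξ : lp (fun _ : ℕ => K) 2) :
    (∑ k ∈ Finset.range N, α k • T0j k) ξ
      = lp.single 2 0 (∑ k ∈ Finset.range N, α k • T k (ξ k)) := by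
  apply lp.ext
  funext m
  have h1 : ((∑ k ∈ Finset.range N, α k • T0j k) ξ : ∀ _ : ℕ, K) m
      = ∑ k ∈ Finset.range N, α k • ((T0j k ξ : ∀ _ : ℕ, K) m) := by
    rw [ContinuousLinearMap.sum_apply, lp.coeFn_sum, Finset.sum_apply]
    refine Finset.sum_congr rfl fun k _ => ?_
    rw [ContinuousLinearMap.smul_apply, lp.coeFn_smul]; rfl
  rw [h1]
  by_cases hm : m = 0
  · subst hm
    rw [lp.single_apply_self]
    refine Finset.sum_congr rfl fun k _ => ?_
    rw [hT0j, if_pos rfl]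
  · rw [(lp.single_apply_ne (E := fun _ : ℕ => K) 2 0 _ hm : _)]
    refine Finset.sum_eq_zero fun k _ => ?_
    rw [hT0j, if_neg hm, smul_zero]

private lemma B_inner (T : ℕ → K →L[ℂ] K) (α : ℕ → ℂ) (N : ℕ) (x : K) :
    ⟪x, (∑ k ∈ Finset.range N,
        (‖α k‖ ^ 2) • (T k ∘L ContinuousLinearMap.adjoint (T k))) x⟫_ℂ
      = ((∑ k ∈ Finset.range N,
          ‖α k‖ ^ 2 * ‖ContinuousLinearMap.adjoint (T k) x‖ ^ 2 : ℝ) : ℂ) := by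
  rw [ContinuousLinearMap.sum_apply, inner_sum]
  have key : ∀ k ∈ Finset.range N,
      ⟪x, ((‖α k‖ ^ 2) • (T k ∘L ContinuousLinearMap.adjoint (T k))) x⟫_ℂ
        = ((‖α k‖ ^ 2 * ‖ContinuousLinearMap.adjoint (T k) x‖ ^ 2 : ℝ) : ℂ) := by
    intro k _
    rw [ContinuousLinearMap.smul_apply, ← Complex.coe_smul, inner_smul_right,
      ContinuousLinearMap.comp_apply, ← ContinuousLinearMap.adjoint_inner_left,
      inner_self_eq_norm_sq_to_K]
    push_cast
    norm_num
  rw [Finset.sum_congr rfl key]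
  push_cast
  ring

/-- For the matrix units `T_{0j} = E_{0j} ⊗ T_j` on `H = ℓ²(ℕ, K)` coming from a sequence
of invertible operators `T_k` with `T_0 = 1`, one has
`‖Σ_{k≤n} α_k T_{0k}‖² = ‖Σ_{k≤n} |α_k|² T_k T_k^*‖`; consequently `(T_{0k})` is a
monotone basic sequence. -/
theorem matrix_units_row_norm_and_monotone
    (T Tinv : ℕ → K →L[ℂ] K)
    (hT0 : T 0 = 1)
    (hTinv₁ : ∀ k, T k ∘L Tinv k = 1) (hTinv₂ : ∀ k, Tinv k ∘L T k = 1)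
    (T0j : ℕ → (lp (fun _ : ℕ => K) 2 →L[ℂ] lp (fun _ : ℕ => K) 2))
    (hT0j : ∀ j (ξ : lp (fun _ : ℕ => K) 2) (n : ℕ),
      (T0j j ξ) n = if n = 0 then T j (ξ j) else 0) :
    (∀ (n : ℕ) (α : ℕ → ℂ),
      ‖∑ k ∈ Finset.range (n + 1), α k • T0j k‖ ^ 2 =
        ‖∑ k ∈ Finset.range (n + 1),
          (‖α k‖ ^ 2) • (T k ∘L ContinuousLinearMap.adjoint (T k))‖) ∧
    (∀ (n m : ℕ) (α : ℕ → ℂ), n ≤ m →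
      ‖∑ k ∈ Finset.range (n + 1), α k • T0j k‖ ≤
        ‖∑ k ∈ Finset.range (m + 1), α k • T0j k‖) := by
  -- norm of S ξ
  have hSnorm : ∀ (α : ℕ → ℂ) (N : ℕ) (ξ : lp (fun _ : ℕ => K) 2),
      ‖(∑ k ∈ Finset.range N, α k • T0j k) ξ‖
        = ‖∑ k ∈ Finset.range N, α k • T k (ξ k)‖ := by
    intro α N ξ
    rw [S_apply T T0j hT0j]
    exact lp.norm_single (E := fun _ : ℕ => K) (by norm_num) 0 (∑ k ∈ Finset.range N, α k • T k (ξ k))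
  -- the quadratic form bound
  have hq_le : ∀ (α : ℕ → ℂ) (N : ℕ) (x : K),
      ∑ k ∈ Finset.range N, ‖α k‖ ^ 2 * ‖ContinuousLinearMap.adjoint (T k) x‖ ^ 2
        ≤ ‖∑ k ∈ Finset.range N,
            (‖α k‖ ^ 2) • (T k ∘L ContinuousLinearMap.adjoint (T k))‖ * ‖x‖ ^ 2 := by
    intro α N x
    set B := ∑ k ∈ Finset.range N,
        (‖α k‖ ^ 2) • (T k ∘L ContinuousLinearMap.adjoint (T k)) with hB
    set q : ℝ := ∑ k ∈ Finset.range N,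
        ‖α k‖ ^ 2 * ‖ContinuousLinearMap.adjoint (T k) x‖ ^ 2 with hq
    have h1 : (q : ℂ) = ⟪x, B x⟫_ℂ := (B_inner T α N x).symm
    calc q ≤ ‖(q : ℂ)‖ := by
            rw [Complex.norm_real]; exact le_abs_self q
      _ = ‖⟪x, B x⟫_ℂ‖ := by rw [h1]
      _ ≤ ‖x‖ * ‖B x‖ := norm_inner_le_norm x (B x)
      _ ≤ ‖x‖ * (‖B‖ * ‖x‖) := by
            gcongr; exact B.le_opNorm x
      _ = ‖B‖ * ‖x‖ ^ 2 := by ring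
  -- part 1
  have part1 : ∀ (N : ℕ) (α : ℕ → ℂ),
      ‖∑ k ∈ Finset.range N, α k • T0j k‖ ^ 2 =
        ‖∑ k ∈ Finset.range N,
          (‖α k‖ ^ 2) • (T k ∘L ContinuousLinearMap.adjoint (T k))‖ := by
    intro N α
    set S := ∑ k ∈ Finset.range N, α k • T0j k with hS
    set B := ∑ k ∈ Finset.range N,
        (‖α k‖ ^ 2) • (T k ∘L ContinuousLinearMap.adjoint (T k)) with hB
    -- upper bound : ‖S ξ‖ ≤ √‖B‖ ‖ξ‖
    have hup : ‖S‖ ≤ Real.sqrt ‖B‖ := by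
      refine ContinuousLinearMap.opNorm_le_bound _ (Real.sqrt_nonneg _) fun ξ => ?_
      set v := ∑ k ∈ Finset.range N, α k • T k (ξ k) with hv
      have hSv : ‖S ξ‖ = ‖v‖ := hSnorm α N ξ
      have key : ‖v‖ ^ 2 ≤ ‖ξ‖ * (Real.sqrt ‖B‖ * ‖v‖) := by
        have h1 : ((‖v‖ : ℂ)) ^ 2 = ⟪v, v⟫_ℂ := (inner_self_eq_norm_sq_to_K v).symm
        have h2 : ⟪v, v⟫_ℂ = ∑ k ∈ Finset.range N,
            (starRingEnd ℂ) (α k) * ⟪ξ k, ContinuousLinearMap.adjoint (T k) v⟫_ℂ := by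
          rw [hv, sum_inner]
          refine Finset.sum_congr rfl fun k _ => ?_
          rw [inner_smul_left, ContinuousLinearMap.adjoint_inner_right]
        have h3 : ‖v‖ ^ 2 ≤ ∑ k ∈ Finset.range N,
            ‖ξ k‖ * (‖α k‖ * ‖ContinuousLinearMap.adjoint (T k) v‖) := by
          have hvv : ‖v‖ ^ 2 = ‖⟪v, v⟫_ℂ‖ := by
            rw [← h1]; simp
          rw [hvv, h2]
          refine (norm_sum_le _ _).trans ?_
          refine Finset.sum_le_sum fun k _ => ?_
          rw [norm_mul, RCLike.norm_conj]
          calc ‖α k‖ * ‖⟪ξ k, ContinuousLinearMap.adjoint (T k) v⟫_ℂ‖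
              ≤ ‖α k‖ * (‖ξ k‖ * ‖ContinuousLinearMap.adjoint (T k) v‖) := by
                gcongr; exact norm_inner_le_norm _ _
            _ = ‖ξ k‖ * (‖α k‖ * ‖ContinuousLinearMap.adjoint (T k) v‖) := by ring
        have h4 : ∑ k ∈ Finset.range N,
            ‖ξ k‖ * (‖α k‖ * ‖ContinuousLinearMap.adjoint (T k) v‖)
            ≤ Real.sqrt (∑ k ∈ Finset.range N, ‖ξ k‖ ^ 2)
              * Real.sqrt (∑ k ∈ Finset.range N,
                  (‖α k‖ * ‖ContinuousLinearMap.adjoint (T k) v‖) ^ 2) :=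
          Real.sum_mul_le_sqrt_mul_sqrt _ _ _
        have h5 : Real.sqrt (∑ k ∈ Finset.range N, ‖ξ k‖ ^ 2) ≤ ‖ξ‖ := by
          rw [show ‖ξ‖ = Real.sqrt (‖ξ‖ ^ 2) from (Real.sqrt_sq (norm_nonneg ξ)).symm]
          exact Real.sqrt_le_sqrt (lp_sum_norm_sq_le ξ N)
        have h6 : Real.sqrt (∑ k ∈ Finset.range N,
              (‖α k‖ * ‖ContinuousLinearMap.adjoint (T k) v‖) ^ 2)
            ≤ Real.sqrt ‖B‖ * ‖v‖ := by
          have hle : ∑ k ∈ Finset.range N,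
              (‖α k‖ * ‖ContinuousLinearMap.adjoint (T k) v‖) ^ 2
              ≤ ‖B‖ * ‖v‖ ^ 2 := by
            calc ∑ k ∈ Finset.range N,
                (‖α k‖ * ‖ContinuousLinearMap.adjoint (T k) v‖) ^ 2
                = ∑ k ∈ Finset.range N,
                  ‖α k‖ ^ 2 * ‖ContinuousLinearMap.adjoint (T k) v‖ ^ 2 :=
                  Finset.sum_congr rfl fun k _ => by ring
              _ ≤ ‖B‖ * ‖v‖ ^ 2 := hq_le α N v
          calc Real.sqrt (∑ k ∈ Finset.range N,
                (‖α k‖ * ‖ContinuousLinearMap.adjoint (T k) v‖) ^ 2)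
              ≤ Real.sqrt (‖B‖ * ‖v‖ ^ 2) := Real.sqrt_le_sqrt hle
            _ = Real.sqrt ‖B‖ * ‖v‖ := by
                rw [Real.sqrt_mul (norm_nonneg B), Real.sqrt_sq (norm_nonneg v)]
        calc ‖v‖ ^ 2 ≤ ∑ k ∈ Finset.range N,
              ‖ξ k‖ * (‖α k‖ * ‖ContinuousLinearMap.adjoint (T k) v‖) := h3
          _ ≤ Real.sqrt (∑ k ∈ Finset.range N, ‖ξ k‖ ^ 2)
              * Real.sqrt (∑ k ∈ Finset.range N,
                  (‖α k‖ * ‖ContinuousLinearMap.adjoint (T k) v‖) ^ 2) := h4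
          _ ≤ ‖ξ‖ * (Real.sqrt ‖B‖ * ‖v‖) :=
              mul_le_mul h5 h6 (Real.sqrt_nonneg _) (norm_nonneg ξ)
      rw [hSv]
      nlinarith [norm_nonneg v, norm_nonneg ξ, Real.sqrt_nonneg ‖B‖,
        mul_nonneg (Real.sqrt_nonneg ‖B‖) (norm_nonneg ξ)]
    -- lower bound : ‖B‖ ≤ ‖S‖ ^ 2
    have hlow : ‖B‖ ≤ ‖S‖ ^ 2 := by
      have hBx : ∀ x : K, ‖B x‖ ≤ ‖S‖ * (Real.sqrt ‖B‖ * ‖x‖) := by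
        intro x
        set f : ℕ → K := fun k => (starRingEnd ℂ) (α k) • (ContinuousLinearMap.adjoint (T k) x)
          with hf
        set ξx : lp (fun _ : ℕ => K) 2 := ∑ k ∈ Finset.range N, lp.single 2 k (f k) with hξx
        have hcoord : ∀ j, ξx j = if j ∈ Finset.range N then f j else 0 :=
          lp_sum_single_apply N f ξx hξx
        have hSξx : S ξx = lp.single 2 0 (B x) := by
          rw [hS, S_apply T T0j hT0j]
          congr 1
          rw [hB, ContinuousLinearMap.sum_apply]
          refine Finset.sum_congr rfl fun k hk => ?_
          rw [hcoord k, if_pos hk, hf]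
          simp only
          rw [map_smul, smul_smul, mul_conj_norm_sq, Complex.coe_smul,
            ContinuousLinearMap.smul_apply, ContinuousLinearMap.comp_apply]
        have hξxnorm : ‖ξx‖ ^ 2 = ∑ k ∈ Finset.range N,
            ‖α k‖ ^ 2 * ‖ContinuousLinearMap.adjoint (T k) x‖ ^ 2 := by
          rw [hξx, lp_sum_single_norm_sq]
          refine Finset.sum_congr rfl fun k _ => ?_
          rw [hf]
          simp only
          rw [norm_smul, RCLike.norm_conj]
          ring
        have hBxnorm : ‖B x‖ = ‖S ξx‖ := by
          rw [hSξx]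
          exact (lp.norm_single (E := fun _ : ℕ => K) (p := 2) (by norm_num) 0 (B x)).symm
        calc ‖B x‖ = ‖S ξx‖ := hBxnorm
          _ ≤ ‖S‖ * ‖ξx‖ := S.le_opNorm ξx
          _ ≤ ‖S‖ * (Real.sqrt ‖B‖ * ‖x‖) := by
              gcongr
              rw [show ‖ξx‖ = Real.sqrt (‖ξx‖ ^ 2) from (Real.sqrt_sq (norm_nonneg ξx)).symm,
                hξxnorm]
              calc Real.sqrt (∑ k ∈ Finset.range N,
                    ‖α k‖ ^ 2 * ‖ContinuousLinearMap.adjoint (T k) x‖ ^ 2)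
                  ≤ Real.sqrt (‖B‖ * ‖x‖ ^ 2) := Real.sqrt_le_sqrt (hq_le α N x)
                _ = Real.sqrt ‖B‖ * ‖x‖ := by
                    rw [Real.sqrt_mul (norm_nonneg B), Real.sqrt_sq (norm_nonneg x)]
      have hBle : ‖B‖ ≤ ‖S‖ * Real.sqrt ‖B‖ := by
        refine ContinuousLinearMap.opNorm_le_bound _
          (mul_nonneg (norm_nonneg S) (Real.sqrt_nonneg _)) fun x => ?_
        calc ‖B x‖ ≤ ‖S‖ * (Real.sqrt ‖B‖ * ‖x‖) := hBx x
          _ = ‖S‖ * Real.sqrt ‖B‖ * ‖x‖ := by ring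
      nlinarith [Real.sq_sqrt (norm_nonneg B), Real.sqrt_nonneg ‖B‖, norm_nonneg S,
        sq_nonneg (‖S‖ - Real.sqrt ‖B‖)]
    refine le_antisymm ?_ hlow
    calc ‖S‖ ^ 2 ≤ Real.sqrt ‖B‖ ^ 2 := pow_le_pow_left₀ (norm_nonneg S) hup 2
      _ = ‖B‖ := Real.sq_sqrt (norm_nonneg B)
  constructor
  · intro n α; exact part1 (n + 1) α
  · -- monotonicity
    intro n m α hnm
    set Sn := ∑ k ∈ Finset.range (n + 1), α k • T0j k with hSn
    set Sm := ∑ k ∈ Finset.range (m + 1), α k • T0j k with hSm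
    refine ContinuousLinearMap.opNorm_le_bound _ (norm_nonneg Sm) fun ξ => ?_
    set ξ' : lp (fun _ : ℕ => K) 2 := ∑ k ∈ Finset.range (n + 1),
        lp.single 2 k (ξ k) with hξ'
    have hcoord : ∀ j, ξ' j = if j ∈ Finset.range (n + 1) then ξ j else 0 :=
      lp_sum_single_apply (n + 1) (fun k => ξ k) ξ' hξ'
    have hsum : ∑ k ∈ Finset.range (m + 1), α k • T k (ξ' k)
        = ∑ k ∈ Finset.range (n + 1), α k • T k (ξ k) := by
      have e1 : ∑ k ∈ Finset.range (n + 1), (α k • T k (ξ' k))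
          = ∑ k ∈ Finset.range (m + 1), (α k • T k (ξ' k)) := by
        refine Finset.sum_subset (Finset.range_subset_range.mpr (by omega)) ?_
        intro k _ hk
        rw [hcoord k, if_neg hk, map_zero, smul_zero]
      have e2 : ∑ k ∈ Finset.range (n + 1), (α k • T k (ξ' k))
          = ∑ k ∈ Finset.range (n + 1), (α k • T k (ξ k)) := by
        refine Finset.sum_congr rfl fun k hk => ?_
        rw [hcoord k, if_pos hk]
      rw [← e1, e2]
    have h1 : ‖Sn ξ‖ = ‖Sm ξ'‖ := by
      rw [hSn, hSm, hSnorm α (n + 1) ξ, hSnorm α (m + 1) ξ', hsum]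
    have h2 : ‖ξ'‖ ≤ ‖ξ‖ := by
      have hsq : ‖ξ'‖ ^ 2 ≤ ‖ξ‖ ^ 2 := by
        rw [hξ', lp_sum_single_norm_sq]
        exact lp_sum_norm_sq_le ξ (n + 1)
      exact (pow_le_pow_iff_left₀ (norm_nonneg ξ') (norm_nonneg ξ) two_ne_zero).mp hsq
    calc ‖Sn ξ‖ = ‖Sm ξ'‖ := h1
      _ ≤ ‖Sm‖ * ‖ξ'‖ := Sm.le_opNorm ξ'
      _ ≤ ‖Sm‖ * ‖ξ‖ := mul_le_mul_of_nonneg_left h2 (norm_nonneg Sm)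
end
end

section
/- Let A be a commutative complex Banach algebra (not necessarily unital) such that A has no nonzero annihilators, i.e. if x ∈ A satisfies x a = 0 for all a ∈ A then x = 0. Suppose A contains a sequence (q_k)_{k ∈ ℕ} of nonzero idempotents with q_j q_k = 0 for j ≠ k, such that q_k a ∈ ℂ q_k for all a ∈ A and all k, and such that the linear span of ⋃_k {a q_k : a ∈ A} is norm-dense in A. Then: (1) A is semisimple, i.e. its Jacobson radical {x ∈ A : x is quasi-invertible and a x is quasi-invertible for every a ∈ A} equals {0}; and (2) A is an annihilator algebra: for every norm-closed ideal J of A with J ≠ A there exists a nonzero b ∈ A with b j = 0 for all j ∈ J. -/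
/-- A commutative complex Banach algebra with no nonzero annihilators, possessing a sequence
of nonzero mutually orthogonal algebraically minimal idempotents `q_k` such that the span of
`⋃_k A q_k` is dense, is semisimple and is an annihilator algebra. -/
theorem commutative_algebra_with_minimal_idempotents_semisimple_annihilator
    {A : Type*} [NonUnitalNormedCommRing A] [NormedSpace ℂ A]
    [IsScalarTower ℂ A A] [SMulCommClass ℂ A A] [CompleteSpace A]
    (hann : ∀ x : A, (∀ a : A, x * a = 0) → x = 0)
    (q : ℕ → A)
    (hqne : ∀ k, q k ≠ 0)
    (hqidem : ∀ k, q k * q k = q k)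
    (hqorth : ∀ j k, j ≠ k → q j * q k = 0)
    (hqmin : ∀ (k : ℕ) (a : A), ∃ c : ℂ, q k * a = c • q k)
    (hdense : Dense
      (↑(Submodule.span ℂ {y : A | ∃ (k : ℕ) (a : A), y = a * q k}) : Set A)) :
    -- (1) `A` is semisimple: the Jacobson radical is zero
    (∀ x : A, (∃ y : A, x + y = x * y) → (∀ a : A, ∃ y : A, a * x + y = a * x * y) →
      x = 0) ∧
    -- (2) `A` is an annihilator algebra
    (∀ J : Set A, IsClosed J → (0 : A) ∈ J → (∀ x ∈ J, ∀ y ∈ J, x + y ∈ J) →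
      (∀ (c : ℂ), ∀ x ∈ J, c • x ∈ J) → (∀ a : A, ∀ j ∈ J, a * j ∈ J) →
      J ≠ Set.univ → ∃ b : A, b ≠ 0 ∧ ∀ j ∈ J, b * j = 0) := by
  -- If x annihilates every q k, then x = 0.
  have hmulzero : ∀ x : A, (∀ k, x * q k = 0) → x = 0 := by
    intro x hx
    apply hann
    intro a
    have hset : ∀ s ∈ (Submodule.span ℂ {y : A | ∃ (k : ℕ) (a : A), y = a * q k}),
        x * s = 0 := by
      intro s hs
      induction hs using Submodule.span_induction with
      | mem y hy =>
          obtain ⟨k, b, rfl⟩ := hy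
          rw [← mul_assoc, mul_comm x b, mul_assoc, hx, mul_zero]
      | zero => simp
      | add y z _ _ hy hz => rw [mul_add, hy, hz, add_zero]
      | smul c y _ hy => rw [mul_smul_comm, hy, smul_zero]
    have hclosed : IsClosed {s : A | x * s = 0} :=
      isClosed_eq (continuous_const.mul continuous_id) continuous_const
    have hsub : closure (↑(Submodule.span ℂ {y : A | ∃ (k : ℕ) (a : A), y = a * q k}) : Set A)
        ⊆ {s : A | x * s = 0} := closure_minimal hset hclosed
    rw [hdense.closure_eq] at hsub
    exact hsub (Set.mem_univ a)
  constructor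
  · intro x _ hx2
    apply hmulzero
    intro k
    obtain ⟨c, hc⟩ := hqmin k x
    by_cases hc0 : c = 0
    · rw [mul_comm, hc, hc0, zero_smul]
    · exfalso
      obtain ⟨y, hy⟩ := hx2 (c⁻¹ • q k)
      have hax : (c⁻¹ • q k) * x = q k := by
        rw [smul_mul_assoc, hc, smul_smul, inv_mul_cancel₀ hc0, one_smul]
      rw [hax] at hy
      have h1 : q k * (q k + y) = q k * (q k * y) := by rw [hy]
      rw [mul_add, hqidem k, ← mul_assoc, hqidem k] at h1
      have h2 : q k + q k * y = 0 + q k * y := by rw [zero_add]; exact h1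
      exact hqne k (add_right_cancel h2)
  · intro J hJclosed hJ0 hJadd hJsmul hJmul hJne
    by_cases hall : ∀ k, q k ∈ J
    · exfalso
      apply hJne
      let p : Submodule ℂ A :=
        { carrier := J
          add_mem' := fun hx hy => hJadd _ hx _ hy
          zero_mem' := hJ0
          smul_mem' := fun c x hx => hJsmul c x hx }
      have hsub : (↑(Submodule.span ℂ {y : A | ∃ (k : ℕ) (a : A), y = a * q k}) : Set A) ⊆ J := by
        refine Submodule.span_le (p := p) |>.mpr ?_
        rintro y ⟨k, a, rfl⟩
        exact hJmul a _ (hall k)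
      have hcl : closure (↑(Submodule.span ℂ {y : A | ∃ (k : ℕ) (a : A), y = a * q k}) : Set A)
          ⊆ J := closure_minimal hsub hJclosed
      rw [hdense.closure_eq] at hcl
      exact Set.eq_univ_of_univ_subset hcl
    · push_neg at hall
      obtain ⟨k, hk⟩ := hall
      refine ⟨q k, hqne k, fun j hj => ?_⟩
      obtain ⟨c, hc⟩ := hqmin k j
      by_cases hc0 : c = 0
      · rw [hc, hc0, zero_smul]
      · exfalso
        apply hk
        have hq : q k = c⁻¹ • (q k * j) := by
          rw [hc, smul_smul, inv_mul_cancel₀ hc0, one_smul]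
        rw [hq]
        exact hJsmul _ _ (hJmul (q k) j hj)
end

section
/- Let H be a complex Hilbert space, let A be a commutative norm-closed subalgebra of B(H) with no nonzero annihilators (if x ∈ A satisfies x a = 0 for all a ∈ A then x = 0), and let (q_k)_{k ∈ ℕ} be a sequence of nonzero mutually orthogonal self-adjoint projections in A (q_k = q_k² = q_k^*, q_j q_k = 0 for j ≠ k) such that q_k a ∈ ℂ q_k for all a ∈ A and all k, and such that the linear span of ⋃_k {a q_k : a ∈ A} is norm-dense in A. Then there is an isometric algebra isomorphism from A onto c₀, the Banach algebra of complex sequences converging to 0 with pointwise operations and the supremum norm, which sends each q_k to the indicator sequence of {k}. -/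
open scoped ZeroAtInfty InnerProductSpace

variable {H : Type*} [NormedAddCommGroup H] [InnerProductSpace ℂ H] [CompleteSpace H]

/-- A commutative operator algebra with no nonzero annihilators, generated (as a closed
linear span) by `⋃_k A q_k` for a sequence of nonzero mutually orthogonal algebraically
minimal self-adjoint projections `q_k`, is isometrically isomorphic to `c₀`, with `q_k`
corresponding to the indicator sequence of `{k}`. -/
theorem commutative_operator_algebra_iso_c0
    (A : Set (H →L[ℂ] H)) (hA : IsClosedSubalgebraSet A)
    (hcomm : ∀ x ∈ A, ∀ y ∈ A, x * y = y * x)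
    (hann : ∀ x ∈ A, (∀ a ∈ A, x * a = 0) → x = 0)
    (q : ℕ → H →L[ℂ] H)
    (hqA : ∀ k, q k ∈ A)
    (hqne : ∀ k, q k ≠ 0)
    (hqsa : ∀ k, IsSelfAdjoint (q k))
    (hqidem : ∀ k, q k * q k = q k)
    (hqorth : ∀ j k, j ≠ k → q j * q k = 0)
    (hqmin : ∀ (k : ℕ), ∀ a ∈ A, ∃ c : ℂ, q k * a = c • q k)
    (hdense : A ⊆ closure
      (↑(Submodule.span ℂ {y : H →L[ℂ] H | ∃ (k : ℕ), ∃ a ∈ A, y = a * q k}) :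
        Set (H →L[ℂ] H))) :
    ∃ φ : (H →L[ℂ] H) → C₀(ℕ, ℂ),
      (∀ x ∈ A, ‖φ x‖ = ‖x‖) ∧
      (∀ x ∈ A, ∀ y ∈ A, φ (x + y) = φ x + φ y) ∧
      (∀ (c : ℂ), ∀ x ∈ A, φ (c • x) = c • φ x) ∧
      (∀ x ∈ A, ∀ y ∈ A, φ (x * y) = φ x * φ y) ∧
      (∀ x ∈ A, ∀ y ∈ A, φ x = φ y → x = y) ∧
      (∀ f : C₀(ℕ, ℂ), ∃ x ∈ A, φ x = f) ∧
      (∀ k n : ℕ, φ (q k) n = if n = k then 1 else 0) := by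
  classical
  obtain ⟨hclosed, h0, hadd, hsmul, hmul⟩ := hA
  -- coefficient functionals
  set c : ℕ → (H →L[ℂ] H) → ℂ := fun k x =>
    if h : ∃ μ : ℂ, q k * x = μ • q k then h.choose else 0 with hcdef
  have huniq : ∀ (k : ℕ) (μ ν : ℂ), μ • q k = ν • q k → μ = ν := by
    intro k μ ν h
    have h1 : (μ - ν) • q k = 0 := by rw [sub_smul, h, sub_self]
    rcases smul_eq_zero.mp h1 with h2 | h2
    · exact sub_eq_zero.mp h2
    · exact absurd h2 (hqne k)
  have hcval : ∀ (k : ℕ) (x : H →L[ℂ] H) (μ : ℂ), q k * x = μ • q k → c k x = μ := by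
    intro k x μ h
    have hex : ∃ ν : ℂ, q k * x = ν • q k := ⟨μ, h⟩
    have hspec := hex.choose_spec
    simp only [hcdef, dif_pos hex]
    exact huniq k _ _ (hspec.symm.trans h)
  have hspec : ∀ (k : ℕ), ∀ x ∈ A, q k * x = c k x • q k := by
    intro k x hx
    obtain ⟨μ, hμ⟩ := hqmin k x hx
    rw [hcval k x μ hμ]; exact hμ
  -- norm of each projection is 1
  have hqk1 : ∀ k, ‖q k‖ = 1 := by
    intro k
    have h1 : ‖star (q k) * q k‖ = ‖q k‖ * ‖q k‖ := CStarRing.norm_star_mul_self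
    rw [(hqsa k).star_eq, hqidem k] at h1
    have h2 : ‖q k‖ ≠ 0 := norm_ne_zero_iff.mpr (hqne k)
    have := mul_left_cancel₀ h2 (by rw [mul_one, ← h1] : ‖q k‖ * 1 = ‖q k‖ * ‖q k‖)
    exact this.symm
  -- self-adjointness in inner-product terms
  have hipq : ∀ (j k : ℕ) (u w : H), ⟪q j u, q k w⟫_ℂ = ⟪u, (q j * q k) w⟫_ℂ := by
    intro j k u w
    have hadj : q j u = (ContinuousLinearMap.adjoint (q j)) u := by
      rw [← ContinuousLinearMap.star_eq_adjoint, (hqsa j).star_eq]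
    rw [hadj, ContinuousLinearMap.adjoint_inner_left]
    rfl
  -- norm-squared of a sum of pairwise orthogonal vectors
  have hdiag : ∀ (F : Finset ℕ) (a : ℕ → H),
      (∀ j ∈ F, ∀ k ∈ F, j ≠ k → ⟪a j, a k⟫_ℂ = 0) →
      ‖∑ k ∈ F, a k‖ ^ 2 = ∑ k ∈ F, ‖a k‖ ^ 2 := by
    intro F a ha
    have hinner : ⟪∑ j ∈ F, a j, ∑ k ∈ F, a k⟫_ℂ = ∑ k ∈ F, ⟪a k, a k⟫_ℂ := by
      rw [sum_inner]
      refine Finset.sum_congr rfl fun j hj => ?_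
      rw [inner_sum]
      exact Finset.sum_eq_single_of_mem j hj fun k hk hkj => ha j hj k hk (Ne.symm hkj)
    calc ‖∑ k ∈ F, a k‖ ^ 2 = RCLike.re ⟪∑ j ∈ F, a j, ∑ k ∈ F, a k⟫_ℂ := norm_sq_eq_re_inner _
      _ = ∑ k ∈ F, RCLike.re ⟪a k, a k⟫_ℂ := by rw [hinner, map_sum]
      _ = ∑ k ∈ F, ‖a k‖ ^ 2 := Finset.sum_congr rfl fun k _ => (norm_sq_eq_re_inner _).symm
  -- Bessel-type estimate
  have hbessel : ∀ (F : Finset ℕ) (v : H), ∑ k ∈ F, ‖q k v‖ ^ 2 ≤ ‖v‖ ^ 2 := by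
    intro F v
    have hP2 : (∑ j ∈ F, q j) * (∑ k ∈ F, q k) = ∑ k ∈ F, q k := by
      rw [Finset.sum_mul]
      refine Finset.sum_congr rfl fun j hj => ?_
      rw [Finset.mul_sum,
        Finset.sum_eq_single_of_mem j hj fun k hk hne => hqorth j k (Ne.symm hne), hqidem j]
    have hPsum : (∑ k ∈ F, q k) v = ∑ k ∈ F, q k v := by
      simp [ContinuousLinearMap.sum_apply]
    have hortho : ∀ j ∈ F, ∀ k ∈ F, j ≠ k → ⟪q j v, q k v⟫_ℂ = 0 := by
      intro j _ k _ hjk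
      rw [hipq j k v v, hqorth j k hjk]
      simp
    have heq : ‖(∑ k ∈ F, q k) v‖ ^ 2 = ∑ k ∈ F, ‖q k v‖ ^ 2 := by
      rw [hPsum]; exact hdiag F (fun k => q k v) hortho
    -- ‖P v‖ ≤ ‖v‖
    have hPle : ‖(∑ k ∈ F, q k) v‖ ≤ ‖v‖ := by
      set P : H →L[ℂ] H := ∑ k ∈ F, q k with hP
      have hPadj : ∀ u w : H, ⟪P u, P w⟫_ℂ = ⟪u, (P * P) w⟫_ℂ := by
        intro u w
        have hPsa : ContinuousLinearMap.adjoint P = P := by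
          rw [← ContinuousLinearMap.star_eq_adjoint, hP, star_sum]
          exact Finset.sum_congr rfl fun k _ => (hqsa k).star_eq
        calc ⟪P u, P w⟫_ℂ = ⟪(ContinuousLinearMap.adjoint P) u, P w⟫_ℂ := by rw [hPsa]
          _ = ⟪u, P (P w)⟫_ℂ := ContinuousLinearMap.adjoint_inner_left _ _ _
          _ = ⟪u, (P * P) w⟫_ℂ := rfl
      have h1 : ‖P v‖ ^ 2 = RCLike.re ⟪v, P v⟫_ℂ := by
        rw [norm_sq_eq_re_inner (𝕜 := ℂ) (P v), hPadj v v, hP2]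
      have h2 : RCLike.re ⟪v, P v⟫_ℂ ≤ ‖v‖ * ‖P v‖ :=
        le_trans (RCLike.re_le_norm _) (norm_inner_le_norm v (P v))
      nlinarith [norm_nonneg (P v), norm_nonneg v]
    calc ∑ k ∈ F, ‖q k v‖ ^ 2 = ‖(∑ k ∈ F, q k) v‖ ^ 2 := heq.symm
      _ ≤ ‖v‖ ^ 2 := by nlinarith [norm_nonneg ((∑ k ∈ F, q k) v), norm_nonneg v]
  -- the key norm estimate
  have hkey : ∀ (F : Finset ℕ) (lam : ℕ → ℂ) (m : ℝ), 0 ≤ m →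
      (∀ k ∈ F, ‖lam k‖ ≤ m) → ‖∑ k ∈ F, lam k • q k‖ ≤ m := by
    intro F lam m hm hlam
    refine ContinuousLinearMap.opNorm_le_bound _ hm fun v => ?_
    have happ : (∑ k ∈ F, lam k • q k) v = ∑ k ∈ F, lam k • q k v := by
      simp [ContinuousLinearMap.sum_apply]
    have hortho : ∀ j ∈ F, ∀ k ∈ F, j ≠ k → ⟪lam j • q j v, lam k • q k v⟫_ℂ = 0 := by
      intro j _ k _ hjk
      rw [inner_smul_left, inner_smul_right, hipq j k v v, hqorth j k hjk]
      simp
    have h1 : ‖(∑ k ∈ F, lam k • q k) v‖ ^ 2 = ∑ k ∈ F, ‖lam k‖ ^ 2 * ‖q k v‖ ^ 2 := by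
      rw [happ, hdiag F _ hortho]
      exact Finset.sum_congr rfl fun k _ => by rw [norm_smul, mul_pow]
    have h2 : ∑ k ∈ F, ‖lam k‖ ^ 2 * ‖q k v‖ ^ 2 ≤ m ^ 2 * ∑ k ∈ F, ‖q k v‖ ^ 2 := by
      rw [Finset.mul_sum]
      refine Finset.sum_le_sum fun k hk => ?_
      exact mul_le_mul_of_nonneg_right
        (pow_le_pow_left₀ (norm_nonneg _) (hlam k hk) 2) (sq_nonneg _)
    have h3 : ‖(∑ k ∈ F, lam k • q k) v‖ ^ 2 ≤ (m * ‖v‖) ^ 2 := by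
      have hb := hbessel F v
      calc ‖(∑ k ∈ F, lam k • q k) v‖ ^ 2 ≤ m ^ 2 * ∑ k ∈ F, ‖q k v‖ ^ 2 := h1 ▸ h2
        _ ≤ m ^ 2 * ‖v‖ ^ 2 := by nlinarith [sq_nonneg m]
        _ = (m * ‖v‖) ^ 2 := by ring
    have h4 := Real.sqrt_le_sqrt h3
    rwa [Real.sqrt_sq (norm_nonneg _), Real.sqrt_sq (by positivity)] at h4
  -- span of generating set sits inside span of the q's
  have hdense' : A ⊆ closure ((Submodule.span ℂ (Set.range q) : Submodule ℂ (H →L[ℂ] H)) :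
      Set (H →L[ℂ] H)) := by
    refine hdense.trans (closure_mono ?_)
    refine SetLike.coe_subset_coe.mpr (Submodule.span_le.mpr ?_)
    rintro y ⟨k, a, ha, rfl⟩
    obtain ⟨μ, hμ⟩ := hqmin k a ha
    have h1 : a * q k = μ • q k := by rw [← hcomm (q k) (hqA k) a ha, hμ]
    rw [h1]
    exact Submodule.smul_mem _ μ (Submodule.subset_span ⟨k, rfl⟩)
  have happrox : ∀ x ∈ A, ∀ ε > (0:ℝ), ∃ (F : Finset ℕ) (lam : ℕ → ℂ),
      ‖x - ∑ k ∈ F, lam k • q k‖ < ε := by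
    intro x hx ε hε
    obtain ⟨s, hs, hdist⟩ := Metric.mem_closure_iff.mp (hdense' hx) ε hε
    obtain ⟨co, hco⟩ := Finsupp.mem_span_range_iff_exists_finsupp.mp hs
    refine ⟨co.support, fun k => co k, ?_⟩
    have hsum : (co.sum fun i a => a • q i) = ∑ k ∈ co.support, co k • q k := rfl
    rw [← hsum, hco, ← dist_eq_norm]
    exact hdist
  -- multiplication of q k against a finite combination
  have hqmulsum : ∀ (k : ℕ) (F : Finset ℕ) (lam : ℕ → ℂ),
      q k * (∑ j ∈ F, lam j • q j) = (if k ∈ F then lam k else 0) • q k := by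
    intro k F lam
    rw [Finset.mul_sum]
    by_cases hk : k ∈ F
    · rw [if_pos hk, Finset.sum_eq_single_of_mem k hk
        (fun j hj hne => by rw [mul_smul_comm, hqorth k j (Ne.symm hne), smul_zero]),
        mul_smul_comm, hqidem k]
    · rw [if_neg hk, zero_smul]
      exact Finset.sum_eq_zero fun j hj => by
        rw [mul_smul_comm, hqorth k j (fun h => hk (h ▸ hj)), smul_zero]
  -- coefficient comparison with finite combinations
  have hcdiff : ∀ (k : ℕ) (F : Finset ℕ) (lam : ℕ → ℂ), ∀ x ∈ A,
      ‖(if k ∈ F then lam k else 0) - c k x‖ ≤ ‖(∑ j ∈ F, lam j • q j) - x‖ := by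
    intro k F lam x hx
    have h1 : q k * ((∑ j ∈ F, lam j • q j) - x)
        = ((if k ∈ F then lam k else 0) - c k x) • q k := by
      rw [mul_sub, hqmulsum, hspec k x hx, sub_smul]
    have h2 := norm_mul_le (q k) ((∑ j ∈ F, lam j • q j) - x)
    rwa [h1, norm_smul, hqk1 k, mul_one, one_mul] at h2
  have hcbound : ∀ (k : ℕ), ∀ x ∈ A, ‖c k x‖ ≤ ‖x‖ := by
    intro k x hx
    have h2 := norm_mul_le (q k) x
    rwa [hspec k x hx, norm_smul, hqk1 k, mul_one, one_mul] at h2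
  -- coefficients vanish at infinity
  have hz : ∀ x ∈ A, Filter.Tendsto (fun k => c k x) Filter.atTop (nhds 0) := by
    intro x hx
    rw [NormedAddCommGroup.tendsto_nhds_zero]
    intro ε hε
    obtain ⟨F, lam, hFl⟩ := happrox x hx ε hε
    rw [Filter.eventually_atTop]
    refine ⟨(F.sup id) + 1, fun k hk => ?_⟩
    have hkF : k ∉ F := by
      intro hmem
      have := Finset.le_sup (f := id) hmem
      simp only [id] at this
      omega
    have h1 := hcdiff k F lam x hx
    rw [if_neg hkF, zero_sub, norm_neg, norm_sub_rev] at h1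
    exact lt_of_le_of_lt h1 hFl
  -- the map φ
  set φ : (H →L[ℂ] H) → C₀(ℕ, ℂ) := fun x =>
    if hx : x ∈ A then
      { toFun := fun k => c k x
        continuous_toFun := continuous_of_discreteTopology
        zero_at_infty' := by rw [cocompact_eq_atTop]; exact hz x hx }
    else 0 with hφdef
  have hφ : ∀ x ∈ A, ∀ k, φ x k = c k x := by
    intro x hx k
    simp only [hφdef, dif_pos hx]
    rfl
  -- upper bound: ‖φ x‖ ≤ ‖x‖
  have hup : ∀ x ∈ A, ‖φ x‖ ≤ ‖x‖ := by
    intro x hx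
    rw [← ZeroAtInftyContinuousMap.norm_toBCF_eq_norm]
    refine (BoundedContinuousFunction.norm_le (norm_nonneg x)).mpr fun k => ?_
    have : (φ x).toBCF k = c k x := hφ x hx k
    rw [this]
    exact hcbound k x hx
  have hptle : ∀ x ∈ A, ∀ k, ‖c k x‖ ≤ ‖φ x‖ := by
    intro x hx k
    have h1 : ‖(φ x).toBCF k‖ ≤ ‖(φ x).toBCF‖ :=
      BoundedContinuousFunction.norm_coe_le_norm _ k
    rw [ZeroAtInftyContinuousMap.norm_toBCF_eq_norm] at h1
    have : (φ x).toBCF k = c k x := hφ x hx k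
    rwa [this] at h1
  -- lower bound: ‖x‖ ≤ ‖φ x‖
  have hlow : ∀ x ∈ A, ‖x‖ ≤ ‖φ x‖ := by
    intro x hx
    refine le_of_forall_pos_le_add fun ε hε => ?_
    obtain ⟨F, lam, hFl⟩ := happrox x hx (ε/2) (by linarith)
    set s : H →L[ℂ] H := ∑ k ∈ F, lam k • q k with hs
    have hns : ‖s‖ ≤ ‖φ x‖ + ε/2 := by
      refine hkey F lam _ (by linarith [norm_nonneg (φ x)]) fun k hk => ?_
      have h1 := hcdiff k F lam x hx
      rw [if_pos hk] at h1
      have h2 : ‖lam k‖ ≤ ‖c k x‖ + ‖lam k - c k x‖ := by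
        calc ‖lam k‖ = ‖c k x + (lam k - c k x)‖ := by ring_nf
          _ ≤ ‖c k x‖ + ‖lam k - c k x‖ := norm_add_le _ _
      have h3 : ‖s - x‖ < ε/2 := by rwa [norm_sub_rev]
      calc ‖lam k‖ ≤ ‖c k x‖ + ‖lam k - c k x‖ := h2
        _ ≤ ‖φ x‖ + ε/2 := add_le_add (hptle x hx k) (le_of_lt (lt_of_le_of_lt h1 h3))
    calc ‖x‖ ≤ ‖s‖ + ‖x - s‖ := by
          have : x = s + (x - s) := by abel
          calc ‖x‖ = ‖s + (x - s)‖ := by rw [← this]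
            _ ≤ ‖s‖ + ‖x - s‖ := norm_add_le _ _
      _ ≤ (‖φ x‖ + ε/2) + ε/2 := add_le_add hns hFl.le
      _ = ‖φ x‖ + ε := by ring
  refine ⟨φ, ?_, ?_, ?_, ?_, ?_, ?_, ?_⟩
  · exact fun x hx => le_antisymm (hup x hx) (hlow x hx)
  · -- additive
    intro x hx y hy
    refine ZeroAtInftyContinuousMap.ext fun k => ?_
    have hmem := hadd x hx y hy
    have h1 : c k (x + y) = c k x + c k y := by
      refine hcval k _ _ ?_
      rw [mul_add, hspec k x hx, hspec k y hy, add_smul]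
    calc φ (x + y) k = c k (x + y) := hφ _ hmem k
      _ = c k x + c k y := h1
      _ = φ x k + φ y k := by rw [hφ x hx k, hφ y hy k]
      _ = (φ x + φ y) k := rfl
  · -- scalar multiplication
    intro μ x hx
    refine ZeroAtInftyContinuousMap.ext fun k => ?_
    have hmem := hsmul μ x hx
    have h1 : c k (μ • x) = μ * c k x := by
      refine hcval k _ _ ?_
      rw [mul_smul_comm, hspec k x hx, smul_smul]
    calc φ (μ • x) k = c k (μ • x) := hφ _ hmem k
      _ = μ * c k x := h1
      _ = μ * φ x k := by rw [hφ x hx k]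
      _ = (μ • φ x) k := rfl
  · -- multiplicative
    intro x hx y hy
    refine ZeroAtInftyContinuousMap.ext fun k => ?_
    have hmem := hmul x hx y hy
    have h1 : c k (x * y) = c k x * c k y := by
      refine hcval k _ _ ?_
      rw [← mul_assoc, hspec k x hx, smul_mul_assoc, hspec k y hy, smul_smul]
    calc φ (x * y) k = c k (x * y) := hφ _ hmem k
      _ = c k x * c k y := h1
      _ = φ x k * φ y k := by rw [hφ x hx k, hφ y hy k]
      _ = (φ x * φ y) k := rfl
  · -- injective
    intro x hx y hy hxy
    have hmem : x - y ∈ A := by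
      have h1 : x - y = x + (-1 : ℂ) • y := by rw [neg_one_smul, ← sub_eq_add_neg]
      rw [h1]
      exact hadd x hx _ (hsmul (-1) y hy)
    have hck : ∀ k, c k (x - y) = 0 := by
      intro k
      have hce : c k x = c k y := by
        rw [← hφ x hx k, ← hφ y hy k, hxy]
      refine hcval k _ _ ?_
      rw [mul_sub, hspec k x hx, hspec k y hy, hce, sub_self, zero_smul]
    have hφ0 : φ (x - y) = 0 := by
      refine ZeroAtInftyContinuousMap.ext fun k => ?_
      calc φ (x - y) k = c k (x - y) := hφ _ hmem k
        _ = 0 := hck k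
    have h1 := hlow (x - y) hmem
    rw [hφ0, norm_zero] at h1
    have h2 : x - y = 0 := norm_le_zero_iff.mp h1
    exact sub_eq_zero.mp h2
  · -- surjective
    intro f
    set s : ℕ → (H →L[ℂ] H) := fun n => ∑ k ∈ Finset.range n, f k • q k with hsdef
    have hsA : ∀ n, s n ∈ A := by
      intro n
      induction n with
      | zero => simpa [hsdef] using h0
      | succ n ih =>
        have : s (n + 1) = s n + f n • q n := by
          simp only [hsdef, Finset.sum_range_succ]
        rw [this]
        exact hadd _ ih _ (hsmul (f n) (q n) (hqA n))
    have hftend : ∀ ε > (0:ℝ), ∃ N, ∀ k ≥ N, ‖f k‖ < ε := by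
      intro ε hε
      have h1 : Filter.Tendsto f Filter.atTop (nhds 0) := by
        have := zero_at_infty (f := f)
        rwa [cocompact_eq_atTop] at this
      rw [NormedAddCommGroup.tendsto_nhds_zero] at h1
      exact Filter.eventually_atTop.mp (h1 ε hε)
    have hcauchy : CauchySeq s := by
      rw [Metric.cauchySeq_iff]
      intro ε hε
      obtain ⟨N, hN⟩ := hftend (ε/2) (by linarith)
      have key2 : ∀ n m, N ≤ n → n ≤ m → ‖s m - s n‖ ≤ ε/2 := by
        intro n m hNn hnm
        have h1 : s m - s n = ∑ k ∈ Finset.Ico n m, f k • q k :=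
          (Finset.sum_Ico_eq_sub _ hnm).symm
        rw [h1]
        refine hkey _ _ _ (by linarith) fun k hk => ?_
        have hkN : N ≤ k := le_trans hNn (Finset.mem_Ico.mp hk).1
        exact (hN k hkN).le
      refine ⟨N, fun m hm n hn => ?_⟩
      rw [dist_eq_norm]
      rcases le_total n m with h | h
      · exact lt_of_le_of_lt (key2 n m hn h) (by linarith)
      · rw [norm_sub_rev]
        exact lt_of_le_of_lt (key2 m n hm h) (by linarith)
    obtain ⟨x, hxlim⟩ := cauchySeq_tendsto_of_complete hcauchy
    have hxA : x ∈ A := hclosed.mem_of_tendsto hxlim (Filter.Eventually.of_forall hsA)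
    refine ⟨x, hxA, ?_⟩
    refine ZeroAtInftyContinuousMap.ext fun k => ?_
    have hqx : q k * x = f k • q k := by
      have h1 : Filter.Tendsto (fun n => q k * s n) Filter.atTop (nhds (q k * x)) :=
        hxlim.const_mul (q k)
      have h2 : Filter.Tendsto (fun n => q k * s n) Filter.atTop (nhds (f k • q k)) := by
        refine Filter.Tendsto.congr' ?_ tendsto_const_nhds
        rw [Filter.EventuallyEq, Filter.eventually_atTop]
        refine ⟨k + 1, fun n hn => ?_⟩
        have hkm : k ∈ Finset.range n := Finset.mem_range.mpr (by omega)
        rw [hsdef]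
        simp only
        rw [hqmulsum k (Finset.range n) f, if_pos hkm]
      exact tendsto_nhds_unique h1 h2
    calc φ x k = c k x := hφ x hxA k
      _ = f k := hcval k x (f k) hqx
  · -- values on the projections
    intro k n
    have h1 : c n (q k) = if n = k then 1 else 0 := by
      by_cases h : n = k
      · subst h
        rw [if_pos rfl]
        exact hcval n (q n) 1 (by rw [hqidem n, one_smul])
      · rw [if_neg h]
        exact hcval n (q k) 0 (by rw [hqorth n k h, zero_smul])
    rw [hφ (q k) (hqA k) n, h1]
end

section
/- Let H be a complex Hilbert space and let A be a norm-closed subalgebra of B(H) with the property that for every nonzero self-adjoint projection p ∈ A there exists a nonzero self-adjoint projection q ∈ A with q A q = ℂ q and p q ≠ 0. Then every *-minimal projection in A is algebraically minimal: if p ∈ A is a nonzero self-adjoint projection such that the only self-adjoint projections q ∈ A with p q = q p = q are 0 and p, then p A p = ℂ p. -/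
variable {H : Type*} [NormedAddCommGroup H] [InnerProductSpace ℂ H] [CompleteSpace H]

/-- If every nonzero projection in the operator algebra `A` has nonzero product with some
algebraically minimal projection of `A`, then every `*`-minimal projection of `A` is
algebraically minimal. -/
theorem star_minimal_is_algebraically_minimal
    (A : Set (H →L[ℂ] H)) (hA : IsClosedSubalgebraSet A)
    (hyp : ∀ p ∈ A, IsSelfAdjoint p → p * p = p → p ≠ 0 →
      ∃ q ∈ A, IsSelfAdjoint q ∧ q * q = q ∧ q ≠ 0 ∧
        ({y | ∃ a ∈ A, y = q * a * q} = {y | ∃ c : ℂ, y = c • q}) ∧ p * q ≠ 0) :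
    ∀ p ∈ A, IsSelfAdjoint p → p * p = p → p ≠ 0 →
      (∀ q ∈ A, IsSelfAdjoint q → q * q = q → p * q = q → q * p = q → q = 0 ∨ q = p) →
      {y | ∃ a ∈ A, y = p * a * p} = {y | ∃ c : ℂ, y = c • p} := by
  intro p hpA hpsa hpp hpne hmin
  obtain ⟨hAc, h0, hadd, hsmul, hmul⟩ := hA
  obtain ⟨q, hqA, hqsa, hqq, hqne, hqmin, hpq⟩ := hyp p hpA hpsa hpp hpne
  have h1 : q * p * q ∈ {y | ∃ a ∈ A, y = q * a * q} := ⟨p, hpA, rfl⟩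
  rw [hqmin] at h1
  obtain ⟨lam, hlam⟩ := h1
  have hv : star (p * q) * (p * q) = q * p * q := by
    rw [star_mul, hqsa.star_eq, hpsa.star_eq]
    calc q * p * (p * q) = q * (p * p) * q := by noncomm_ring
      _ = q * p * q := by rw [hpp]
  have hlamne : lam ≠ 0 := by
    intro h
    rw [h, zero_smul] at hlam
    apply hpq
    rw [← CStarRing.star_mul_self_eq_zero_iff (p * q), hv, hlam]
  have hlamreal : star lam = lam := by
    have hsa : star (q * p * q) = q * p * q := by
      simp [star_mul, hqsa.star_eq, hpsa.star_eq, mul_assoc]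
    rw [hlam, star_smul, hqsa.star_eq] at hsa
    have h2 := sub_eq_zero.mpr hsa
    rw [← sub_smul, smul_eq_zero] at h2
    rcases h2 with h | h
    · exact sub_eq_zero.mp h
    · exact absurd h hqne
  have hlaminv : star lam⁻¹ = lam⁻¹ := by rw [star_inv₀, hlamreal]
  have hpqp : p * q * p ≠ 0 := by
    have h3 : p * q * p = (p * q) * star (p * q) := by
      rw [star_mul, hqsa.star_eq, hpsa.star_eq]
      calc p * q * p = p * (q * q) * p := by rw [hqq]
        _ = p * q * (q * p) := by noncomm_ring
    rw [h3]
    exact (CStarRing.mul_star_self_ne_zero_iff (p * q)).mpr hpq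
  set e : H →L[ℂ] H := lam⁻¹ • (p * q * p) with he
  have heA : e ∈ A := hsmul _ _ (hmul _ (hmul _ hpA _ hqA) _ hpA)
  have hesa : IsSelfAdjoint e := by
    rw [he, IsSelfAdjoint, star_smul, star_mul, star_mul, hqsa.star_eq, hpsa.star_eq,
      hlaminv, mul_assoc]
  have hee : e * e = e := by
    have key : (p * q * p) * (p * q * p) = lam • (p * q * p) := by
      calc (p * q * p) * (p * q * p) = p * q * (p * p) * (q * p) := by noncomm_ring
        _ = p * (q * p * q) * p := by rw [hpp]; noncomm_ring
        _ = lam • (p * q * p) := by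
            rw [hlam]; simp only [smul_mul_assoc, mul_smul_comm]
    rw [he, smul_mul_assoc, mul_smul_comm, key, smul_smul, smul_smul,
      mul_assoc, inv_mul_cancel₀ hlamne, mul_one]
  have hpe : p * e = e := by
    rw [he, mul_smul_comm, ← mul_assoc, ← mul_assoc, hpp]
  have hep : e * p = e := by
    rw [he, smul_mul_assoc, mul_assoc, hpp]
  have hene : e ≠ 0 := by
    rw [he, smul_ne_zero_iff]
    exact ⟨inv_ne_zero hlamne, hpqp⟩
  have hep' : e = p := (hmin e heA hesa hee hpe hep).resolve_left hene
  have hpeq : p = lam⁻¹ • (p * q * p) := hep'.symm.trans he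
  have hpqp' : p * q * p = lam • p := by
    calc p * q * p = lam • (lam⁻¹ • (p * q * p)) := by
          rw [smul_smul, mul_inv_cancel₀ hlamne, one_smul]
      _ = lam • p := by rw [← hpeq]
  ext y
  simp only [Set.mem_setOf_eq]
  constructor
  · rintro ⟨a, haA, rfl⟩
    have h2 : q * (p * a * p) * q ∈ {y | ∃ a ∈ A, y = q * a * q} :=
      ⟨p * a * p, hmul _ (hmul _ hpA _ haA) _ hpA, rfl⟩
    rw [hqmin] at h2
    obtain ⟨mu, hmu⟩ := h2
    refine ⟨mu * lam⁻¹, ?_⟩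
    have step : p * a * p = (lam⁻¹ * lam⁻¹) • ((p * q * p) * a * (p * q * p)) := by
      rw [hpqp']
      simp only [smul_mul_assoc, mul_smul_comm, smul_smul]
      rw [show lam⁻¹ * lam⁻¹ * (lam * lam) = 1 by field_simp, one_smul]
    have assoc : (p * q * p) * a * (p * q * p) = p * (q * (p * a * p) * q) * p := by
      noncomm_ring
    rw [step, assoc, hmu]
    simp only [smul_mul_assoc, mul_smul_comm, smul_smul, hpqp']
    congr 1
    field_simp
  · rintro ⟨c, rfl⟩
    refine ⟨c • p, hsmul _ _ hpA, ?_⟩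
    rw [mul_smul_comm, smul_mul_assoc, hpp, hpp]
end

section
/- Let H be a complex Hilbert space and let A be a norm-closed subalgebra of B(H) which is semiprime and has a contractive approximate identity. The following are equivalent: (i) every minimal right ideal of A equals {p a : a ∈ A} for some self-adjoint projection p ∈ A; (ii) for every idempotent e ∈ A with e A e = ℂ e, the orthogonal projection of H onto the range of e belongs to A. -/
open Filter

variable {H : Type*} [NormedAddCommGroup H] [InnerProductSpace ℂ H] [CompleteSpace H]

/-- `J` is a right ideal of the algebra (set) `A` (not necessarily closed). -/
def IsRightIdealOf (A J : Set (H →L[ℂ] H)) : Prop :=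
  J ⊆ A ∧ (0 : H →L[ℂ] H) ∈ J ∧
    (∀ x ∈ J, ∀ y ∈ J, x + y ∈ J) ∧
    (∀ (c : ℂ), ∀ x ∈ J, c • x ∈ J) ∧
    (∀ j ∈ J, ∀ a ∈ A, j * a ∈ J)

/-! ### Auxiliary lemmas -/

lemma aux_idem_absorb_left {e z : H →L[ℂ] H} (he : e * e = e) (h : e * z * e = z) :
    e * z = z := by
  conv_lhs => rw [← h]
  rw [← mul_assoc, ← mul_assoc, he, h]

lemma aux_idem_absorb_right {e z : H →L[ℂ] H} (he : e * e = e) (h : e * z * e = z) :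
    z * e = z := by
  conv_lhs => rw [← h]
  rw [mul_assoc, he, h]

lemma aux_idem_sandwich {e : H →L[ℂ] H} (he : e * e = e) (a : H →L[ℂ] H) :
    e * (e * a * e) * e = e * a * e := by
  rw [show e * (e * a * e) = e * e * a * e by simp only [mul_assoc], he,
    mul_assoc (e * a) e e, he]

lemma aux_idem_smul_sandwich {e : H →L[ℂ] H} (he : e * e = e) (c : ℂ) :
    e * (c • e) * e = c • e := by
  rw [mul_smul_comm, he, smul_mul_assoc, he]

/-- The corner Gelfand–Mazur argument. -/
lemma corner_gelfand_mazur (e x : H →L[ℂ] H) (he : e * e = e) (hne : e ≠ 0)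
    (hx : e * x * e = x)
    (hinv : ∀ c : ℂ, x - c • e ≠ 0 →
      ∃ y, e * y * e = y ∧ (x - c • e) * y = e ∧ y * (x - c • e) = e) :
    ∃ c : ℂ, x = c • e := by
  classical
  set K : Submodule ℂ H := LinearMap.ker ((1 - e : H →L[ℂ] H) : H →ₗ[ℂ] H) with hK
  have memK : ∀ v : H, v ∈ K ↔ e v = v := by
    intro v
    rw [hK, LinearMap.mem_ker]
    rw [ContinuousLinearMap.coe_coe, ContinuousLinearMap.sub_apply, ContinuousLinearMap.one_apply, sub_eq_zero, eq_comm]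
  haveI : CompleteSpace K := (ContinuousLinearMap.isClosed_ker _).completeSpace_coe
  have hmaps : ∀ (z : H →L[ℂ] H), e * z = z → ∀ v : K, z ((K.subtypeL : K →L[ℂ] H) v) ∈ K := by
    intro z hz v
    rw [memK]
    have := congrArg (fun w : H →L[ℂ] H => w ((v : K) : H)) hz
    simpa [ContinuousLinearMap.mul_apply] using this
  let R : (z : H →L[ℂ] H) → e * z = z → (K →L[ℂ] K) := fun z hz =>
    ContinuousLinearMap.codRestrict (z.comp K.subtypeL) K (hmaps z hz)
  have hRapp : ∀ z hz (v : K), ((R z hz v : K) : H) = z (v : H) := by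
    intro z hz v
    rfl
  have heK : ∀ v : K, e ((v : K) : H) = (v : H) := fun v => (memK _).mp v.2
  have hmulR : ∀ z1 h1 z2 h2, z1 * z2 = e → R z1 h1 * R z2 h2 = 1 := by
    intro z1 h1 z2 h2 h12
    ext v
    rw [ContinuousLinearMap.mul_apply, hRapp z1 h1, hRapp z2 h2,
      ← ContinuousLinearMap.mul_apply z1 z2, h12, ContinuousLinearMap.one_apply]
    exact heK v
  have hx1 : e * x = x := aux_idem_absorb_left he hx
  obtain ⟨ξ, hξ⟩ : ∃ ξ, e ξ ≠ 0 := by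
    by_contra h
    push_neg at h
    exact hne (by ext ξ; simp [h ξ])
  have hvK : e ξ ∈ K := (memK _).mpr (by
    have := congrArg (fun w : H →L[ℂ] H => w ξ) he
    simpa [ContinuousLinearMap.mul_apply] using this)
  haveI : Nontrivial (K →L[ℂ] K) := by
    refine ⟨1, 0, fun h => hξ ?_⟩
    have := DFunLike.congr_fun h (⟨e ξ, hvK⟩ : K)
    simpa [Subtype.ext_iff] using this
  obtain ⟨lam, hlam⟩ := spectrum.nonempty (R x hx1)
  refine ⟨lam, ?_⟩
  by_contra hxl
  have hzne : x - lam • e ≠ 0 := fun h => hxl (by rwa [sub_eq_zero] at h)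
  obtain ⟨y, hy, hy1, hy2⟩ := hinv lam hzne
  have hye : e * y = y := aux_idem_absorb_left he hy
  have hz1 : e * (x - lam • e) = x - lam • e := by
    rw [mul_sub, hx1, mul_smul_comm, he]
  have hXsub : R x hx1 - algebraMap ℂ (K →L[ℂ] K) lam = R (x - lam • e) hz1 := by
    ext v
    simp [Algebra.algebraMap_eq_smul_one, ContinuousLinearMap.sub_apply,
      hRapp x hx1 v, hRapp (x - lam • e) hz1 v, heK v]
  have hunit : IsUnit (algebraMap ℂ (K →L[ℂ] K) lam - R x hx1) := by
    have h1 : R (x - lam • e) hz1 * R y hye = 1 := hmulR _ hz1 _ hye hy1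
    have h2 : R y hye * R (x - lam • e) hz1 = 1 := hmulR _ hye _ hz1 hy2
    have hu : IsUnit (R (x - lam • e) hz1) := ⟨⟨_, _, h1, h2⟩, rfl⟩
    simpa [← hXsub, neg_sub] using hu.neg
  exact (spectrum.mem_iff.mp hlam) hunit

def subalgSubmodule (A : Set (H →L[ℂ] H)) (hA : IsClosedSubalgebraSet A) :
    Submodule ℂ (H →L[ℂ] H) where
  carrier := A
  add_mem' := fun hx hy => hA.2.2.1 _ hx _ hy
  zero_mem' := hA.2.1
  smul_mem' := fun c x hx => hA.2.2.2.1 c x hx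

/-- If a set of generators is stable (into the span) under multiplication by `A` on both
sides and all pairwise products vanish, then all generators vanish, by semiprimeness. -/
lemma semiprime_gen (A : Set (H →L[ℂ] H)) (hA : IsClosedSubalgebraSet A)
    (hsemiprime : ∀ J : Set (H →L[ℂ] H), IsClosedIdealOf A J →
      (∀ j ∈ J, ∀ j' ∈ J, j * j' = 0) → J = {0})
    (G : Set (H →L[ℂ] H)) (hGA : G ⊆ A)
    (hGr : ∀ g ∈ G, ∀ a ∈ A, g * a ∈ Submodule.span ℂ G)
    (hGl : ∀ g ∈ G, ∀ a ∈ A, a * g ∈ Submodule.span ℂ G)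
    (hGz : ∀ g ∈ G, ∀ g' ∈ G, g * g' = 0) :
    ∀ g ∈ G, g = 0 := by
  classical
  set M : Submodule ℂ (H →L[ℂ] H) := Submodule.span ℂ G with hM
  have hMA : (M : Set (H →L[ℂ] H)) ⊆ A := by
    have : M ≤ subalgSubmodule A hA := Submodule.span_le.mpr hGA
    exact fun x hx => this hx
  have hMr : ∀ x ∈ M, ∀ a ∈ A, x * a ∈ M := by
    intro x hx a ha
    have h : M ≤ Submodule.comap (LinearMap.mulRight ℂ a) M :=
      Submodule.span_le.mpr (fun g hg => Submodule.mem_comap.mpr (by simpa using hGr g hg a ha))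
    simpa using Submodule.mem_comap.mp (h hx)
  have hMl : ∀ x ∈ M, ∀ a ∈ A, a * x ∈ M := by
    intro x hx a ha
    have h : M ≤ Submodule.comap (LinearMap.mulLeft ℂ a) M :=
      Submodule.span_le.mpr (fun g hg => Submodule.mem_comap.mpr (by simpa using hGl g hg a ha))
    simpa using Submodule.mem_comap.mp (h hx)
  have hMz : ∀ x ∈ M, ∀ y ∈ M, x * y = 0 := by
    have step1 : ∀ g ∈ G, ∀ y ∈ M, g * y = 0 := by
      intro g hg y hy
      have h : M ≤ LinearMap.ker (LinearMap.mulLeft ℂ g) :=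
        Submodule.span_le.mpr (fun g' hg' => by
          simp only [SetLike.mem_coe, LinearMap.mem_ker, LinearMap.mulLeft_apply]
          exact hGz g hg g' hg')
      simpa using h hy
    intro x hx y hy
    have h : M ≤ LinearMap.ker (LinearMap.mulRight ℂ y) :=
      Submodule.span_le.mpr (fun g hg => by
        simp only [SetLike.mem_coe, LinearMap.mem_ker, LinearMap.mulRight_apply]
        exact step1 g hg y hy)
    simpa using h hx
  set S : Set (H →L[ℂ] H) := closure (M : Set (H →L[ℂ] H)) with hS
  have hScoe : S = (M.topologicalClosure : Set (H →L[ℂ] H)) := rfl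
  have hSr : ∀ a ∈ A, ∀ j ∈ S, j * a ∈ S := by
    intro a ha j hj
    have hsub : (M : Set (H →L[ℂ] H)) ⊆ (fun x => x * a) ⁻¹' S :=
      fun x hx => subset_closure (hMr x hx a ha)
    exact closure_minimal hsub
      (IsClosed.preimage (continuous_id.mul continuous_const) isClosed_closure) hj
  have hSl : ∀ a ∈ A, ∀ j ∈ S, a * j ∈ S := by
    intro a ha j hj
    have hsub : (M : Set (H →L[ℂ] H)) ⊆ (fun x => a * x) ⁻¹' S :=
      fun x hx => subset_closure (hMl x hx a ha)
    exact closure_minimal hsub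
      (IsClosed.preimage (continuous_const.mul continuous_id) isClosed_closure) hj
  have hSz : ∀ x ∈ S, ∀ y ∈ S, x * y = 0 := by
    have step : ∀ x ∈ M, ∀ y ∈ S, x * y = 0 := by
      intro x hx y hy
      have hsub : (M : Set (H →L[ℂ] H)) ⊆ (fun y => x * y) ⁻¹' {0} :=
        fun z hz => hMz x hx z hz
      exact closure_minimal hsub
        (IsClosed.preimage (continuous_const.mul continuous_id) isClosed_singleton) hy
    intro x hx y hy
    have hsub : (M : Set (H →L[ℂ] H)) ⊆ (fun x => x * y) ⁻¹' {0} :=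
      fun z hz => step z hz y hy
    exact closure_minimal hsub
      (IsClosed.preimage (continuous_id.mul continuous_const) isClosed_singleton) hx
  have hideal : IsClosedIdealOf A S := by
    refine ⟨?_, ?_, ?_, ?_, ?_, ?_⟩
    · have : S ⊆ closure A := closure_mono hMA
      rwa [hA.1.closure_eq] at this
    · exact isClosed_closure
    · exact subset_closure M.zero_mem
    · intro x hx y hy
      rw [hScoe] at hx hy ⊢
      exact M.topologicalClosure.add_mem hx hy
    · intro c x hx
      rw [hScoe] at hx ⊢
      exact M.topologicalClosure.smul_mem c hx
    · intro j hj a ha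
      exact ⟨hSr a ha j hj, hSl a ha j hj⟩
  have hz : S = {0} := hsemiprime S hideal hSz
  intro g hg
  have : g ∈ S := subset_closure (Submodule.subset_span hg)
  rw [hz] at this
  exact this

lemma leftMul_rightIdeal (A : Set (H →L[ℂ] H)) (hA : IsClosedSubalgebraSet A)
    (x : H →L[ℂ] H) (hx : x ∈ A) :
    IsRightIdealOf A {y | ∃ a ∈ A, y = x * a} := by
  refine ⟨?_, ⟨0, hA.2.1, (mul_zero x).symm⟩, ?_, ?_, ?_⟩
  · rintro y ⟨a, ha, rfl⟩; exact hA.2.2.2.2 _ hx _ ha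
  · rintro u ⟨a, ha, rfl⟩ v ⟨b, hb, rfl⟩
    exact ⟨a + b, hA.2.2.1 _ ha _ hb, (mul_add x a b).symm⟩
  · rintro c u ⟨a, ha, rfl⟩
    exact ⟨c • a, hA.2.2.2.1 c a ha, (mul_smul_comm c x a).symm⟩
  · rintro u ⟨a, ha, rfl⟩ b hb
    exact ⟨a * b, hA.2.2.2.2 _ ha _ hb, (mul_assoc x a b).symm⟩

lemma S1_helpers (A : Set (H →L[ℂ] H)) (hA : IsClosedSubalgebraSet A) :
    (∀ m ∈ insert (1 : H →L[ℂ] H) A, ∀ m' ∈ insert (1 : H →L[ℂ] H) A,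
        m * m' ∈ insert (1 : H →L[ℂ] H) A) ∧
      (∀ m ∈ insert (1 : H →L[ℂ] H) A, ∀ x ∈ A, m * x ∈ A ∧ x * m ∈ A) := by
  constructor
  · intro m hm m' hm'
    rcases Set.mem_insert_iff.mp hm with rfl | hm
    · rcases Set.mem_insert_iff.mp hm' with rfl | hm'
      · simpa using Set.mem_insert _ A
      · rw [one_mul]; exact Set.mem_insert_of_mem _ hm'
    · rcases Set.mem_insert_iff.mp hm' with rfl | hm'
      · rw [mul_one]; exact Set.mem_insert_of_mem _ hm
      · exact Set.mem_insert_of_mem _ (hA.2.2.2.2 _ hm _ hm')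
  · intro m hm x hx
    rcases Set.mem_insert_iff.mp hm with rfl | hm
    · constructor <;> simp [hx]
    · exact ⟨hA.2.2.2.2 _ hm _ hx, hA.2.2.2.2 _ hx _ hm⟩

/-- For a semiprime approximately unital operator algebra `A`: every minimal right ideal of
`A` is of the form `pA` for a self-adjoint projection `p ∈ A` iff every algebraically
minimal idempotent of `A` has its range projection in `A`. -/
theorem minimal_right_ideals_projection_iff_range_projections
    (A : Set (H →L[ℂ] H)) (hA : IsClosedSubalgebraSet A)
    (hsemiprime : ∀ J : Set (H →L[ℂ] H), IsClosedIdealOf A J →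
      (∀ j ∈ J, ∀ j' ∈ J, j * j' = 0) → J = {0})
    (hcai : HasCai A) :
    ((∀ J : Set (H →L[ℂ] H), IsRightIdealOf A J → J ≠ {0} →
        (∀ K : Set (H →L[ℂ] H), IsRightIdealOf A K → K ⊆ J → K = {0} ∨ K = J) →
        ∃ p ∈ A, IsSelfAdjoint p ∧ p * p = p ∧ J = {y | ∃ a ∈ A, y = p * a}) ↔
      (∀ e ∈ A, e * e = e →
        ({y | ∃ a ∈ A, y = e * a * e} = {y | ∃ c : ℂ, y = c • e}) →
        ∃ p ∈ A, IsSelfAdjoint p ∧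
          (∀ ξ : H, p ξ ∈ Set.range e) ∧ (∀ ξ ∈ Set.range e, p ξ = ξ))) := by
  obtain ⟨hS1mul, hS1sand⟩ := S1_helpers A hA
  have h1S1 : (1 : H →L[ℂ] H) ∈ insert (1 : H →L[ℂ] H) A := Set.mem_insert _ _
  have hS1A : A ⊆ insert (1 : H →L[ℂ] H) A := Set.subset_insert _ _
  constructor
  · -- (i) → (ii)
    intro hmin e heA hee hset
    by_cases hez : e = 0
    · subst hez
      refine ⟨0, hA.2.1, by simp [IsSelfAdjoint], fun ξ => ⟨0, by simp⟩, ?_⟩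
      rintro ξ ⟨η, rfl⟩
      simp
    · set J : Set (H →L[ℂ] H) := {y | ∃ a ∈ A, y = e * a} with hJ
      have hJri : IsRightIdealOf A J := leftMul_rightIdeal A hA e heA
      have heJ : e ∈ J := ⟨e, heA, hee.symm⟩
      have hJne : J ≠ {0} := by
        intro h
        rw [h] at heJ
        exact hez heJ
      have hminJ : ∀ K, IsRightIdealOf A K → K ⊆ J → K = {0} ∨ K = J := by
        intro K hK hKJ
        by_cases hK0 : K = {0}
        · exact Or.inl hK0
        refine Or.inr ?_
        obtain ⟨k, hkK, hk0⟩ : ∃ x ∈ K, x ≠ 0 := by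
          by_contra hc
          push_neg at hc
          exact hK0 (Set.eq_singleton_iff_unique_mem.mpr ⟨hK.2.1, fun x hx => hc x hx⟩)
        have hkA : k ∈ A := hK.1 hkK
        obtain ⟨b, hbA, hkb⟩ := hKJ hkK
        have hkey : ∃ a ∈ A, k * a * e ≠ 0 := by
          by_contra hc
          push_neg at hc
          apply hk0
          have hke : k * e = 0 := by
            have h1 := hc e heA
            rwa [mul_assoc, hee] at h1
          have hkk : k * k = 0 := by
            rw [show k * k = k * e * b by rw [mul_assoc, ← hkb], hke, zero_mul]
          have hkak : ∀ a ∈ A, k * a * k = 0 := by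
            intro a ha
            rw [show k * a * k = k * a * e * b by rw [mul_assoc (k * a) e b, ← hkb],
              hc a ha, zero_mul]
          set G : Set (H →L[ℂ] H) :=
            {x | ∃ l ∈ insert (1 : H →L[ℂ] H) A, ∃ r ∈ insert (1 : H →L[ℂ] H) A,
              x = l * k * r} with hG
          have hkG : k ∈ G := ⟨1, h1S1, 1, h1S1, by rw [one_mul, mul_one]⟩
          refine semiprime_gen A hA hsemiprime G ?_ ?_ ?_ ?_ k hkG
          · rintro x ⟨l, hl, r, hr, rfl⟩
            exact (hS1sand r hr _ (hS1sand l hl k hkA).1).2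
          · rintro g ⟨l, hl, r, hr, rfl⟩ a ha
            refine Submodule.subset_span ⟨l, hl, r * a, hS1mul r hr a (hS1A ha), ?_⟩
            rw [mul_assoc]
          · rintro g ⟨l, hl, r, hr, rfl⟩ a ha
            refine Submodule.subset_span ⟨a * l, hS1mul a (hS1A ha) l hl, r, hr, ?_⟩
            simp only [mul_assoc]
          · rintro g ⟨l, hl, r, hr, rfl⟩ g' ⟨l', hl', r', hr', rfl⟩
            have hcross : k * r * (l' * k) = 0 := by
              rcases Set.mem_insert_iff.mp hr with rfl | hr
              · rcases Set.mem_insert_iff.mp hl' with rfl | hl'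
                · rw [mul_one, one_mul, hkk]
                · rw [mul_one, ← mul_assoc]
                  exact hkak l' hl'
              · rcases Set.mem_insert_iff.mp hl' with rfl | hl'
                · rw [one_mul]
                  exact hkak r hr
                · rw [show k * r * (l' * k) = k * (r * l') * k by simp only [mul_assoc]]
                  exact hkak _ (hA.2.2.2.2 _ hr _ hl')
            rw [show l * k * r * (l' * k * r') = l * (k * r * (l' * k)) * r' by
              simp only [mul_assoc], hcross, mul_zero, zero_mul]
        obtain ⟨a, haA, hka⟩ := hkey
        have hmemL : k * a * e ∈ {y | ∃ a ∈ A, y = e * a * e} := by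
          refine ⟨b * a, hA.2.2.2.2 _ hbA _ haA, ?_⟩
          rw [hkb]
          simp only [mul_assoc]
        rw [hset] at hmemL
        obtain ⟨c, hc⟩ := hmemL
        have hc0 : c ≠ 0 := by
          intro h
          rw [h, zero_smul] at hc
          exact hka hc
        have heK : e ∈ K := by
          have key : k * (c⁻¹ • (a * e)) = e := by
            rw [mul_smul_comm, ← mul_assoc, hc, smul_smul, inv_mul_cancel₀ hc0, one_smul]
          rw [← key]
          exact hK.2.2.2.2 k hkK _ (hA.2.2.2.1 c⁻¹ _ (hA.2.2.2.2 _ haA _ heA))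
        apply Set.Subset.antisymm hKJ
        rintro y ⟨a', ha', rfl⟩
        exact hK.2.2.2.2 e heK a' ha'
      obtain ⟨p, hpA, hpsa, hpp, hJp⟩ := hmin J hJri hJne hminJ
      have hpJ : p ∈ J := by
        rw [hJp]
        exact ⟨p, hpA, hpp.symm⟩
      obtain ⟨b', hb', hpb⟩ := hpJ
      have hep : e * p = p := by rw [hpb, ← mul_assoc, hee]
      have hpe : p * e = e := by
        have heJp : e ∈ {y | ∃ a ∈ A, y = p * a} := by rw [← hJp]; exact heJ
        obtain ⟨a', ha', hea⟩ := heJp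
        rw [hea, ← mul_assoc, hpp]
      refine ⟨p, hpA, hpsa, ?_, ?_⟩
      · intro ξ
        refine ⟨p ξ, ?_⟩
        have := congrArg (fun f : H →L[ℂ] H => f ξ) hep
        simpa [ContinuousLinearMap.mul_apply] using this
      · rintro ξ ⟨η, rfl⟩
        have := congrArg (fun f : H →L[ℂ] H => f η) hpe
        simpa [ContinuousLinearMap.mul_apply] using this
  · -- (ii) → (i)
    intro hproj J hJri hJne hminJ
    obtain ⟨ι, l, ei, hlne, heiA, hei1, heilim⟩ := hcai
    haveI := hlne
    have hcaizero : ∀ x ∈ A, (∀ a ∈ A, x * a = 0) → x = 0 := by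
      intro x hx hall
      have h1 : Tendsto (fun i => x * ei i) l (nhds x) := (heilim x hx).2
      have h2 : (fun i => x * ei i) = fun _ => (0 : H →L[ℂ] H) :=
        funext fun i => hall (ei i) (heiA i)
      rw [h2] at h1
      exact tendsto_nhds_unique h1 tendsto_const_nhds
    have hJJ : ¬ (∀ x ∈ J, ∀ y ∈ J, x * y = 0) := by
      intro hsq
      apply hJne
      set G : Set (H →L[ℂ] H) :=
        {x | ∃ m ∈ insert (1 : H →L[ℂ] H) A, ∃ j ∈ J, x = m * j} with hG
      have hallz : ∀ g ∈ G, g = 0 := by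
        refine semiprime_gen A hA hsemiprime G ?_ ?_ ?_ ?_
        · rintro x ⟨m, hm, j, hj, rfl⟩
          exact (hS1sand m hm j (hJri.1 hj)).1
        · rintro g ⟨m, hm, j, hj, rfl⟩ a ha
          exact Submodule.subset_span
            ⟨m, hm, j * a, hJri.2.2.2.2 j hj a ha, by rw [mul_assoc]⟩
        · rintro g ⟨m, hm, j, hj, rfl⟩ a ha
          exact Submodule.subset_span
            ⟨a * m, hS1mul a (hS1A ha) m hm, j, hj, by simp only [mul_assoc]⟩
        · rintro g ⟨m1, hm1, j, hj, rfl⟩ g' ⟨m2, hm2, j', hj', rfl⟩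
          have hjm2 : j * m2 ∈ J := by
            rcases Set.mem_insert_iff.mp hm2 with rfl | hm2
            · simpa using hj
            · exact hJri.2.2.2.2 j hj m2 hm2
          rw [show m1 * j * (m2 * j') = m1 * (j * m2 * j') by simp only [mul_assoc],
            hsq _ hjm2 _ hj', mul_zero]
      refine Set.eq_singleton_iff_unique_mem.mpr ⟨hJri.2.1, fun x hx => ?_⟩
      exact hallz x ⟨1, h1S1, x, hx, (one_mul x).symm⟩
    push_neg at hJJ
    obtain ⟨j, hjJ, j', hj'J, hjj'⟩ := hJJ
    have hj0 : j ≠ 0 := fun h => hjj' (by rw [h, zero_mul])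
    have hjA : j ∈ A := hJri.1 hjJ
    set Jj : Set (H →L[ℂ] H) := {y | ∃ x ∈ J, y = j * x} with hJjdef
    have hJjsub : Jj ⊆ J := by
      rintro y ⟨x, hx, rfl⟩
      exact hJri.2.2.2.2 j hjJ x (hJri.1 hx)
    have hJjri : IsRightIdealOf A Jj := by
      refine ⟨fun y hy => hJri.1 (hJjsub hy), ⟨0, hJri.2.1, (mul_zero j).symm⟩, ?_, ?_, ?_⟩
      · rintro u ⟨a, ha, rfl⟩ v ⟨b, hb, rfl⟩
        exact ⟨a + b, hJri.2.2.1 a ha b hb, (mul_add j a b).symm⟩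
      · rintro c u ⟨a, ha, rfl⟩
        exact ⟨c • a, hJri.2.2.2.1 c a ha, (mul_smul_comm c j a).symm⟩
      · rintro u ⟨a, ha, rfl⟩ b hb
        exact ⟨a * b, hJri.2.2.2.2 a ha b hb, (mul_assoc j a b).symm⟩
    have hJjJ : Jj = J := by
      refine (hminJ Jj hJjri hJjsub).resolve_left ?_
      intro h
      apply hjj'
      have hmem : j * j' ∈ Jj := ⟨j', hj'J, rfl⟩
      rw [h] at hmem
      exact hmem
    obtain ⟨e, heJ, hje⟩ : ∃ x ∈ J, j = j * x := by
      have : j ∈ Jj := by rw [hJjJ]; exact hjJ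
      exact this
    have hjematch : j * e = j := hje.symm
    have heA : e ∈ A := hJri.1 heJ
    set K0 : Set (H →L[ℂ] H) := {x | x ∈ J ∧ j * x = 0} with hK0def
    have hK0ri : IsRightIdealOf A K0 := by
      refine ⟨fun x hx => hJri.1 hx.1, ⟨hJri.2.1, mul_zero j⟩, ?_, ?_, ?_⟩
      · rintro x ⟨hxJ, hxz⟩ y ⟨hyJ, hyz⟩
        exact ⟨hJri.2.2.1 x hxJ y hyJ, by rw [mul_add, hxz, hyz, add_zero]⟩
      · rintro c x ⟨hxJ, hxz⟩
        exact ⟨hJri.2.2.2.1 c x hxJ, by rw [mul_smul_comm, hxz, smul_zero]⟩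
      · rintro x ⟨hxJ, hxz⟩ a ha
        exact ⟨hJri.2.2.2.2 x hxJ a ha, by rw [← mul_assoc, hxz, zero_mul]⟩
    have hK0z : K0 = {0} := by
      refine (hminJ K0 hK0ri (fun x hx => hx.1)).resolve_right ?_
      intro h
      have heK0 : e ∈ K0 := by rw [h]; exact heJ
      exact hj0 (by rw [← hjematch, heK0.2])
    have hee : e * e = e := by
      have hmem : e * e - e ∈ K0 := by
        constructor
        · have h1 : e * e ∈ J := hJri.2.2.2.2 e heJ e heA
          have h2 : (-1 : ℂ) • e ∈ J := hJri.2.2.2.1 (-1) e heJ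
          have h3 := hJri.2.2.1 _ h1 _ h2
          simpa [sub_eq_add_neg] using h3
        · rw [mul_sub, ← mul_assoc, hjematch, hjematch, sub_self]
      rw [hK0z] at hmem
      have h4 : e * e - e = 0 := hmem
      rwa [sub_eq_zero] at h4
    have hez : e ≠ 0 := by
      intro h
      rw [h, mul_zero] at hjematch
      exact hj0 hjematch.symm
    set Je : Set (H →L[ℂ] H) := {y | ∃ a ∈ A, y = e * a} with hJedef
    have hJeri : IsRightIdealOf A Je := leftMul_rightIdeal A hA e heA
    have hJesub : Je ⊆ J := by
      rintro y ⟨a, ha, rfl⟩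
      exact hJri.2.2.2.2 e heJ a ha
    have heJe : e ∈ Je := ⟨e, heA, hee.symm⟩
    have hJeJ : Je = J := by
      refine (hminJ Je hJeri hJesub).resolve_left ?_
      intro h
      rw [h] at heJe
      exact hez heJe
    have hrinv : ∀ x, x ∈ A → e * x * e = x → x ≠ 0 →
        ∃ y, (y ∈ A ∧ e * y * e = y) ∧ x * y = e := by
      intro x hxA hxe hx0
      have hxe2 : x * e = x := aux_idem_absorb_right hee hxe
      have hex : e * x = x := aux_idem_absorb_left hee hxe
      set Jx : Set (H →L[ℂ] H) := {y | ∃ a ∈ A, y = x * a} with hJxdef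
      have hJxri : IsRightIdealOf A Jx := leftMul_rightIdeal A hA x hxA
      have hxJ : x ∈ J := by
        rw [← hJeJ]
        refine ⟨x * e, hA.2.2.2.2 _ hxA _ heA, ?_⟩
        rw [← mul_assoc]
        exact hxe.symm
      have hJxsub : Jx ⊆ J := by
        rintro y ⟨a, ha, rfl⟩
        exact hJri.2.2.2.2 x hxJ a ha
      have hJxJ : Jx = J := by
        refine (hminJ Jx hJxri hJxsub).resolve_left ?_
        intro h
        apply hx0
        apply hcaizero x hxA
        intro a ha
        have hmem : x * a ∈ Jx := ⟨a, ha, rfl⟩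
        rw [h] at hmem
        exact hmem
      obtain ⟨a, haA, hea⟩ : e ∈ Jx := by rw [hJxJ]; exact heJ
      refine ⟨e * a * e, ⟨hA.2.2.2.2 _ (hA.2.2.2.2 _ heA _ haA) _ heA,
        aux_idem_sandwich hee a⟩, ?_⟩
      rw [show x * (e * a * e) = x * e * a * e by simp only [mul_assoc], hxe2, ← hea, hee]
    have hinv2 : ∀ x, x ∈ A → e * x * e = x → x ≠ 0 →
        ∃ y, (y ∈ A ∧ e * y * e = y) ∧ x * y = e ∧ y * x = e := by
      intro x hxA hxe hx0
      obtain ⟨y, ⟨hyA, hye⟩, hxy⟩ := hrinv x hxA hxe hx0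
      have hy0 : y ≠ 0 := by
        intro h
        rw [h, mul_zero] at hxy
        exact hez hxy.symm
      obtain ⟨w, ⟨hwA, hwe⟩, hyw⟩ := hrinv y hyA hye hy0
      have hxw : x = w := by
        have hxe2 : x * e = x := aux_idem_absorb_right hee hxe
        have hew : e * w = w := aux_idem_absorb_left hee hwe
        calc x = x * e := hxe2.symm
          _ = x * (y * w) := by rw [hyw]
          _ = x * y * w := (mul_assoc x y w).symm
          _ = e * w := by rw [hxy]
          _ = w := hew
      exact ⟨y, ⟨hyA, hye⟩, hxy, by rw [hxw]; exact hyw⟩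
    have hset : {y | ∃ a ∈ A, y = e * a * e} = {y | ∃ c : ℂ, y = c • e} := by
      ext x
      constructor
      · rintro ⟨a, ha, rfl⟩
        have hxA : e * a * e ∈ A := hA.2.2.2.2 _ (hA.2.2.2.2 _ heA _ ha) _ heA
        have hxe : e * (e * a * e) * e = e * a * e := aux_idem_sandwich hee a
        refine corner_gelfand_mazur e (e * a * e) hee hez hxe ?_
        intro c hcne
        have hzA : e * a * e - c • e ∈ A := by
          have h1 : (-c) • e ∈ A := hA.2.2.2.1 _ _ heA
          have h2 := hA.2.2.1 _ hxA _ h1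
          simpa [sub_eq_add_neg, neg_smul] using h2
        have hze : e * (e * a * e - c • e) * e = e * a * e - c • e := by
          rw [mul_sub, sub_mul, hxe, aux_idem_smul_sandwich hee c]
        have hcne' : e * a * e - c • e ≠ 0 := hcne
        obtain ⟨y, ⟨hyA, hye⟩, h1, h2⟩ := hinv2 (e * a * e - c • e) hzA hze hcne'
        exact ⟨y, hye, h1, h2⟩
      · rintro ⟨c, rfl⟩
        exact ⟨c • e, hA.2.2.2.1 c e heA, (aux_idem_smul_sandwich hee c).symm⟩
    obtain ⟨p, hpA, hpsa, hrange, hfix⟩ := hproj e heA hee hset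
    have hpe_op : p * e = e := by
      ext ξ
      rw [ContinuousLinearMap.mul_apply]
      exact hfix (e ξ) ⟨ξ, rfl⟩
    have hep_op : e * p = p := by
      ext ξ
      rw [ContinuousLinearMap.mul_apply]
      obtain ⟨η, hη⟩ := hrange ξ
      rw [← hη]
      have h5 := congrArg (fun f : H →L[ℂ] H => f η) hee
      simpa [ContinuousLinearMap.mul_apply] using h5
    refine ⟨p, hpA, hpsa, ?_, ?_⟩
    · ext ξ
      rw [ContinuousLinearMap.mul_apply]
      exact hfix (p ξ) (hrange ξ)
    · rw [← hJeJ]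
      ext y
      constructor
      · rintro ⟨a, ha, rfl⟩
        refine ⟨e * a, hA.2.2.2.2 _ heA _ ha, ?_⟩
        rw [← mul_assoc, hpe_op]
      · rintro ⟨a, ha, rfl⟩
        exact ⟨p * a, hA.2.2.2.2 _ hpA _ ha, by rw [← mul_assoc, hep_op]⟩
end

section
/- Let A be a unital complex Banach algebra with ‖1‖ = 1 and let x ∈ A with ‖x‖ ≤ 1. For n ≥ 1 set e_n = 1 − (1/n) Σ_{k=1}^n x^k. Then each e_n belongs to {(1−x)a : a ∈ A}, ‖e_n‖ ≤ 2 for all n, and e_n y → y in norm for every y in the norm closure of {(1−x)a : a ∈ A}. In particular, the norm closure of (1−x)A possesses a left bounded approximate identity. -/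
open Filter

/-- For `x` of norm at most one in a unital complex Banach algebra, the Cesàro-type means
`e_n = 1 - (1/n) Σ_{k=1}^n x^k` lie in `(1-x)A`, are bounded by `2`, and form a left
bounded approximate identity for the norm closure of `(1-x)A`. -/
theorem cesaro_means_left_bai
    {A : Type*} [NormedRing A] [NormedAlgebra ℂ A] [CompleteSpace A] [NormOneClass A]
    (x : A) (hx : ‖x‖ ≤ 1)
    (e : ℕ → A)
    (he : ∀ n : ℕ, e n = 1 - ((n : ℂ))⁻¹ • ∑ k ∈ Finset.Icc 1 n, x ^ k) :
    (∀ n : ℕ, 1 ≤ n → ∃ a : A, e n = (1 - x) * a) ∧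
    (∀ n : ℕ, 1 ≤ n → ‖e n‖ ≤ 2) ∧
    (∀ y ∈ closure {z : A | ∃ a : A, z = (1 - x) * a},
      Tendsto (fun n => e n * y) atTop (nhds y)) := by
  -- key algebraic identity `(1 - x) * ∑_{j<k} x^j = 1 - x^k`
  have hgeom : ∀ k : ℕ, (1 - x) * ∑ j ∈ Finset.range k, x ^ j = 1 - x ^ k := by
    intro k
    calc (1 - x) * ∑ j ∈ Finset.range k, x ^ j
        = -(x - 1) * ∑ j ∈ Finset.range k, x ^ j := by rw [neg_sub]
      _ = -((x - 1) * ∑ j ∈ Finset.range k, x ^ j) := by rw [neg_mul]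
      _ = -(x ^ k - 1) := by rw [mul_geom_sum]
      _ = 1 - x ^ k := neg_sub _ _
  -- membership
  have hmem : ∀ n : ℕ, 1 ≤ n → ∃ a : A, e n = (1 - x) * a := by
    intro n hn
    refine ⟨(n : ℂ)⁻¹ • ∑ k ∈ Finset.Icc 1 n, ∑ j ∈ Finset.range k, x ^ j, ?_⟩
    have hne : (n : ℂ) ≠ 0 := Nat.cast_ne_zero.mpr (by omega)
    rw [he, mul_smul_comm, Finset.mul_sum]
    simp_rw [hgeom]
    rw [Finset.sum_sub_distrib, Finset.sum_const, Nat.card_Icc, smul_sub]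
    congr 1
    have hn1 : n + 1 - 1 = n := by omega
    rw [hn1, ← Nat.cast_smul_eq_nsmul ℂ, smul_smul, inv_mul_cancel₀ hne, one_smul]
  -- norm bound
  have hbound : ∀ n : ℕ, 1 ≤ n → ‖e n‖ ≤ 2 := by
    intro n hn
    have hne : (n : ℝ) ≠ 0 := Nat.cast_ne_zero.mpr (by omega)
    rw [he]
    have h1 : ‖∑ k ∈ Finset.Icc 1 n, x ^ k‖ ≤ (n : ℝ) := by
      calc ‖∑ k ∈ Finset.Icc 1 n, x ^ k‖ ≤ ∑ k ∈ Finset.Icc 1 n, ‖x ^ k‖ :=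
            norm_sum_le _ _
        _ ≤ ∑ _k ∈ Finset.Icc 1 n, (1 : ℝ) := by
            refine Finset.sum_le_sum fun k hk => ?_
            calc ‖x ^ k‖ ≤ ‖x‖ ^ k := norm_pow_le' x (by
                  rcases Finset.mem_Icc.mp hk with ⟨h, _⟩; omega)
              _ ≤ 1 := pow_le_one₀ (norm_nonneg x) hx
        _ = (n : ℝ) := by simp [Nat.card_Icc]
    calc ‖1 - (n : ℂ)⁻¹ • ∑ k ∈ Finset.Icc 1 n, x ^ k‖
        ≤ ‖(1 : A)‖ + ‖(n : ℂ)⁻¹ • ∑ k ∈ Finset.Icc 1 n, x ^ k‖ := norm_sub_le _ _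
      _ = 1 + (n : ℝ)⁻¹ * ‖∑ k ∈ Finset.Icc 1 n, x ^ k‖ := by
          rw [norm_one, norm_smul]; norm_num
      _ ≤ 1 + (n : ℝ)⁻¹ * (n : ℝ) := by
          have h2 : (0:ℝ) ≤ (n : ℝ)⁻¹ := by positivity
          nlinarith
      _ = 2 := by rw [inv_mul_cancel₀ hne]; norm_num
  -- telescoping
  have htele : ∀ n : ℕ, 1 ≤ n →
      (∑ k ∈ Finset.Icc 1 n, x ^ k) * (1 - x) = x - x ^ (n + 1) := by
    intro n hn
    induction n with
    | zero => omega
    | succ m ih =>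
      rcases Nat.eq_zero_or_pos m with hm | hm
      · subst hm
        simp [Finset.Icc_self, mul_sub, pow_succ]
      · rw [Finset.sum_Icc_succ_top (by omega), add_mul, ih hm, mul_sub, mul_one,
          ← pow_succ]
        abel
  -- convergence on the ideal itself
  have hJ : ∀ a : A, Tendsto (fun n => e n * ((1 - x) * a)) atTop (nhds ((1 - x) * a)) := by
    intro a
    rw [tendsto_iff_norm_sub_tendsto_zero]
    apply squeeze_zero' (Eventually.of_forall fun n => norm_nonneg _)
      (g := fun n : ℕ => 2 * ‖a‖ / n)
    · filter_upwards [eventually_ge_atTop 1] with n hn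
      have key : e n * ((1 - x) * a) - (1 - x) * a
          = -((n : ℂ)⁻¹ • ((x - x ^ (n + 1)) * a)) := by
        rw [he n, sub_mul, one_mul, sub_sub_cancel_left, smul_mul_assoc, ← mul_assoc,
          htele n hn]
      have hxn : ‖x - x ^ (n + 1)‖ ≤ 2 := by
        have h3 : ‖x ^ (n + 1)‖ ≤ 1 :=
          (norm_pow_le' x (by omega)).trans (pow_le_one₀ (norm_nonneg x) hx)
        calc ‖x - x ^ (n + 1)‖ ≤ ‖x‖ + ‖x ^ (n + 1)‖ := norm_sub_le _ _
          _ ≤ 2 := by linarith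
      have h4 : ‖(x - x ^ (n + 1)) * a‖ ≤ 2 * ‖a‖ :=
        (norm_mul_le _ _).trans (mul_le_mul_of_nonneg_right hxn (norm_nonneg a))
      rw [key, norm_neg, norm_smul]
      have h5 : ‖((n : ℂ))⁻¹‖ = (n : ℝ)⁻¹ := by simp
      rw [h5, div_eq_inv_mul]
      exact mul_le_mul_of_nonneg_left h4 (by positivity)
    · exact tendsto_const_div_atTop_nhds_zero_nat _
  refine ⟨hmem, hbound, ?_⟩
  intro y hy
  rw [Metric.tendsto_nhds]
  intro ε hε
  obtain ⟨z, hzJ, hdz⟩ := Metric.mem_closure_iff.mp hy (ε / 4) (by positivity)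
  obtain ⟨a, rfl⟩ := hzJ
  have h1 := (Metric.tendsto_nhds.mp (hJ a)) (ε / 4) (by positivity)
  filter_upwards [h1, eventually_ge_atTop 1] with n hn1 hn2
  rw [dist_eq_norm]
  have hsplit : e n * y - y
      = e n * (y - (1 - x) * a) + (e n * ((1 - x) * a) - (1 - x) * a)
        + ((1 - x) * a - y) := by
    rw [mul_sub]; abel
  have hd1 : ‖y - (1 - x) * a‖ < ε / 4 := by rwa [← dist_eq_norm]
  have hd2 : ‖e n * ((1 - x) * a) - (1 - x) * a‖ < ε / 4 := by rwa [← dist_eq_norm]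
  have hd3 : ‖(1 - x) * a - y‖ < ε / 4 := by rwa [← dist_eq_norm, dist_comm]
  have hb1 : ‖e n * (y - (1 - x) * a)‖ ≤ 2 * ‖y - (1 - x) * a‖ :=
    (norm_mul_le _ _).trans (mul_le_mul_of_nonneg_right (hbound n hn2) (norm_nonneg _))
  calc ‖e n * y - y‖
      ≤ ‖e n * (y - (1 - x) * a)‖ + ‖e n * ((1 - x) * a) - (1 - x) * a‖
        + ‖(1 - x) * a - y‖ := by rw [hsplit]; exact norm_add₃_le
    _ < ε := by linarith
end
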